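/- arXiv:1205.4340 — 5 statements merged into one kernel-verified Lean document; each statement's English description precedes it below -/
import Mathlib

section
/- For all n ≥ 1, the overpartition function satisfies p̄(n) ≤ 2·p̄(n-1). -/
/-- number of (unrestricted) partitions of `n` -/
def partitionCount (n : ℕ) : ℕ := Fintype.card (Nat.Partition n)

/-- the overpartition function: an overpartition is equivalent to a pair consisting of a
partition into distinct parts (the overlined parts) and an arbitrary partition. -/
def overpartitionCount (n : ℕ) : ℕ :=
  ∑ x ∈ Finset.HasAntidiagonal.antidiagonal n,
    (Nat.Partition.distincts x.1).card * partitionCount x.2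

/-- the overpartition function extended by `0` on negative integers -/
def pbar (m : ℤ) : ℤ := if 0 ≤ m then overpartitionCount m.toNat else 0

noncomputable def mmin (m : Multiset ℕ) : ℕ :=
  if h : m.toFinset.Nonempty then m.toFinset.min' h else 0

lemma mmin_mem {m : Multiset ℕ} (h : m ≠ 0) : mmin m ∈ m := by
  have hne : m.toFinset.Nonempty := by
    rw [Finset.nonempty_iff_ne_empty]
    simpa [Ne, Multiset.toFinset_eq_empty] using h
  rw [mmin, dif_pos hne, ← Multiset.mem_toFinset]
  exact Finset.min'_mem _ _

lemma mmin_le {m : Multiset ℕ} {a : ℕ} (h : a ∈ m) : mmin m ≤ a := by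
  have hne : m.toFinset.Nonempty := ⟨a, Multiset.mem_toFinset.2 h⟩
  rw [mmin, dif_pos hne]
  exact Finset.min'_le _ _ (Multiset.mem_toFinset.2 h)

def IsOver (n : ℕ) (x : Multiset ℕ × Multiset ℕ) : Prop :=
  x.1.Nodup ∧ (∀ i ∈ x.1, 0 < i) ∧ (∀ i ∈ x.2, 0 < i) ∧ x.1.sum + x.2.sum = n

noncomputable def G (x : Multiset ℕ × Multiset ℕ) : Bool × (Multiset ℕ × Multiset ℕ) :=
  if 1 ∈ x.2 then (true, (x.1, x.2.erase 1))
  else if 1 ∈ x.1 then (false, (x.1.erase 1, x.2))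
  else if mmin (x.1 + x.2) ∈ x.2 then
    (false, (x.1, x.2.erase (mmin (x.1 + x.2)) + Multiset.replicate (mmin (x.1 + x.2) - 1) 1))
  else
    (false, (1 ::ₘ x.1.erase (mmin (x.1 + x.2)), x.2 + Multiset.replicate (mmin (x.1 + x.2) - 2) 1))

lemma s_facts {n : ℕ} {μ ν : Multiset ℕ} (hx : IsOver n (μ, ν)) (hn : 1 ≤ n)
    (h1 : 1 ∉ μ) (h2 : 1 ∉ ν) : mmin (μ + ν) ∈ μ + ν ∧ 2 ≤ mmin (μ + ν) := by
  obtain ⟨-, hμ, hν, hsum⟩ := hx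
  have hne : μ + ν ≠ 0 := by
    intro h
    have h' : μ = 0 ∧ ν = 0 := by simpa using h
    simp only at hsum hμ hν
    rw [h'.1, h'.2] at hsum
    simp at hsum
    omega
  have hmem := mmin_mem hne
  refine ⟨hmem, ?_⟩
  rw [Multiset.mem_add] at hmem
  rcases hmem with h | h
  · have := hμ _ h
    have : mmin (μ + ν) ≠ 1 := fun he => h1 (he ▸ h)
    omega
  · have := hν _ h
    have : mmin (μ + ν) ≠ 1 := fun he => h2 (he ▸ h)
    omega

lemma sum_erase_of_mem {a : ℕ} {m : Multiset ℕ} (h : a ∈ m) :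
    a + (m.erase a).sum = m.sum := by
  conv_rhs => rw [← Multiset.cons_erase h]
  rw [Multiset.sum_cons]

lemma isOver_G {n : ℕ} {x : Multiset ℕ × Multiset ℕ} (hx : IsOver n x) (hn : 1 ≤ n) :
    IsOver (n - 1) (G x).2 := by
  obtain ⟨μ, ν⟩ := x
  obtain ⟨hnd, hμ, hν, hsum⟩ := hx
  simp only at hnd hμ hν hsum
  by_cases h2 : 1 ∈ ν
  · have hs := sum_erase_of_mem h2
    refine ⟨?_, ?_, ?_, ?_⟩ <;> simp only [G, h2, if_pos, if_true]
    · exact hnd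
    · exact hμ
    · exact fun i hi => hν i (Multiset.mem_of_mem_erase hi)
    · omega
  · by_cases h1 : 1 ∈ μ
    · have hs := sum_erase_of_mem h1
      refine ⟨?_, ?_, ?_, ?_⟩ <;> simp only [G, h2, h1, if_neg, if_pos, if_false, if_true]
      · exact hnd.erase 1
      · exact fun i hi => hμ i (Multiset.mem_of_mem_erase hi)
      · exact hν
      · omega
    · obtain ⟨hmem, hs2⟩ := s_facts ⟨hnd, hμ, hν, hsum⟩ hn h1 h2
      set s := mmin (μ + ν) with hsdef
      by_cases h3 : s ∈ ν
      · have hsle : s ≤ ν.sum := Multiset.single_le_sum (fun x _ => Nat.zero_le x) _ h3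
        have hs := sum_erase_of_mem h3
        refine ⟨?_, ?_, ?_, ?_⟩ <;>
          simp only [G, h2, h1, ← hsdef, h3, if_neg, if_pos, if_false, if_true, not_false_iff]
        · exact hnd
        · exact hμ
        · intro i hi
          rcases Multiset.mem_add.1 hi with h | h
          · exact hν i (Multiset.mem_of_mem_erase h)
          · rw [Multiset.eq_of_mem_replicate h]; norm_num
        · simp only [Multiset.sum_add, Multiset.sum_replicate, smul_eq_mul, mul_one]
          omega
      · have h4 : s ∈ μ := by
          rcases Multiset.mem_add.1 hmem with h | h
          · exact h
          · exact absurd h h3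
        have hsle : s ≤ μ.sum := Multiset.single_le_sum (fun x _ => Nat.zero_le x) _ h4
        have hs := sum_erase_of_mem h4
        refine ⟨?_, ?_, ?_, ?_⟩ <;>
          simp only [G, h2, h1, ← hsdef, h3, if_neg, if_pos, if_false, if_true, not_false_iff]
        · exact Multiset.Nodup.cons (fun hc => h1 (Multiset.mem_of_mem_erase hc)) (hnd.erase s)
        · intro i hi
          rcases Multiset.mem_cons.1 hi with h | h
          · omega
          · exact hμ i (Multiset.mem_of_mem_erase h)
        · intro i hi
          rcases Multiset.mem_add.1 hi with h | h
          · exact hν i h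
          · rw [Multiset.eq_of_mem_replicate h]; norm_num
        · simp only [Multiset.sum_cons, Multiset.sum_add, Multiset.sum_replicate, smul_eq_mul,
            mul_one]
          omega

lemma G_inj {n : ℕ} {x y : Multiset ℕ × Multiset ℕ} (hx : IsOver n x) (hy : IsOver n y)
    (hn : 1 ≤ n) (h : G x = G y) : x = y := by
  obtain ⟨μ, ν⟩ := x
  obtain ⟨μ', ν'⟩ := y
  obtain ⟨hnd, hμ, hν, hsum⟩ := hx
  obtain ⟨hnd', hμ', hν', hsum'⟩ := hy
  simp only at hnd hμ hν hsum hnd' hμ' hν' hsum'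
  simp only [Prod.mk.injEq]
  by_cases a2 : 1 ∈ ν <;> by_cases b2 : 1 ∈ ν'
  · -- C1 / C1
    simp only [G, a2, b2, if_true, Prod.mk.injEq, true_and] at h
    refine ⟨h.1, ?_⟩
    rw [← Multiset.cons_erase a2, ← Multiset.cons_erase b2, h.2]
  · -- C1 vs not: bool mismatch
    exfalso
    by_cases b1 : 1 ∈ μ'
    · simp [G, a2, b2, b1] at h
    · by_cases b3 : mmin (μ' + ν') ∈ ν' <;> simp [G, a2, b2, b1, b3] at h
  · exfalso
    by_cases a1 : 1 ∈ μ
    · simp [G, a2, b2, a1] at h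
    · by_cases a3 : mmin (μ + ν) ∈ ν <;> simp [G, a2, b2, a1, a3] at h
  · by_cases a1 : 1 ∈ μ <;> by_cases b1 : 1 ∈ μ'
    · -- C2 / C2
      simp only [G, a2, b2, a1, b1, if_true, if_false, Prod.mk.injEq, true_and] at h
      refine ⟨?_, h.2⟩
      rw [← Multiset.cons_erase a1, ← Multiset.cons_erase b1, h.1]
    · -- C2 / (C3 or C4)
      exfalso
      obtain ⟨hmem', hs2'⟩ := s_facts ⟨hnd', hμ', hν', hsum'⟩ hn b1 b2
      by_cases b3 : mmin (μ' + ν') ∈ ν'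
      · simp only [G, a2, b2, a1, b1, b3, if_true, if_false, Prod.mk.injEq, true_and] at h
        have h1 : (1:ℕ) ∈ ν'.erase (mmin (μ' + ν')) + Multiset.replicate (mmin (μ' + ν') - 1) 1 := by
          rw [Multiset.mem_add, Multiset.mem_replicate]
          exact Or.inr ⟨by omega, rfl⟩
        rw [← h.2] at h1
        exact a2 h1
      · simp only [G, a2, b2, a1, b1, b3, if_true, if_false, Prod.mk.injEq, true_and] at h
        have h1 : (1:ℕ) ∈ 1 ::ₘ μ'.erase (mmin (μ' + ν')) := Multiset.mem_cons_self _ _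
        rw [← h.1] at h1
        exact hnd.notMem_erase h1
    · -- (C3 or C4) / C2
      exfalso
      obtain ⟨hmem, hs2⟩ := s_facts ⟨hnd, hμ, hν, hsum⟩ hn a1 a2
      by_cases a3 : mmin (μ + ν) ∈ ν
      · simp only [G, a2, b2, a1, b1, a3, if_true, if_false, Prod.mk.injEq, true_and] at h
        have h1 : (1:ℕ) ∈ ν.erase (mmin (μ + ν)) + Multiset.replicate (mmin (μ + ν) - 1) 1 := by
          rw [Multiset.mem_add, Multiset.mem_replicate]
          exact Or.inr ⟨by omega, rfl⟩
        rw [h.2] at h1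
        exact b2 h1
      · simp only [G, a2, b2, a1, b1, a3, if_true, if_false, Prod.mk.injEq, true_and] at h
        have h1 : (1:ℕ) ∈ 1 ::ₘ μ.erase (mmin (μ + ν)) := Multiset.mem_cons_self _ _
        rw [h.1] at h1
        exact hnd'.notMem_erase h1
    · -- C3/C4 for both
      obtain ⟨hmem, hs2⟩ := s_facts ⟨hnd, hμ, hν, hsum⟩ hn a1 a2
      obtain ⟨hmem', hs2'⟩ := s_facts ⟨hnd', hμ', hν', hsum'⟩ hn b1 b2
      by_cases a3 : mmin (μ + ν) ∈ ν <;> by_cases b3 : mmin (μ' + ν') ∈ ν'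
      · -- C3 / C3
        simp only [G, a2, b2, a1, b1, a3, b3, if_true, if_false, Prod.mk.injEq, true_and] at h
        obtain ⟨hfst, hsnd⟩ := h
        have hc := congrArg (Multiset.count 1) hsnd
        have e1 : (1:ℕ) ∉ ν.erase (mmin (μ + ν)) := fun hh => a2 (Multiset.mem_of_mem_erase hh)
        have e2 : (1:ℕ) ∉ ν'.erase (mmin (μ' + ν')) := fun hh => b2 (Multiset.mem_of_mem_erase hh)
        rw [Multiset.count_add, Multiset.count_add, Multiset.count_replicate,
          Multiset.count_replicate, Multiset.count_eq_zero.2 e1, Multiset.count_eq_zero.2 e2] at hc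
        simp only [if_true, zero_add, reduceIte] at hc
        have hss : mmin (μ + ν) = mmin (μ' + ν') := by omega
        refine ⟨hfst, ?_⟩
        rw [hss] at hsnd a3
        have h5 : ν.erase (mmin (μ' + ν')) = ν'.erase (mmin (μ' + ν')) := add_right_cancel hsnd
        calc ν = mmin (μ' + ν') ::ₘ ν.erase (mmin (μ' + ν')) := (Multiset.cons_erase a3).symm
          _ = mmin (μ' + ν') ::ₘ ν'.erase (mmin (μ' + ν')) := by rw [h5]
          _ = ν' := Multiset.cons_erase b3
      · -- C3 / C4 mismatch
        exfalso
        simp only [G, a2, b2, a1, b1, a3, b3, if_true, if_false, Prod.mk.injEq, true_and] at h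
        have h1 : (1:ℕ) ∈ 1 ::ₘ μ'.erase (mmin (μ' + ν')) := Multiset.mem_cons_self _ _
        rw [← h.1] at h1
        exact a1 h1
      · -- C4 / C3 mismatch
        exfalso
        simp only [G, a2, b2, a1, b1, a3, b3, if_true, if_false, Prod.mk.injEq, true_and] at h
        have h1 : (1:ℕ) ∈ 1 ::ₘ μ.erase (mmin (μ + ν)) := Multiset.mem_cons_self _ _
        rw [h.1] at h1
        exact b1 h1
      · -- C4 / C4
        simp only [G, a2, b2, a1, b1, a3, b3, if_true, if_false, Prod.mk.injEq, true_and] at h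
        obtain ⟨hfst, hsnd⟩ := h
        have hc := congrArg (Multiset.count 1) hsnd
        rw [Multiset.count_add, Multiset.count_add, Multiset.count_replicate,
          Multiset.count_replicate, Multiset.count_eq_zero.2 a2, Multiset.count_eq_zero.2 b2] at hc
        simp only [if_true, zero_add, reduceIte] at hc
        have hss : mmin (μ + ν) = mmin (μ' + ν') := by omega
        have h4 : mmin (μ + ν) ∈ μ := by
          rcases Multiset.mem_add.1 hmem with h' | h'
          · exact h'
          · exact absurd h' a3
        have h4' : mmin (μ' + ν') ∈ μ' := by
          rcases Multiset.mem_add.1 hmem' with h' | h'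
          · exact h'
          · exact absurd h' b3
        rw [Multiset.cons_inj_right] at hfst
        rw [hss] at hfst h4
        have hνν : ν = ν' := by
          rw [hss] at hsnd
          exact add_right_cancel hsnd
        refine ⟨?_, hνν⟩
        calc μ = mmin (μ' + ν') ::ₘ μ.erase (mmin (μ' + ν')) := (Multiset.cons_erase h4).symm
          _ = mmin (μ' + ν') ::ₘ μ'.erase (mmin (μ' + ν')) := by rw [hfst]
          _ = μ' := Multiset.cons_erase h4'

lemma parts_injective {n : ℕ} :
    Function.Injective (Nat.Partition.parts : Nat.Partition n → Multiset ℕ) := by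
  intro p q h
  cases p
  cases q
  simpa using h

noncomputable def overF (n : ℕ) : Finset (Multiset ℕ × Multiset ℕ) :=
  (Finset.HasAntidiagonal.antidiagonal n).biUnion fun ab =>
    ((Nat.Partition.distincts ab.1).image Nat.Partition.parts) ×ˢ
      ((Finset.univ : Finset (Nat.Partition ab.2)).image Nat.Partition.parts)

lemma mem_overF {n : ℕ} {x : Multiset ℕ × Multiset ℕ} : x ∈ overF n ↔ IsOver n x := by
  simp only [overF, Finset.mem_biUnion, Finset.HasAntidiagonal.mem_antidiagonal, Finset.mem_product,
    Finset.mem_image, Finset.mem_univ, true_and, Nat.Partition.distincts, Finset.mem_filter]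
  constructor
  · rintro ⟨⟨a, b⟩, hab, ⟨⟨p, hp, hp1⟩, ⟨q, hq1⟩⟩⟩
    refine ⟨hp1 ▸ hp, ?_, ?_, ?_⟩
    · intro i hi
      rw [← hp1] at hi
      exact p.parts_pos hi
    · intro i hi
      rw [← hq1] at hi
      exact q.parts_pos hi
    · rw [← hp1, ← hq1, p.parts_sum, q.parts_sum]
      simpa using hab
  · rintro ⟨hnd, hp, hq, hsum⟩
    exact ⟨(x.1.sum, x.2.sum), by simpa using hsum,
      ⟨⟨⟨x.1, fun hi => hp _ hi, rfl⟩, hnd, rfl⟩,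
        ⟨⟨x.2, fun hi => hq _ hi, rfl⟩, rfl⟩⟩⟩

lemma card_overF (n : ℕ) : (overF n).card = overpartitionCount n := by
  rw [overF, Finset.card_biUnion]
  · refine Finset.sum_congr rfl fun ab _ => ?_
    rw [Finset.card_product, Finset.card_image_of_injective _ parts_injective,
      Finset.card_image_of_injective _ parts_injective, Finset.card_univ]
    rfl
  · intro ab hab cd hcd hne
    rw [Function.onFun, Finset.disjoint_left]
    rintro ⟨u, v⟩ hu hv
    simp only [Finset.mem_product, Finset.mem_image, Finset.mem_univ, true_and] at hu hv
    obtain ⟨⟨p, -, hp⟩, ⟨q, hq⟩⟩ := hu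
    obtain ⟨⟨p', -, hp'⟩, ⟨q', hq'⟩⟩ := hv
    apply hne
    have h1 : ab.1 = cd.1 := by rw [← p.parts_sum, ← p'.parts_sum, hp, hp']
    have h2 : ab.2 = cd.2 := by rw [← q.parts_sum, ← q'.parts_sum, hq, hq']
    exact Prod.ext h1 h2

theorem overpartition_le_two_mul (n : ℕ) (hn : 1 ≤ n) :
    overpartitionCount n ≤ 2 * overpartitionCount (n - 1) := by
  rw [← card_overF, ← card_overF]
  calc (overF n).card ≤ ((Finset.univ : Finset Bool) ×ˢ overF (n - 1)).card := by
        apply Finset.card_le_card_of_injOn G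
        · intro x hx
          rw [Finset.mem_coe, Finset.mem_product]
          exact ⟨Finset.mem_univ _, mem_overF.2 (isOver_G (mem_overF.1 hx) hn)⟩
        · intro x hx y hy hxy
          exact G_inj (mem_overF.1 hx) (mem_overF.1 hy) hn hxy
    _ = 2 * (overF (n - 1)).card := by
        rw [Finset.card_product, Finset.card_univ, Fintype.card_bool]
end

section
/- For all n ≥ 1 and k ≥ 1, (-1)^k ( p̄(n) + 2 ∑_{j=1}^{k} (-1)^j p̄(n - j²) ) ≥ 0, where p̄(m) = 0 for m < 0. Moreover the inequality is strict when n ≥ (k+1)². -/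
open PowerSeries

namespace TGO

noncomputable section

variable {α : Type*}

open Finset

open scoped Classical

/-- The partial product for the generating function for odd partitions.
TODO: As `m` tends to infinity, this converges (in the `X`-adic topology).

If `m` is sufficiently large, the `i`th coefficient gives the number of odd partitions of the
natural number `i`: proved in `oddGF_prop`.
It is stated for an arbitrary field `α`, though it usually suffices to use `ℚ` or `ℝ`.
-/
def partialOddGF (m : ℕ) [Field α] :=
  ∏ i ∈ range m, (1 - (X : PowerSeries α) ^ (2 * i + 1))⁻¹

/-- The partial product for the generating function for distinct partitions.
TODO: As `m` tends to infinity, this converges (in the `X`-adic topology).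

If `m` is sufficiently large, the `i`th coefficient gives the number of distinct partitions of the
natural number `i`: proved in `distinctGF_prop`.
It is stated for an arbitrary commutative semiring `α`, though it usually suffices to use `ℕ`, `ℚ`
or `ℝ`.
-/
def partialDistinctGF (m : ℕ) [CommSemiring α] :=
  ∏ i ∈ range m, (1 + (X : PowerSeries α) ^ (i + 1))

open Finset.HasAntidiagonal

universe u
variable {ι : Type u}

/-- A convenience constructor for the power series whose coefficients indicate a subset. -/
def indicatorSeries (α : Type*) [Semiring α] (s : Set ℕ) : PowerSeries α :=
  PowerSeries.mk fun n => if n ∈ s then 1 else 0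

theorem coeff_indicator (s : Set ℕ) [Semiring α] (n : ℕ) :
    coeff (R := α) n (indicatorSeries _ s) = if n ∈ s then 1 else 0 :=
  coeff_mk _ _

theorem coeff_indicator_pos (s : Set ℕ) [Semiring α] (n : ℕ) (h : n ∈ s) :
    coeff (R := α) n (indicatorSeries _ s) = 1 := by rw [coeff_indicator, if_pos h]

theorem coeff_indicator_neg (s : Set ℕ) [Semiring α] (n : ℕ) (h : n ∉ s) :
    coeff (R := α) n (indicatorSeries _ s) = 0 := by rw [coeff_indicator, if_neg h]

theorem constantCoeff_indicator (s : Set ℕ) [Semiring α] :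
    constantCoeff (R := α) (indicatorSeries _ s) = if 0 ∈ s then 1 else 0 :=
  rfl

theorem two_series (i : ℕ) [Semiring α] :
    1 + (X : PowerSeries α) ^ i.succ = indicatorSeries α {0, i.succ} := by
  ext n
  simp only [coeff_indicator, coeff_one, coeff_X_pow, Set.mem_insert_iff, Set.mem_singleton_iff,
    map_add]
  cases' n with d
  · simp [(Nat.succ_ne_zero i).symm]
  · simp [Nat.succ_ne_zero d]

theorem num_series' [Field α] (i : ℕ) :
    (1 - (X : PowerSeries α) ^ (i + 1))⁻¹ = indicatorSeries α {k | i + 1 ∣ k} := by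
  rw [PowerSeries.inv_eq_iff_mul_eq_one]
  · ext n
    cases n with
    | zero => simp [mul_sub, zero_pow, constantCoeff_indicator]
    | succ n =>
      simp only [coeff_one, if_false, mul_sub, mul_one, coeff_indicator,
        LinearMap.map_sub, reduceCtorEq]
      simp_rw [coeff_mul, coeff_X_pow, coeff_indicator, @boole_mul _ _ _ _]
      erw [@sum_ite _ _ _ _ _ (fun _ => Classical.propDecidable _), sum_ite]
      simp_rw [@filter_filter _ _ _ _ _, sum_const_zero, add_zero, sum_const, nsmul_eq_mul, mul_one,
        sub_eq_iff_eq_add, zero_add]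
      symm
      split_ifs with h
      · suffices #{a ∈ antidiagonal (n + 1) | i + 1 ∣ a.fst ∧ a.snd = i + 1} = 1 by
          simp only [Set.mem_setOf_eq]; convert congr_arg ((↑) : ℕ → α) this; norm_cast
        rw [card_eq_one]
        cases' h with p hp
        refine ⟨((i + 1) * (p - 1), i + 1), ?_⟩
        ext ⟨a₁, a₂⟩
        simp only [mem_filter, Prod.mk_inj, HasAntidiagonal.mem_antidiagonal, mem_singleton]
        constructor
        · rintro ⟨a_left, ⟨a, rfl⟩, rfl⟩
          refine ⟨?_, rfl⟩
          rw [Nat.mul_sub_left_distrib, ← hp, ← a_left, mul_one, Nat.add_sub_cancel]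
        · rintro ⟨rfl, rfl⟩
          match p with
          | 0 => rw [mul_zero] at hp; cases hp
          | p + 1 => rw [hp]; simp [mul_add]
      · suffices #{a ∈ antidiagonal (n + 1) | i + 1 ∣ a.fst ∧ a.snd = i + 1} = 0 by
          simp only [Set.mem_setOf_eq]; convert congr_arg ((↑) : ℕ → α) this; norm_cast
        rw [card_eq_zero]
        apply eq_empty_of_forall_notMem
        simp only [Prod.forall, mem_filter, not_and, HasAntidiagonal.mem_antidiagonal]
        rintro _ h₁ h₂ ⟨a, rfl⟩ rfl
        apply h
        simp [← h₂]
  · simp [zero_pow]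

def mkOdd : ℕ ↪ ℕ :=
  ⟨fun i => 2 * i + 1, fun x y h => by linarith⟩

-- The main workhorse of the partition theorem proof.
theorem partialGF_prop (α : Type*) [CommSemiring α] (n : ℕ) (s : Finset ℕ) (hs : ∀ i ∈ s, 0 < i)
    (c : ℕ → Set ℕ) (hc : ∀ i, i ∉ s → 0 ∈ c i) :
    #{p : n.Partition | (∀ j, p.parts.count j ∈ c j) ∧ ∀ j ∈ p.parts, j ∈ s} =
      coeff (R := α) n (∏ i ∈ s, indicatorSeries α ((· * i) '' c i)) := by
  simp_rw [coeff_prod, coeff_indicator, prod_boole, sum_boole]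
  apply congr_arg
  simp only [mem_univ, forall_true_left, not_and, not_forall, exists_prop,
    Set.mem_image, not_exists]
  set φ : (a : Nat.Partition n) →
    a ∈ filter (fun p ↦ (∀ (j : ℕ), Multiset.count j p.parts ∈ c j) ∧ ∀ j ∈ p.parts, j ∈ s) univ →
    ℕ →₀ ℕ := fun p _ => {
      toFun := fun i => Multiset.count i p.parts • i
      support := Finset.filter (fun i => i ≠ 0) p.parts.toFinset
      mem_support_toFun := fun a => by
        simp only [smul_eq_mul, ne_eq, mul_eq_zero, Multiset.count_eq_zero]
        rw [not_or, not_not]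
        simp only [Multiset.mem_toFinset, not_not, mem_filter] }
  refine Finset.card_bij φ ?_ ?_ ?_
  · intro a ha
    simp only [φ, not_forall, not_exists, not_and, exists_prop, mem_filter]
    rw [mem_finsuppAntidiag]
    dsimp only [ne_eq, smul_eq_mul, id_eq, eq_mpr_eq_cast, le_eq_subset, Finsupp.coe_mk]
    simp only [mem_univ, forall_true_left, not_and, not_forall, exists_prop,
      mem_filter, true_and] at ha
    refine ⟨⟨?_, fun i ↦ ?_⟩, fun i _ ↦ ⟨a.parts.count i, ha.1 i, rfl⟩⟩
    · conv_rhs => simp [← a.parts_sum]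
      rw [sum_multiset_count_of_subset _ s]
      · simp only [smul_eq_mul]
      · intro i
        simp only [Multiset.mem_toFinset, not_not, mem_filter]
        apply ha.2
    · simp only [ne_eq, Multiset.mem_toFinset, not_not, mem_filter, and_imp]
      exact fun hi _ ↦ ha.2 i hi
  · intro p₁ hp₁ p₂ hp₂ h
    apply Nat.Partition.ext
    simp only [true_and, mem_univ, mem_filter] at hp₁ hp₂
    ext i
    simp only [φ, ne_eq, Multiset.mem_toFinset, not_not, smul_eq_mul, Finsupp.mk.injEq] at h
    by_cases hi : i = 0
    · rw [hi]
      rw [Multiset.count_eq_zero_of_notMem]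
      · rw [Multiset.count_eq_zero_of_notMem]
        intro a; exact Nat.lt_irrefl 0 (hs 0 (hp₂.2 0 a))
      intro a; exact Nat.lt_irrefl 0 (hs 0 (hp₁.2 0 a))
    · rw [← mul_left_inj' hi]
      rw [funext_iff] at h
      exact h.2 i
  · simp only [φ, mem_filter, mem_finsuppAntidiag, mem_univ, exists_prop, true_and, and_assoc]
    rintro f ⟨hf, hf₃, hf₄⟩
    have hf' : f ∈ finsuppAntidiag s n := mem_finsuppAntidiag.mpr ⟨hf, hf₃⟩
    simp only [mem_finsuppAntidiag] at hf'
    refine ⟨⟨∑ i ∈ s, Multiset.replicate (f i / i) i, ?_, ?_⟩, ?_, ?_, ?_⟩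
    · intro i hi
      simp only [exists_prop, Multiset.mem_sum, mem_map, Function.Embedding.coeFn_mk] at hi
      rcases hi with ⟨t, ht, z⟩
      apply hs
      rwa [Multiset.eq_of_mem_replicate z]
    · simp_rw [Multiset.sum_sum, Multiset.sum_replicate, Nat.nsmul_eq_mul]
      rw [← hf'.1]
      refine sum_congr rfl fun i hi => Nat.div_mul_cancel ?_
      rcases hf₄ i hi with ⟨w, _, hw₂⟩
      rw [← hw₂]
      exact dvd_mul_left _ _
    · intro i
      simp_rw [Multiset.count_sum', Multiset.count_replicate, sum_ite_eq']
      split_ifs with h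
      · rcases hf₄ i h with ⟨w, hw₁, hw₂⟩
        rwa [← hw₂, Nat.mul_div_cancel _ (hs i h)]
      · exact hc _ h
    · intro i hi
      rw [Multiset.mem_sum] at hi
      rcases hi with ⟨j, hj₁, hj₂⟩
      rwa [Multiset.eq_of_mem_replicate hj₂]
    · ext i
      simp_rw [Multiset.count_sum', Multiset.count_replicate, sum_ite_eq']
      simp only [ne_eq, Multiset.mem_toFinset, not_not, smul_eq_mul, ite_mul,
        zero_mul, Finsupp.coe_mk]
      split_ifs with h
      · apply Nat.div_mul_cancel
        rcases hf₄ i h with ⟨w, _, hw₂⟩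
        apply Dvd.intro_left _ hw₂
      · apply symm
        rw [← Finsupp.notMem_support_iff]
        exact notMem_mono hf'.2 h

theorem partialOddGF_prop [Field α] (n m : ℕ) :
    #{p : n.Partition | ∀ j ∈ p.parts, j ∈ (range m).map mkOdd} = coeff (R := α) n (partialOddGF m) := by
  rw [partialOddGF]
  convert partialGF_prop α n
    ((range m).map mkOdd) _ (fun _ => Set.univ) (fun _ _ => trivial) using 2
  · congr
    simp only [true_and, forall_const, Set.mem_univ]
  · rw [Finset.prod_map]
    simp_rw [num_series']
    congr! 2 with x
    ext k
    constructor
    · rintro ⟨p, rfl⟩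
      refine ⟨p, ⟨⟩, ?_⟩
      apply mul_comm
    rintro ⟨a_w, -, rfl⟩
    apply Dvd.intro_left a_w rfl
  · intro i
    rw [mem_map]
    rintro ⟨a, -, rfl⟩
    exact Nat.succ_pos _

/-- If m is big enough, the partial product's coefficient counts the number of odd partitions -/
theorem oddGF_prop [Field α] (n m : ℕ) (h : n < m * 2) :
    #(Nat.Partition.odds n) = coeff (R := α) n (partialOddGF m) := by
  rw [← partialOddGF_prop, Nat.Partition.odds]
  unfold Nat.Partition.restricted
  beta_reduce
  congr 2
  apply Finset.filter_congr
  intro p _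
  apply forall₂_congr
  intro i hi
  have hin : i ≤ n := by
    simpa [p.parts_sum] using Multiset.single_le_sum (fun _ _ => Nat.zero_le _) _ hi
  simp only [mkOdd, exists_prop, mem_range, Function.Embedding.coeFn_mk, mem_map]
  constructor
  · intro hi₂
    have := Nat.mod_add_div i 2
    rw [Nat.not_even_iff] at hi₂
    rw [hi₂, add_comm] at this
    refine ⟨i / 2, ?_, this⟩
    rw [Nat.div_lt_iff_lt_mul zero_lt_two]
    exact lt_of_le_of_lt hin h
  · rintro ⟨a, -, rfl⟩
    rw [even_iff_two_dvd]
    apply Nat.two_not_dvd_two_mul_add_one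

theorem partialDistinctGF_prop [CommSemiring α] (n m : ℕ) :
    #{p : n.Partition |
        p.parts.Nodup ∧ ∀ j ∈ p.parts, j ∈ (range m).map ⟨Nat.succ, Nat.succ_injective⟩} =
      coeff (R := α) n (partialDistinctGF m) := by
  rw [partialDistinctGF]
  convert partialGF_prop α n
    ((range m).map ⟨Nat.succ, Nat.succ_injective⟩) _ (fun _ => {0, 1}) (fun _ _ => Or.inl rfl)
    using 2
  · congr! with p
    rw [Multiset.nodup_iff_count_le_one]
    congr! 1 with i
    rcases Multiset.count i p.parts with (_ | _ | ms) <;> simp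
  · simp_rw [Finset.prod_map, two_series]
    congr with i
    simp [Set.image_pair]
  · simp only [mem_map, Function.Embedding.coeFn_mk]
    rintro i ⟨_, _, rfl⟩
    apply Nat.succ_pos

/-- If m is big enough, the partial product's coefficient counts the number of distinct partitions
-/
theorem distinctGF_prop [CommSemiring α] (n m : ℕ) (h : n < m + 1) :
    #(Nat.Partition.distincts n) = coeff (R := α) n (partialDistinctGF m) := by
  rw [← partialDistinctGF_prop, Nat.Partition.distincts]
  congr with p
  apply (and_iff_left _).symm
  intro i hi
  have : i ≤ n := by
    simpa [p.parts_sum] using Multiset.single_le_sum (fun _ _ => Nat.zero_le _) _ hi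
  simp only [mkOdd, exists_prop, mem_range, Function.Embedding.coeFn_mk, mem_map]
  refine ⟨i - 1, ?_, Nat.succ_pred_eq_of_pos (p.parts_pos hi)⟩
  rw [tsub_lt_iff_right (Nat.one_le_iff_ne_zero.mpr (p.parts_pos hi).ne')]
  exact lt_of_le_of_lt this h


/-! ### Generating function for all partitions -/

/-- partial generating function for all partitions -/
def partialAllGF (m : ℕ) [Field α] :=
  ∏ i ∈ range m, (1 - (X : PowerSeries α) ^ (i + 1))⁻¹

theorem partialAllGF_prop [Field α] (n m : ℕ) :
    #{p : n.Partition |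
        ∀ j ∈ p.parts, j ∈ (range m).map ⟨Nat.succ, Nat.succ_injective⟩} =
      coeff (R := α) n (partialAllGF m) := by
  rw [partialAllGF]
  convert partialGF_prop α n ((range m).map ⟨Nat.succ, Nat.succ_injective⟩) _
    (fun _ => Set.univ) (fun _ _ => trivial) using 2
  · congr
    simp only [true_and, forall_const, Set.mem_univ]
  · rw [Finset.prod_map]
    simp_rw [num_series']
    congr! 2 with x
    ext k
    constructor
    · rintro ⟨p, rfl⟩
      exact ⟨p, trivial, mul_comm _ _⟩
    · rintro ⟨a, -, rfl⟩
      exact Dvd.intro_left a rfl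
  · simp only [mem_map, Function.Embedding.coeFn_mk]
    rintro i ⟨_, _, rfl⟩
    apply Nat.succ_pos

theorem allGF_prop [Field α] (n m : ℕ) (h : n < m + 1) :
    (partitionCount n : α) = coeff (R := α) n (partialAllGF m) := by
  rw [← partialAllGF_prop]
  congr 1
  rw [partitionCount, Fintype.card]
  congr 1
  symm
  rw [Finset.filter_true_of_mem]
  intro p _
  intro j hj
  have hjn : j ≤ n := by
    simpa [p.parts_sum] using Multiset.single_le_sum (fun _ _ => Nat.zero_le _) _ hj
  have hjp : 0 < j := p.parts_pos hj
  simp only [mem_map, mem_range, Function.Embedding.coeFn_mk]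
  exact ⟨j - 1, by omega, by omega⟩

/-! ### q-binomial machinery, specialized over `ℚ⟦X⟧` with `q = X ^ 2`. -/

abbrev PS := PowerSeries ℚ

/-- `q = X^2` -/
def Qq : PS := X ^ 2

lemma Qq_pow (j : ℕ) : Qq ^ j = (X : PS) ^ (2 * j) := by
  rw [Qq, ← pow_mul]

lemma osq_congr {a b : ℕ} (h : a = b) : (1 : PS) - Qq ^ a = 1 - Qq ^ b := by rw [h]

/-- `(q;q)_k` -/
def Dk (k : ℕ) : PS := ∏ i ∈ range k, (1 - Qq ^ (i + 1))

/-- `(q^(N-k+1);q)_k` -/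
def Ntop (N k : ℕ) : PS := ∏ i ∈ range k, (1 - Qq ^ (N - k + i + 1))

/-- the Gaussian binomial coefficient `[N choose k]_q` -/
def qb (N k : ℕ) : PS := if k ≤ N then Ntop N k * (Dk k)⁻¹ else 0

lemma constCoeff_one_sub_X_pow (e : ℕ) (he : 1 ≤ e) :
    constantCoeff (R := ℚ) (1 - (X : PS) ^ e) = 1 := by
  rw [map_sub, map_one, map_pow, constantCoeff_X, zero_pow (by omega), sub_zero]

lemma constCoeff_Dk (k : ℕ) : constantCoeff (R := ℚ) (Dk k) = 1 := by
  rw [Dk, map_prod]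
  apply Finset.prod_eq_one
  intro i _
  rw [Qq_pow]
  exact constCoeff_one_sub_X_pow _ (by omega)

lemma Dk_ne_zero (k : ℕ) : (Dk k : PS) ≠ 0 := by
  intro h
  have := constCoeff_Dk k
  rw [h, map_zero] at this
  norm_num at this

lemma Dk_mul_inv (k : ℕ) : Dk k * (Dk k)⁻¹ = 1 :=
  PowerSeries.mul_inv_cancel _ (by rw [constCoeff_Dk]; norm_num)

lemma Dk_inv_mul (k : ℕ) : (Dk k)⁻¹ * Dk k = 1 :=
  PowerSeries.inv_mul_cancel _ (by rw [constCoeff_Dk]; norm_num)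

lemma Ntop_self (N : ℕ) : Ntop N N = Dk N := by
  rw [Ntop, Dk]
  exact Finset.prod_congr rfl (fun i _ => osq_congr (by omega))

lemma qb_of_gt {N k : ℕ} (h : N < k) : qb N k = 0 := if_neg (by omega)

lemma qb_zero (N : ℕ) : qb N 0 = 1 := by
  rw [qb, if_pos (Nat.zero_le N), Ntop, Dk]
  simp only [range_zero, prod_empty]
  have h := Dk_mul_inv 0
  rw [Dk] at h
  simp only [range_zero, prod_empty, one_mul] at h
  rw [one_mul, h]

lemma qb_self (N : ℕ) : qb N N = 1 := by
  rw [qb, if_pos le_rfl, Ntop_self, Dk_mul_inv]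

lemma qb_mul_Dk {N k : ℕ} (h : k ≤ N) : qb N k * Dk k = Ntop N k := by
  rw [qb, if_pos h, mul_assoc, Dk_inv_mul, mul_one]

/-- Pascal's rule for Gaussian binomials -/
lemma qb_pascal (N : ℕ) {k : ℕ} (hk : 1 ≤ k) :
    qb (N + 1) k = qb N k + Qq ^ (N + 1 - k) * qb N (k - 1) := by
  rcases lt_or_ge (N + 1) k with h | h
  · rw [qb_of_gt h, qb_of_gt (by omega), qb_of_gt (by omega), mul_zero, add_zero]
  rcases eq_or_lt_of_le h with rfl | hlt
  · -- k = N + 1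
    rw [qb_self, qb_of_gt (by omega), Nat.sub_self, pow_zero, one_mul, zero_add]
    have : N + 1 - 1 = N := by omega
    rw [this, qb_self]
  · -- k ≤ N
    have hkN : k ≤ N := by omega
    apply mul_right_cancel₀ (Dk_ne_zero k)
    rw [qb_mul_Dk (by omega), add_mul, qb_mul_Dk hkN]
    have hDk : Dk k = Dk (k - 1) * (1 - Qq ^ k) := by
      rw [Dk, Dk, show k = (k - 1) + 1 from by omega, Finset.prod_range_succ,
        Nat.add_sub_cancel]
    rw [mul_assoc, hDk, ← mul_assoc (qb N (k - 1)), qb_mul_Dk (by omega)]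
    set A : PS := ∏ i ∈ range (k - 1), (1 - Qq ^ (N + 2 - k + i)) with hA
    have e1 : Ntop (N + 1) k = A * (1 - Qq ^ (N + 1)) := by
      rw [Ntop, show k = (k - 1) + 1 from by omega, Finset.prod_range_succ, hA]
      refine congr_arg₂ (· * ·) (Finset.prod_congr rfl (fun i _ => osq_congr (by omega)))
        (osq_congr (by omega))
    have e2 : Ntop N k = (1 - Qq ^ (N + 1 - k)) * A := by
      rw [Ntop, show k = (k - 1) + 1 from by omega, Finset.prod_range_succ', hA, mul_comm]
      refine congr_arg₂ (· * ·) (osq_congr (by omega))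
        (Finset.prod_congr rfl (fun i _ => osq_congr (by omega)))
    have e3 : Ntop N (k - 1) = A := by
      rw [Ntop, hA]
      exact Finset.prod_congr rfl (fun i _ => osq_congr (by omega))
    have e4 : Qq ^ (N + 1 - k) * Qq ^ k = Qq ^ (N + 1) := by
      rw [← pow_add]; congr 1; omega
    rw [e1, e2, e3]
    calc A * (1 - Qq ^ (N + 1)) = A - A * (Qq ^ (N + 1 - k) * Qq ^ k) := by rw [e4]; ring
      _ = (1 - Qq ^ (N + 1 - k)) * A + Qq ^ (N + 1 - k) * (A * (1 - Qq ^ k)) := by ring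

/-- the (homogeneous) q-binomial theorem, specialized to `q = X^2` over `ℚ⟦X⟧`. -/
theorem qbinom_thm (x y : PS) (N : ℕ) :
    ∏ i ∈ range N, (y + x * Qq ^ i) =
      ∑ k ∈ range (N + 1), Qq ^ (k.choose 2) * qb N k * x ^ k * y ^ (N - k) := by
  induction N with
  | zero => simp [qb_zero]
  | succ N ih =>
    rw [Finset.prod_range_succ, ih, mul_add]
    have first : (∑ k ∈ range (N + 1), Qq ^ (k.choose 2) * qb N k * x ^ k * y ^ (N - k)) * y
        = ∑ k ∈ range (N + 2), Qq ^ (k.choose 2) * qb N k * x ^ k * y ^ (N + 1 - k) := by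
      conv_rhs => rw [Finset.sum_range_succ]
      rw [qb_of_gt (show N < N + 1 from by omega)]
      simp only [mul_zero, zero_mul, add_zero]
      rw [Finset.sum_mul]
      refine Finset.sum_congr rfl (fun k hk => ?_)
      rw [mem_range] at hk
      rw [show N + 1 - k = (N - k) + 1 from by omega, pow_succ]
      ring
    have second : (∑ k ∈ range (N + 1), Qq ^ (k.choose 2) * qb N k * x ^ k * y ^ (N - k)) * (x * Qq ^ N)
        = ∑ k ∈ range (N + 2),
            Qq ^ (k.choose 2) * (if k = 0 then 0 else Qq ^ (N + 1 - k) * qb N (k - 1)) * x ^ k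
              * y ^ (N + 1 - k) := by
      conv_rhs => rw [Finset.sum_range_succ']
      have g0 : Qq ^ (Nat.choose 0 2) * (if (0 : ℕ) = 0 then (0 : PS) else Qq ^ (N + 1 - 0) * qb N (0 - 1)) * x ^ 0
          * y ^ (N + 1 - 0) = 0 := by simp
      rw [g0, add_zero, Finset.sum_mul]
      refine Finset.sum_congr rfl (fun k hk => ?_)
      rw [mem_range] at hk
      have hch : (k + 1).choose 2 = k.choose 2 + k := by
        rw [Nat.choose_succ_succ]
        simp [Nat.choose_one_right, Nat.add_comm]
      rw [if_neg (Nat.succ_ne_zero k), hch]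
      have he1 : N + 1 - (k + 1) = N - k := by omega
      have he2 : k + 1 - 1 = k := by omega
      rw [he1, he2]
      have he3 : Qq ^ (k.choose 2 + k) * Qq ^ (N - k) = Qq ^ (k.choose 2) * Qq ^ N := by
        rw [← pow_add, ← pow_add]
        congr 1
        omega
      calc Qq ^ (k.choose 2) * qb N k * x ^ k * y ^ (N - k) * (x * Qq ^ N)
          = Qq ^ (k.choose 2) * Qq ^ N * qb N k * x ^ (k + 1) * y ^ (N - k) := by ring
        _ = Qq ^ (k.choose 2 + k) * Qq ^ (N - k) * qb N k * x ^ (k + 1) * y ^ (N - k) := by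
            rw [he3]
        _ = Qq ^ (k.choose 2 + k) * (Qq ^ (N - k) * qb N k) * x ^ (k + 1)
              * y ^ (N - k) := by ring
    rw [first, second, ← Finset.sum_add_distrib]
    refine Finset.sum_congr rfl (fun k hk => ?_)
    rcases Nat.eq_zero_or_pos k with rfl | hkpos
    · simp [qb_zero]
    · rw [if_neg (by omega), qb_pascal N hkpos]
      ring

/-! ### series congruent to 1 modulo `X^M` -/

/-- `f ≡ 1 mod X^M` -/
def Hi (M : ℕ) (f : PS) : Prop := ∀ i < M, coeff (R := ℚ) i f = if i = 0 then 1 else 0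

lemma hi_one (M : ℕ) : Hi M 1 := fun i _ => coeff_one i ..

lemma hi_mul {M : ℕ} {f g : PS} (hf : Hi M f) (hg : Hi M g) : Hi M (f * g) := by
  intro i hi
  rw [coeff_mul]
  have : ∀ p ∈ antidiagonal i, coeff (R := ℚ) p.1 f * coeff (R := ℚ) p.2 g
      = if (0, 0) = p then 1 else 0 := by
    rintro ⟨a, b⟩ hp
    rw [HasAntidiagonal.mem_antidiagonal] at hp
    rw [hf a (by omega), hg b (by omega)]
    by_cases ha : a = 0 <;> by_cases hb : b = 0 <;>
      simp [ha, hb, Prod.ext_iff, eq_comm]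
  rw [Finset.sum_congr rfl this, Finset.sum_ite_eq]
  simp [HasAntidiagonal.mem_antidiagonal, eq_comm]

lemma hi_prod {M : ℕ} {ι : Type*} {s : Finset ι} {f : ι → PS}
    (h : ∀ i ∈ s, Hi M (f i)) : Hi M (∏ i ∈ s, f i) :=
  Finset.prod_induction f (Hi M) (fun _ _ => hi_mul) (hi_one M) h

lemma coeff_mul_of_hi {M : ℕ} {g : PS} (hg : Hi M g) (f : PS) {i : ℕ} (hi : i < M) :
    coeff (R := ℚ) i (f * g) = coeff (R := ℚ) i f := by
  rw [coeff_mul]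
  have : ∀ p ∈ antidiagonal i, coeff (R := ℚ) p.1 f * coeff (R := ℚ) p.2 g
      = if (i, 0) = p then coeff (R := ℚ) i f else 0 := by
    rintro ⟨a, b⟩ hp
    rw [HasAntidiagonal.mem_antidiagonal] at hp
    rw [hg b (by omega)]
    by_cases hb : b = 0
    · have ha : a = i := by omega
      simp [ha, hb, Prod.ext_iff]
    · simp [hb, Prod.ext_iff, eq_comm]
  rw [Finset.sum_congr rfl this, Finset.sum_ite_eq]
  simp [HasAntidiagonal.mem_antidiagonal]

lemma hi_of_mul_eq {M : ℕ} {f g h : PS} (hfg : f * g = h) (hg : Hi M g) (hh : Hi M h) :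
    Hi M f := fun i hi => by
  rw [← coeff_mul_of_hi hg f hi, hfg]
  exact hh i hi

lemma hi_one_sub_X_pow {M e : ℕ} (h : M ≤ e) : Hi M (1 - (X : PS) ^ e) := by
  intro i hi
  rw [map_sub, coeff_one, coeff_X_pow]
  rw [if_neg (show ¬ i = e from by omega), sub_zero]

lemma hi_one_sub_Qq_pow {M e : ℕ} (h : M ≤ 2 * e) : Hi M (1 - Qq ^ e) := by
  rw [Qq_pow]
  exact hi_one_sub_X_pow h

/-! ### the truncated Gauss identity -/

/-- `(n-k)^2`, the distance squared -/
def dist (n k : ℕ) : ℕ := if k ≤ n then (n - k) ^ 2 else (k - n) ^ 2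

/-- modulus up to which `qb (2n) k * Dk n ≡ 1` -/
def Mk (n k : ℕ) : ℕ := if k ≤ n then 2 * k + 2 else 2 * (2 * n - k) + 2

lemma hi_W {n k : ℕ} (hk : k ≤ 2 * n) : Hi (Mk n k) (qb (2 * n) k * Dk n) := by
  rcases le_or_gt k n with h | h
  · rw [Mk, if_pos h]
    have hDkn : Dk n = Dk k * ∏ i ∈ range (n - k), (1 - Qq ^ (k + i + 1)) := by
      have h0 : Dk (k + (n - k)) = Dk k * ∏ i ∈ range (n - k), (1 - Qq ^ (k + i + 1)) := by
        rw [Dk, Dk, Finset.prod_range_add]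
      rw [show k + (n - k) = n from by omega] at h0
      exact h0
    have hW : qb (2 * n) k * Dk n
        = Ntop (2 * n) k * ∏ i ∈ range (n - k), (1 - Qq ^ (k + i + 1)) := by
      rw [hDkn, show qb (2*n) k * (Dk k * ∏ i ∈ range (n - k), (1 - Qq ^ (k + i + 1)))
        = (qb (2*n) k * Dk k) * ∏ i ∈ range (n - k), (1 - Qq ^ (k + i + 1)) from by ring,
        qb_mul_Dk hk]
    rw [hW]
    apply hi_mul
    · rw [Ntop]
      exact hi_prod (fun i _ => hi_one_sub_Qq_pow (by omega))
    · exact hi_prod (fun i _ => hi_one_sub_Qq_pow (by omega))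
  · rw [Mk, if_neg (by omega)]
    have hDkk : Dk k = Dk n * ∏ i ∈ range (k - n), (1 - Qq ^ (n + i + 1)) := by
      have h0 : Dk (n + (k - n)) = Dk n * ∏ i ∈ range (k - n), (1 - Qq ^ (n + i + 1)) := by
        rw [Dk, Dk, Finset.prod_range_add]
      rw [show n + (k - n) = k from by omega] at h0
      exact h0
    have hmul : (qb (2 * n) k * Dk n) * (∏ i ∈ range (k - n), (1 - Qq ^ (n + i + 1)))
        = Ntop (2 * n) k := by
      rw [show (qb (2*n) k * Dk n) * (∏ i ∈ range (k - n), (1 - Qq ^ (n + i + 1)))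
        = qb (2*n) k * (Dk n * ∏ i ∈ range (k - n), (1 - Qq ^ (n + i + 1))) from by ring,
        ← hDkk, qb_mul_Dk hk]
    refine hi_of_mul_eq hmul (hi_prod (fun i _ => hi_one_sub_Qq_pow (by omega))) ?_
    rw [Ntop]
    exact hi_prod (fun i _ => hi_one_sub_Qq_pow (by omega))

lemma coeff_W {n k i : ℕ} (hk : k ≤ 2 * n) (hi : i ≤ 2 * n) (hd : dist n k ≤ i) :
    coeff (R := ℚ) (i - dist n k) (qb (2 * n) k * Dk n) = if i - dist n k = 0 then 1 else 0 := by
  apply hi_W hk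
  rcases le_or_gt k n with h | h
  · rw [dist, if_pos h] at hd ⊢
    rw [Mk, if_pos h]
    have h3 : (n - k) ^ 2 = (n - k) * (n - k) := by ring
    rw [h3] at hd ⊢
    have h2 : 2 * (n - k) ≤ (n - k) * (n - k) + 1 := by nlinarith
    omega
  · rw [dist, if_neg (by omega)] at hd ⊢
    rw [Mk, if_neg (by omega)]
    have h3 : (k - n) ^ 2 = (k - n) * (k - n) := by ring
    rw [h3] at hd ⊢
    have h2 : 2 * (k - n) ≤ (k - n) * (k - n) + 1 := by nlinarith
    omega

/-! ### the truncated Gauss identity: coefficients of `Podd^2 * Dk` -/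

/-- `(X;X^2)_n` -/
def Podd (n : ℕ) : PS := ∏ i ∈ range n, (1 - X ^ (2 * i + 1))

/-- coefficients of the Gauss theta series `∑_{j ∈ ℤ} (-1)^j X^(j^2)` -/
def gq (i : ℕ) : ℚ :=
  if i = 0 then 1 else if (Nat.sqrt i) ^ 2 = i then 2 * (-1) ^ (Nat.sqrt i) else 0

lemma sum_odds (n : ℕ) : ∑ i ∈ range n, (2 * i + 1) = n ^ 2 := by
  induction n with
  | zero => simp
  | succ n ih => rw [Finset.sum_range_succ, ih]; ring

lemma prod_X_odd (n : ℕ) : ∏ i ∈ range n, (X : PS) ^ (2 * i + 1) = X ^ (n ^ 2) := by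
  rw [Finset.prod_pow_eq_pow_sum, sum_odds]

lemma sgn_pow (k : ℕ) : ((-1 : PS)) ^ k = C (R := ℚ) ((-1) ^ k) := by
  rw [map_pow, map_neg, map_one]

lemma lhs_eq (n : ℕ) :
    ∏ i ∈ range (2 * n), ((X : PS) ^ (2 * n) - X ^ (2 * i + 1))
      = (-1) ^ n * X ^ (3 * n ^ 2) * Podd n ^ 2 := by
  set y := (X : PS) ^ (2 * n) with hy
  rw [show 2 * n = n + n from by omega, Finset.prod_range_add]
  have hP2 : ∀ i ∈ range n, (y - (X : PS) ^ (2 * (n + i) + 1)) = X ^ (2 * n) * (1 - X ^ (2 * i + 1)) := by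
    intro i _
    rw [hy, mul_sub, mul_one, ← pow_add]
    congr 2
    omega
  have hP1 : ∀ i ∈ range n, (y - (X : PS) ^ (2 * i + 1))
      = (-1) * ((X : PS) ^ (2 * i + 1) * (1 - X ^ (2 * (n - 1 - i) + 1))) := by
    intro i hi
    rw [mem_range] at hi
    have hx : (X : PS) ^ (2 * i + 1) * X ^ (2 * (n - 1 - i) + 1) = X ^ (2 * n) := by
      rw [← pow_add]; congr 1; omega
    rw [show ((-1 : PS)) * ((X : PS) ^ (2 * i + 1) * (1 - X ^ (2 * (n - 1 - i) + 1)))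
      = X ^ (2 * i + 1) * X ^ (2 * (n - 1 - i) + 1) - X ^ (2 * i + 1) from by ring, hx, hy]
  rw [Finset.prod_congr rfl hP1, Finset.prod_congr rfl hP2]
  rw [Finset.prod_mul_distrib, Finset.prod_mul_distrib, Finset.prod_mul_distrib]
  rw [Finset.prod_const, Finset.prod_const, Finset.card_range, prod_X_odd]
  rw [Finset.prod_range_reflect (fun j => 1 - (X : PS) ^ (2 * j + 1)) n]
  have : ((X : PS) ^ (2 * n)) ^ n = X ^ (2 * n * n) := by rw [← pow_mul]
  rw [this]
  have hxp : (X : PS) ^ (n ^ 2) * X ^ (2 * n * n) = X ^ (3 * n ^ 2) := by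
    rw [← pow_add]; congr 1; ring
  calc (-1 : PS) ^ n * (X ^ (n ^ 2) * ∏ j ∈ range n, (1 - (X:PS) ^ (2 * j + 1)))
        * (X ^ (2 * n * n) * ∏ i ∈ range n, (1 - (X:PS) ^ (2 * i + 1)))
      = (-1 : PS) ^ n * (X ^ (n ^ 2) * X ^ (2 * n * n)) * (∏ j ∈ range n, (1 - (X:PS) ^ (2 * j + 1)))^2 := by
        ring
    _ = (-1) ^ n * X ^ (3 * n ^ 2) * Podd n ^ 2 := by rw [hxp, Podd]

lemma expo_eq {n k : ℕ} (hk : k ≤ 2 * n) :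
    2 * k.choose 2 + k + 2 * n * (2 * n - k) = 3 * n ^ 2 + dist n k := by
  have hch : 2 * k.choose 2 = k * (k - 1) := by
    rw [Nat.choose_two_right, Nat.mul_div_cancel']
    rcases Nat.even_or_odd k with h | h
    · exact Dvd.dvd.mul_right h.two_dvd _
    · refine Dvd.dvd.mul_left ?_ _
      rcases h with ⟨m, hm⟩
      exact ⟨m, by omega⟩
  rw [hch, dist]
  rcases le_or_gt k n with h | h
  · rw [if_pos h]
    zify [h, hk, show 1 ≤ k ∨ k = 0 from by omega]
    rcases Nat.eq_zero_or_pos k with rfl | hkpos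
    · push_cast; ring
    · push_cast [Nat.cast_sub (by omega : 1 ≤ k), Nat.cast_sub h, Nat.cast_sub hk]
      ring
  · rw [if_neg (by omega)]
    rcases Nat.eq_zero_or_pos k with rfl | hkpos
    · omega
    · zify
      push_cast [Nat.cast_sub (by omega : 1 ≤ k), Nat.cast_sub (le_of_lt h), Nat.cast_sub hk]
      ring

theorem star_coeff (n : ℕ) {i : ℕ} (hi : i ≤ 2 * n) :
    coeff (R := ℚ) i (Podd n ^ 2 * Dk n)
      = (-1) ^ n * ∑ k ∈ range (2 * n + 1), (-1 : ℚ) ^ k * (if dist n k = i then 1 else 0) := by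
  have hfac : ∀ j ∈ range (2 * n), ((X : PS) ^ (2 * n) + (-X) * Qq ^ j)
      = (X : PS) ^ (2 * n) - X ^ (2 * j + 1) := by
    intro j _
    rw [Qq_pow, neg_mul, ← sub_eq_add_neg]
    congr 1
    rw [pow_succ, mul_comm]
  have key : (-1 : PS) ^ n * X ^ (3 * n ^ 2) * Podd n ^ 2 * Dk n
      = ∑ k ∈ range (2 * n + 1),
          Qq ^ k.choose 2 * qb (2 * n) k * (-X) ^ k * ((X : PS) ^ (2 * n)) ^ (2 * n - k) * Dk n := by
    rw [← Finset.sum_mul, ← qbinom_thm, Finset.prod_congr rfl hfac, lhs_eq]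
  -- rewrite each summand as a constant times X-power times W k
  have term_eq : ∀ k ∈ range (2 * n + 1),
      Qq ^ k.choose 2 * qb (2 * n) k * (-X) ^ k * ((X : PS) ^ (2 * n)) ^ (2 * n - k) * Dk n
        = C (R := ℚ) ((-1) ^ k) * (X ^ (3 * n ^ 2 + dist n k) * (qb (2 * n) k * Dk n)) := by
    intro k hk
    rw [mem_range] at hk
    have hk' : k ≤ 2 * n := by omega
    rw [Qq_pow, neg_pow, sgn_pow, ← pow_mul]
    have hx : (X : PS) ^ (2 * k.choose 2) * (X ^ k * X ^ (2 * n * (2 * n - k)))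
        = X ^ (3 * n ^ 2 + dist n k) := by
      rw [← pow_add, ← pow_add, ← expo_eq hk']
      congr 1
      ring
    calc (X:PS) ^ (2 * k.choose 2) * qb (2 * n) k * (C (R := ℚ) ((-1) ^ k) * X ^ k)
          * X ^ (2 * n * (2 * n - k)) * Dk n
        = C (R := ℚ) ((-1)^k) * (((X:PS) ^ (2 * k.choose 2) * (X ^ k * X ^ (2 * n * (2 * n - k))))
            * (qb (2 * n) k * Dk n)) := by ring
      _ = C (R := ℚ) ((-1) ^ k) * (X ^ (3 * n ^ 2 + dist n k) * (qb (2 * n) k * Dk n)) := by rw [hx]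
  rw [Finset.sum_congr rfl term_eq] at key
  -- apply `coeff (3n^2 + i)` to both sides
  have hco := congrArg (fun f => coeff (R := ℚ) (3 * n ^ 2 + i) f) key
  simp only [map_sum] at hco
  have lhs_co : coeff (R := ℚ) (3 * n ^ 2 + i) ((-1 : PS) ^ n * X ^ (3 * n ^ 2) * Podd n ^ 2 * Dk n)
      = (-1) ^ n * coeff (R := ℚ) i (Podd n ^ 2 * Dk n) := by
    rw [sgn_pow, show C (R := ℚ) ((-1)^n) * X ^ (3 * n ^ 2) * Podd n ^ 2 * Dk n
      = C (R := ℚ) ((-1)^n) * (X ^ (3 * n ^ 2) * (Podd n ^ 2 * Dk n)) from by ring,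
      coeff_C_mul, add_comm (3 * n ^ 2) i, PowerSeries.coeff_X_pow_mul]
  have term_co : ∀ k ∈ range (2 * n + 1),
      coeff (R := ℚ) (3 * n ^ 2 + i) (C (R := ℚ) ((-1) ^ k) * (X ^ (3 * n ^ 2 + dist n k) * (qb (2 * n) k * Dk n)))
        = (-1 : ℚ) ^ k * (if dist n k = i then 1 else 0) := by
    intro k hk
    rw [mem_range] at hk
    have hk' : k ≤ 2 * n := by omega
    rw [coeff_C_mul]
    congr 1
    rw [PowerSeries.coeff_X_pow_mul']
    by_cases hd : dist n k ≤ i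
    · rw [if_pos (Nat.add_le_add_left hd _), Nat.add_sub_add_left, coeff_W hk' hi hd]
      by_cases h0 : i - dist n k = 0
      · rw [if_pos h0, if_pos (by omega)]
      · rw [if_neg h0, if_neg (by omega)]
    · rw [if_neg (fun h => hd (Nat.le_of_add_le_add_left h)),
        if_neg (fun h => hd (le_of_eq h))]
  rw [lhs_co, Finset.sum_congr rfl term_co] at hco
  -- multiply by (-1)^n
  have hsq : ((-1 : ℚ) ^ n) * ((-1 : ℚ) ^ n) = 1 := by
    rw [← pow_add]
    exact Even.neg_one_pow ⟨n, rfl⟩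
  calc coeff (R := ℚ) i (Podd n ^ 2 * Dk n)
      = ((-1 : ℚ) ^ n * (-1 : ℚ) ^ n) * coeff (R := ℚ) i (Podd n ^ 2 * Dk n) := by rw [hsq, one_mul]
    _ = (-1 : ℚ) ^ n * ((-1 : ℚ) ^ n * coeff (R := ℚ) i (Podd n ^ 2 * Dk n)) := by ring
    _ = (-1 : ℚ) ^ n * ∑ k ∈ range (2 * n + 1), (-1 : ℚ) ^ k * (if dist n k = i then 1 else 0) := by
        rw [hco]

lemma sq_inj {a b : ℕ} (h : a ^ 2 = b ^ 2) : a = b := by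
  have := Nat.pow_left_strictMono (n := 2) (by omega) |>.injective h
  exact this

lemma sum_dist (n i : ℕ) (hi : i ≤ 2 * n) :
    ∑ k ∈ range (2 * n + 1), (-1 : ℚ) ^ k * (if dist n k = i then 1 else 0)
      = (-1) ^ n * gq i := by
  rw [Finset.sum_congr rfl (fun k _ => (by split_ifs <;> simp :
    (-1 : ℚ) ^ k * (if dist n k = i then 1 else 0) = if dist n k = i then (-1 : ℚ) ^ k else 0))]
  rw [← Finset.sum_filter]
  by_cases h0 : i = 0
  · subst h0
    have hf : (range (2 * n + 1)).filter (fun k => dist n k = 0) = {n} := by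
      ext k
      simp only [Finset.mem_filter, mem_range, Finset.mem_singleton]
      constructor
      · rintro ⟨hk, hd⟩
        rw [dist] at hd
        split_ifs at hd with h
        · have := pow_eq_zero_iff (n := 2) (by omega) |>.mp hd
          omega
        · have := pow_eq_zero_iff (n := 2) (by omega) |>.mp hd
          omega
      · rintro rfl
        exact ⟨by omega, by rw [dist, if_pos le_rfl, Nat.sub_self]; norm_num⟩
    rw [hf, Finset.sum_singleton, gq, if_pos rfl, mul_one]
  · by_cases hsq : (Nat.sqrt i) ^ 2 = i
    · set j := Nat.sqrt i with hj
      have hj1 : 1 ≤ j := by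
        rcases Nat.eq_zero_or_pos j with hz | h
        · rw [hz] at hsq; simp at hsq; omega
        · exact h
      have hjn : j ≤ n := by
        by_contra hc
        push_neg at hc
        have : (n + 1) ^ 2 ≤ j ^ 2 := Nat.pow_le_pow_left hc 2
        nlinarith
      have hji : j ^ 2 = i := hsq
      have hf : (range (2 * n + 1)).filter (fun k => dist n k = i) = {n - j, n + j} := by
        ext k
        simp only [Finset.mem_filter, mem_range, Finset.mem_insert, Finset.mem_singleton]
        constructor
        · rintro ⟨hk, hd⟩
          rw [dist] at hd
          split_ifs at hd with h
          · left
            have : n - k = j := sq_inj (by rw [hd, hji])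
            omega
          · right
            have : k - n = j := sq_inj (by rw [hd, hji])
            omega
        · rintro (rfl | rfl)
          · refine ⟨by omega, ?_⟩
            rw [dist, if_pos (by omega), show n - (n - j) = j from by omega, hji]
          · refine ⟨by omega, ?_⟩
            rcases Nat.eq_zero_or_pos j with hz | hjpos
            · omega
            · rw [dist, if_neg (by omega), show n + j - n = j from by omega, hji]
      rw [hf, Finset.sum_pair (by omega)]
      have hsgn : (-1 : ℚ) ^ (n - j) = (-1) ^ (n + j) := by
        rw [show n + j = (n - j) + 2 * j from by omega, pow_add, pow_mul]
        norm_num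
      rw [hsgn, ← two_mul, gq, if_neg h0, if_pos hsq, pow_add, ← hj]
      ring
    · have hf : (range (2 * n + 1)).filter (fun k => dist n k = i) = ∅ := by
        ext k
        simp only [Finset.mem_filter, mem_range, Finset.notMem_empty, iff_false, not_and]
        intro hk hd
        rw [dist] at hd
        apply hsq
        split_ifs at hd with h
        · rw [← hd, Nat.sqrt_eq']
        · rw [← hd, Nat.sqrt_eq']
      rw [hf, Finset.sum_empty, gq, if_neg h0, if_neg hsq, mul_zero]

/-- the coefficients of `Podd n ^ 2 * Dk n` agree with the Gauss theta series up to `X^(2n)` -/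
theorem gauss_trunc (n : ℕ) {i : ℕ} (hi : i ≤ 2 * n) :
    coeff (R := ℚ) i (Podd n ^ 2 * Dk n) = gq i := by
  rw [star_coeff n hi, sum_dist n i hi, ← mul_assoc, ← pow_add]
  rw [Even.neg_one_pow ⟨n, rfl⟩, one_mul]

/-! ### the overpartition generating function -/

lemma osX_congr {a b : ℕ} (h : a = b) : (1 : PS) - X ^ a = 1 - X ^ b := by rw [h]

/-- tail product, `≡ 1 mod X^(2n+1)` -/
def Tail (n : ℕ) : PS := ∏ i ∈ range n, (1 - Qq ^ (n + i + 1))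

lemma hi_Tail (n : ℕ) : Hi (2 * n + 1) (Tail n) :=
  hi_prod (fun i _ => hi_one_sub_Qq_pow (by omega))

lemma prod_range_two_mul (f : ℕ → PS) (m : ℕ) :
    ∏ i ∈ range (2 * m), f i = ∏ i ∈ range m, (f (2 * i) * f (2 * i + 1)) := by
  induction m with
  | zero => simp
  | succ m ih =>
    rw [Finset.prod_range_succ, ← ih, show 2 * (m + 1) = 2 * m + 1 + 1 from by omega,
      Finset.prod_range_succ, Finset.prod_range_succ, mul_assoc]

lemma Pf_eq (n : ℕ) : (∏ i ∈ range (2 * n), ((1 : PS) - X ^ (i + 1))) = Podd n * Dk n := by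
  rw [prod_range_two_mul (fun i => (1 : PS) - X ^ (i + 1)) n, Finset.prod_mul_distrib, Podd, Dk]
  refine congr_arg₂ (· * ·) rfl (Finset.prod_congr rfl (fun i _ => ?_))
  rw [Qq_pow]
  exact osX_congr (by omega)

lemma Pf_mul (n : ℕ) :
    (∏ i ∈ range (2 * n), ((1 : PS) - X ^ (i + 1))) * partialAllGF (2 * n) = 1 := by
  rw [partialAllGF, ← Finset.prod_mul_distrib]
  apply Finset.prod_eq_one
  intro i _
  exact PowerSeries.mul_inv_cancel _ (by rw [constCoeff_one_sub_X_pow _ (by omega)]; norm_num)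

lemma Ef_Pf (n : ℕ) :
    (partialDistinctGF (2 * n) : PS) * (∏ i ∈ range (2 * n), ((1 : PS) - X ^ (i + 1)))
      = Dk (2 * n) := by
  rw [partialDistinctGF, ← Finset.prod_mul_distrib, Dk]
  refine Finset.prod_congr rfl (fun i _ => ?_)
  rw [Qq_pow, show ((1:PS) + X ^ (i+1)) * (1 - X ^ (i+1)) = 1 - (X ^ (i+1)) ^ 2 from by ring,
    ← pow_mul]
  exact osX_congr (by omega)

lemma Dk_two (n : ℕ) : Dk (2 * n) = Dk n * Tail n := by
  have h0 : Dk (n + n) = Dk n * ∏ i ∈ range n, (1 - Qq ^ (n + i + 1)) := by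
    rw [Dk, Dk, Finset.prod_range_add]
  rw [show 2 * n = n + n from by omega, h0, Tail]

lemma EPodd (n : ℕ) : (partialDistinctGF (2 * n) : PS) * Podd n = Tail n := by
  apply mul_right_cancel₀ (Dk_ne_zero n)
  calc (partialDistinctGF (2 * n) : PS) * Podd n * Dk n
      = partialDistinctGF (2 * n) * (Podd n * Dk n) := by ring
    _ = partialDistinctGF (2 * n) * (∏ i ∈ range (2 * n), ((1 : PS) - X ^ (i + 1))) := by
        rw [Pf_eq]
    _ = Dk (2 * n) := Ef_Pf n
    _ = Tail n * Dk n := by rw [Dk_two]; ring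

lemma key_prod (n : ℕ) :
    ((partialDistinctGF (2 * n) : PS) * partialAllGF (2 * n)) * (Podd n ^ 2 * Dk n) = Tail n := by
  calc ((partialDistinctGF (2 * n) : PS) * partialAllGF (2 * n)) * (Podd n ^ 2 * Dk n)
      = (partialDistinctGF (2 * n) * Podd n) *
          ((∏ i ∈ range (2 * n), ((1 : PS) - X ^ (i + 1))) * partialAllGF (2 * n)) := by
        rw [Pf_eq]; ring
    _ = Tail n * 1 := by rw [EPodd, Pf_mul]
    _ = Tail n := mul_one _

lemma coeff_O {n i : ℕ} (hi : i ≤ 2 * n) :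
    coeff (R := ℚ) i ((partialDistinctGF (2 * n) : PS) * partialAllGF (2 * n))
      = (overpartitionCount i : ℚ) := by
  rw [coeff_mul, overpartitionCount]
  push_cast
  refine Finset.sum_congr rfl ?_
  rintro ⟨a, b⟩ hp
  rw [HasAntidiagonal.mem_antidiagonal] at hp
  rw [← distinctGF_prop a (2 * n) (by omega), ← allGF_prop b (2 * n) (by omega)]

/-- the Gauss theta series -/
def Gser : PS := PowerSeries.mk gq

lemma coeff_Gser (i : ℕ) : coeff (R := ℚ) i Gser = gq i := coeff_mk i gq

lemma coeff_mul_low (f d : PS) (i : ℕ) (h : ∀ j ≤ i, coeff (R := ℚ) j d = 0) :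
    coeff (R := ℚ) i (f * d) = 0 := by
  rw [coeff_mul]
  refine Finset.sum_eq_zero ?_
  rintro ⟨a, b⟩ hp
  rw [HasAntidiagonal.mem_antidiagonal] at hp
  rw [h b (by omega), mul_zero]

theorem rec_coeff (n : ℕ) {i : ℕ} (hi : i ≤ 2 * n) :
    coeff (R := ℚ) i ((partialDistinctGF (2 * n) : PS) * partialAllGF (2 * n) * Gser)
      = if i = 0 then 1 else 0 := by
  have hsplit : (partialDistinctGF (2 * n) : PS) * partialAllGF (2 * n) * Gser
      = Tail n + (partialDistinctGF (2 * n) * partialAllGF (2 * n))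
          * (Gser - Podd n ^ 2 * Dk n) := by
    have hk := key_prod n
    rw [mul_sub, hk]
    ring
  have h1 : coeff (R := ℚ) i ((partialDistinctGF (2 * n) * partialAllGF (2 * n) : PS)
      * (Gser - Podd n ^ 2 * Dk n)) = 0 := by
    apply coeff_mul_low
    intro j hj
    rw [map_sub, coeff_Gser, gauss_trunc n (show j ≤ 2 * n from by omega), sub_self]
  rw [hsplit, map_add, h1, add_zero]
  exact hi_Tail n i (by omega)

/-- the Gauss recurrence for the overpartition function, in `ℚ` -/
theorem rec_q (n : ℕ) (hn : 1 ≤ n) :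
    (overpartitionCount n : ℚ)
      + ∑ j ∈ Icc 1 n, 2 * (-1) ^ j *
          (if j ^ 2 ≤ n then (overpartitionCount (n - j ^ 2) : ℚ) else 0) = 0 := by
  have h0 := rec_coeff n (show n ≤ 2 * n from by omega)
  rw [if_neg (by omega), coeff_mul] at h0
  have hterm : ∀ p ∈ antidiagonal n,
      coeff (R := ℚ) p.1 ((partialDistinctGF (2 * n) : PS) * partialAllGF (2 * n)) * coeff (R := ℚ) p.2 Gser
        = (overpartitionCount p.1 : ℚ) * gq p.2 := by
    rintro ⟨a, b⟩ hp
    rw [HasAntidiagonal.mem_antidiagonal] at hp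
    rw [coeff_O (show a ≤ 2 * n from by omega), coeff_Gser]
  rw [Finset.sum_congr rfl hterm, Finset.Nat.sum_antidiagonal_eq_sum_range_succ_mk] at h0
  -- h0 : ∑ k ∈ range (n+1), opc k * gq (n - k) = 0
  set F : ℕ → ℚ := fun k => (overpartitionCount k : ℚ) * gq (n - k) with hF
  have e1 : ∑ k ∈ (Icc 0 (Nat.sqrt n)).image (fun j => n - j ^ 2), F k
      = ∑ k ∈ range (n + 1), F k := by
    apply Finset.sum_subset
    · intro k hk
      rw [Finset.mem_image] at hk
      obtain ⟨j, _, rfl⟩ := hk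
      rw [mem_range]
      omega
    · intro k hk hknot
      rw [mem_range] at hk
      rw [hF]
      simp only
      suffices hgz : gq (n - k) = 0 by rw [hgz, mul_zero]
      by_contra hne
      apply hknot
      rw [Finset.mem_image]
      rw [gq] at hne
      by_cases hz : n - k = 0
      · refine ⟨0, by simp, ?_⟩
        have : (0 : ℕ) ^ 2 = 0 := by norm_num
        omega
      · rw [if_neg hz] at hne
        split_ifs at hne with hsq
        · refine ⟨Nat.sqrt (n - k), ?_, ?_⟩
          · rw [Finset.mem_Icc]
            exact ⟨Nat.zero_le _, Nat.sqrt_le_sqrt (by omega)⟩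
          · rw [hsq]
            omega
        · exact absurd rfl hne
  have e2 : ∑ k ∈ (Icc 0 (Nat.sqrt n)).image (fun j => n - j ^ 2), F k
      = ∑ j ∈ Icc 0 (Nat.sqrt n), F (n - j ^ 2) := by
    apply Finset.sum_image
    intro a ha b hb hab
    rw [Finset.mem_coe, Finset.mem_Icc] at ha hb
    have ha2 : a ^ 2 ≤ n := Nat.le_sqrt'.mp ha.2
    have hb2 : b ^ 2 ≤ n := Nat.le_sqrt'.mp hb.2
    exact sq_inj (by simp only at hab; omega)
  have e3 : ∑ j ∈ Icc 0 (Nat.sqrt n), F (n - j ^ 2)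
      = F n + ∑ j ∈ Icc 1 (Nat.sqrt n), F (n - j ^ 2) := by
    rw [show Icc 0 (Nat.sqrt n) = insert 0 (Icc 1 (Nat.sqrt n)) from by
      ext x; simp only [Finset.mem_Icc, Finset.mem_insert]; omega]
    rw [Finset.sum_insert (by simp)]
    norm_num
  have e4 : ∀ j ∈ Icc 1 (Nat.sqrt n), F (n - j ^ 2)
      = 2 * (-1) ^ j * (if j ^ 2 ≤ n then (overpartitionCount (n - j ^ 2) : ℚ) else 0) := by
    intro j hj
    rw [Finset.mem_Icc] at hj
    have hj2 : j ^ 2 ≤ n := Nat.le_sqrt'.mp hj.2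
    rw [hF]
    simp only
    rw [show n - (n - j ^ 2) = j ^ 2 from by omega, if_pos hj2, gq,
      if_neg (by have := hj.1; positivity), Nat.sqrt_eq', if_pos rfl]
    ring
  have e5 : ∑ j ∈ Icc 1 (Nat.sqrt n),
        (2 * (-1) ^ j * (if j ^ 2 ≤ n then (overpartitionCount (n - j ^ 2) : ℚ) else 0))
      = ∑ j ∈ Icc 1 n,
          2 * (-1) ^ j * (if j ^ 2 ≤ n then (overpartitionCount (n - j ^ 2) : ℚ) else 0) := by
    apply Finset.sum_subset
    · intro j hj
      rw [Finset.mem_Icc] at hj ⊢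
      exact ⟨hj.1, le_trans hj.2 (Nat.sqrt_le_self n)⟩
    · intro j hj hjnot
      rw [Finset.mem_Icc] at hj hjnot
      have : ¬ j ^ 2 ≤ n := by
        intro hc
        exact hjnot ⟨hj.1, Nat.le_sqrt'.mpr hc⟩
      rw [if_neg this, mul_zero]
  have hFn : F n = (overpartitionCount n : ℚ) := by
    rw [hF]
    simp only
    rw [Nat.sub_self, gq, if_pos rfl, mul_one]
  calc (overpartitionCount n : ℚ)
        + ∑ j ∈ Icc 1 n, 2 * (-1) ^ j *
            (if j ^ 2 ≤ n then (overpartitionCount (n - j ^ 2) : ℚ) else 0)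
      = F n + ∑ j ∈ Icc 1 (Nat.sqrt n),
          (2 * (-1) ^ j * (if j ^ 2 ≤ n then (overpartitionCount (n - j ^ 2) : ℚ) else 0)) := by
        rw [hFn, e5]
    _ = F n + ∑ j ∈ Icc 1 (Nat.sqrt n), F (n - j ^ 2) := by
        rw [Finset.sum_congr rfl e4]
    _ = ∑ k ∈ range (n + 1), F k := by rw [← e3, ← e2, e1]
    _ = 0 := h0

/-! ### the recurrence over ℤ and `pbar` -/

lemma pbar_sub_sq (n j : ℕ) :
    pbar ((n : ℤ) - (j : ℤ) ^ 2)
      = if j ^ 2 ≤ n then (overpartitionCount (n - j ^ 2) : ℤ) else 0 := by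
  have hcast : ((j : ℤ)) ^ 2 = ((j ^ 2 : ℕ) : ℤ) := by push_cast; ring
  rw [pbar]
  by_cases h : j ^ 2 ≤ n
  · rw [if_pos (by rw [hcast]; omega), if_pos h]
    have h2 : ((n : ℤ) - (j : ℤ) ^ 2) = ((n - j ^ 2 : ℕ) : ℤ) := by
      rw [hcast]; omega
    rw [h2, Int.toNat_natCast]
  · rw [if_neg (by rw [hcast]; omega), if_neg h]

lemma pbar_nat (m : ℕ) : pbar (m : ℤ) = (overpartitionCount m : ℤ) := by
  rw [pbar, if_pos (Int.natCast_nonneg m), Int.toNat_natCast]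

lemma pbar_nonneg (m : ℤ) : 0 ≤ pbar m := by
  rw [pbar]
  split_ifs
  · exact Int.natCast_nonneg _
  · exact le_rfl

/-- the Gauss recurrence over ℤ -/
theorem rec_z (n : ℕ) (hn : 1 ≤ n) :
    (overpartitionCount n : ℤ)
      + 2 * ∑ j ∈ Icc 1 n, (-1) ^ j * pbar ((n : ℤ) - (j : ℤ) ^ 2) = 0 := by
  have hq := rec_q n hn
  have hsum : ∀ j ∈ Icc 1 n,
      (2 : ℚ) * (-1) ^ j * (if j ^ 2 ≤ n then (overpartitionCount (n - j ^ 2) : ℚ) else 0)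
        = 2 * (-1) ^ j * ((pbar ((n : ℤ) - (j : ℤ) ^ 2) : ℤ) : ℚ) := by
    intro j _
    rw [pbar_sub_sq]
    split_ifs
    · push_cast; ring
    · push_cast; ring
  rw [Finset.sum_congr rfl hsum] at hq
  rw [show (∑ j ∈ Icc 1 n, (2 : ℚ) * (-1) ^ j * ((pbar ((n : ℤ) - (j : ℤ) ^ 2) : ℤ) : ℚ))
      = 2 * ∑ j ∈ Icc 1 n, (-1) ^ j * ((pbar ((n : ℤ) - (j : ℤ) ^ 2) : ℤ) : ℚ) from by
    rw [Finset.mul_sum]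
    exact Finset.sum_congr rfl (fun j _ => by ring)] at hq
  exact_mod_cast hq

/-! ### monotonicity of the counting functions -/

lemma partitionCount_mono (b : ℕ) : partitionCount b ≤ partitionCount (b + 1) := by
  rw [partitionCount, partitionCount]
  apply Fintype.card_le_of_injective
    (fun p => ⟨1 ::ₘ p.parts,
      fun hi => by
        rcases Multiset.mem_cons.mp hi with h | h
        · omega
        · exact p.parts_pos h,
      by rw [Multiset.sum_cons, p.parts_sum, add_comm]⟩)
  intro p q h
  apply Nat.Partition.ext
  have h2 := congrArg Nat.Partition.parts h
  simp only at h2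
  exact (Multiset.cons_inj_right 1).mp h2

lemma partitionCount_pos (b : ℕ) : 1 ≤ partitionCount b := by
  rw [partitionCount]
  exact Fintype.card_pos

lemma distincts_pos (m : ℕ) : 1 ≤ (Nat.Partition.distincts m).card := by
  apply Finset.card_pos.mpr
  refine ⟨Nat.Partition.indiscrete m, ?_⟩
  rw [Nat.Partition.distincts, Finset.mem_filter]
  refine ⟨Finset.mem_univ _, ?_⟩
  rcases Nat.eq_zero_or_pos m with rfl | hm
  · have h : (Nat.Partition.indiscrete 0).parts = (0 : Multiset ℕ) := by
      have h2 : Nat.Partition.indiscrete 0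
          = ⟨0, fun hi => absurd hi (Multiset.notMem_zero _), rfl⟩ := Subsingleton.elim _ _
      rw [h2]
    rw [h]
    exact Multiset.nodup_zero
  · rw [Nat.Partition.indiscrete_parts (by omega)]
    exact Multiset.nodup_singleton _

lemma opc_lt_succ (m : ℕ) : overpartitionCount m < overpartitionCount (m + 1) := by
  rw [overpartitionCount, overpartitionCount, Finset.Nat.antidiagonal_succ' m,
    Finset.sum_cons, Finset.sum_map]
  have h1 : 1 ≤ (Nat.Partition.distincts (m + 1)).card * partitionCount 0 :=
    Nat.one_le_iff_ne_zero.mpr (Nat.mul_ne_zero (by have := distincts_pos (m+1); omega)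
      (by have := partitionCount_pos 0; omega))
  have h2 : ∑ x ∈ antidiagonal m, (Nat.Partition.distincts x.1).card * partitionCount x.2
      ≤ ∑ x ∈ antidiagonal m,
          (Nat.Partition.distincts
            ((Function.Embedding.prodMap (Function.Embedding.refl ℕ)
              ⟨Nat.succ, Nat.succ_injective⟩) x).1).card *
            partitionCount ((Function.Embedding.prodMap (Function.Embedding.refl ℕ)
              ⟨Nat.succ, Nat.succ_injective⟩) x).2 := by
    refine Finset.sum_le_sum ?_
    rintro ⟨a, b⟩ _
    simp only [Function.Embedding.coe_prodMap, Function.Embedding.coeFn_mk,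
      Function.Embedding.refl_apply, Prod.map_apply]
    exact Nat.mul_le_mul_left _ (partitionCount_mono b)
  have hd : (Nat.Partition.distincts ((m + 1 : ℕ), (0 : ℕ)).1).card
      * partitionCount ((m + 1 : ℕ), (0 : ℕ)).2
      = (Nat.Partition.distincts (m + 1)).card * partitionCount 0 := rfl
  rw [hd]
  omega

lemma opc_strictMono : StrictMono overpartitionCount :=
  strictMono_nat_of_lt_succ opc_lt_succ

lemma opc_pos (m : ℕ) : 1 ≤ overpartitionCount m := by
  have h0 : 1 ≤ overpartitionCount 0 := by
    rw [overpartitionCount, Finset.Nat.antidiagonal_zero, Finset.sum_singleton]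
    show 1 ≤ (Nat.Partition.distincts 0).card * partitionCount 0
    exact Nat.one_le_iff_ne_zero.mpr (Nat.mul_ne_zero (by have := distincts_pos 0; omega)
      (by have := partitionCount_pos 0; omega))
  exact le_trans h0 (opc_strictMono.monotone (Nat.zero_le m))

lemma pbar_mono {a b : ℤ} (h : a ≤ b) : pbar a ≤ pbar b := by
  rw [pbar, pbar]
  split_ifs with h1 h2 h2
  · exact_mod_cast opc_strictMono.monotone (Int.toNat_le_toNat h)
  · exact absurd (le_trans h1 h) h2
  · exact Int.natCast_nonneg _
  · exact le_rfl

/-! ### alternating sums of a monotone sequence -/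

lemma alt_peel (u : ℕ → ℤ) (m a : ℕ) :
    ∑ i ∈ range (m + 1), (-1) ^ i * u (a + i)
      = u a - ∑ i ∈ range m, (-1) ^ i * u ((a + 1) + i) := by
  rw [Finset.sum_range_succ']
  have hterm : ∀ i, ((-1 : ℤ)) ^ (i + 1) * u (a + (i + 1))
      = -(((-1 : ℤ)) ^ i * u ((a + 1) + i)) := by
    intro i
    rw [pow_succ, show a + (i + 1) = (a + 1) + i from by omega]
    ring
  rw [Finset.sum_congr rfl (fun i _ => hterm i), Finset.sum_neg_distrib]
  simp only [pow_zero, one_mul, Nat.add_zero]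
  ring

lemma alt_bounds (u : ℕ → ℤ) (hnn : ∀ j, 0 ≤ u j) (hmono : ∀ j, u (j + 1) ≤ u j) :
    ∀ m a, 0 ≤ ∑ i ∈ range m, (-1) ^ i * u (a + i) ∧
      ∑ i ∈ range m, (-1) ^ i * u (a + i) ≤ u a := by
  intro m
  induction m with
  | zero => exact fun a => ⟨by simp, by simp [hnn a]⟩
  | succ m ih =>
    intro a
    obtain ⟨h1, h2⟩ := ih (a + 1)
    rw [alt_peel]
    constructor
    · have := hmono a
      linarith
    · linarith

lemma alt_pos (u : ℕ → ℤ) (hnn : ∀ j, 0 ≤ u j) (hmono : ∀ j, u (j + 1) ≤ u j)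
    {a m : ℕ} (h : u (a + 1) < u a) :
    0 < ∑ i ∈ range (m + 1), (-1) ^ i * u (a + i) := by
  obtain ⟨h1, h2⟩ := alt_bounds u hnn hmono m (a + 1)
  rw [alt_peel]
  linarith

end
end TGO

theorem truncated_gauss_overpartition_ineq (n k : ℕ) (hn : 1 ≤ n) (hk : 1 ≤ k) :
    0 ≤ (-1 : ℤ) ^ k *
      (pbar n + 2 * ∑ j ∈ Finset.Icc 1 k, (-1 : ℤ) ^ j * pbar ((n : ℤ) - (j : ℤ) ^ 2)) ∧
    (((k : ℤ) + 1) ^ 2 ≤ (n : ℤ) →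
      0 < (-1 : ℤ) ^ k *
        (pbar n + 2 * ∑ j ∈ Finset.Icc 1 k, (-1 : ℤ) ^ j * pbar ((n : ℤ) - (j : ℤ) ^ 2))) := by
  have hmono : ∀ j : ℕ, pbar ((n : ℤ) - ((j + 1 : ℕ) : ℤ) ^ 2) ≤ pbar ((n : ℤ) - (j : ℤ) ^ 2) := by
    intro j
    apply TGO.pbar_mono
    have h0 : (0 : ℤ) ≤ (j : ℤ) := Int.natCast_nonneg j
    push_cast
    nlinarith
  have hTn : pbar (n : ℤ)
      + 2 * ∑ j ∈ Finset.Icc 1 (n + k), (-1 : ℤ) ^ j * pbar ((n : ℤ) - (j : ℤ) ^ 2) = 0 := by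
    have hz := TGO.rec_z n hn
    rw [TGO.pbar_nat]
    have hext : ∑ j ∈ Finset.Icc 1 (n + k), (-1 : ℤ) ^ j * pbar ((n : ℤ) - (j : ℤ) ^ 2)
        = ∑ j ∈ Finset.Icc 1 n, (-1 : ℤ) ^ j * pbar ((n : ℤ) - (j : ℤ) ^ 2) := by
      symm
      apply Finset.sum_subset (Finset.Icc_subset_Icc_right (by omega))
      intro j hj hjn
      rw [Finset.mem_Icc] at hj hjn
      have hcast : ((j : ℤ)) ^ 2 = ((j ^ 2 : ℕ) : ℤ) := by push_cast; ring
      have hj2 : n < j ^ 2 := by nlinarith [hj.1, hj.2, (by omega : n + 1 ≤ j)]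
      have hz2 : pbar ((n : ℤ) - (j : ℤ) ^ 2) = 0 := by
        rw [pbar, if_neg]
        intro hc0
        rw [hcast] at hc0
        omega
      rw [hz2, mul_zero]
    rw [hext]
    exact hz
  have hsplit : ∑ j ∈ Finset.Icc 1 (n + k), (-1 : ℤ) ^ j * pbar ((n : ℤ) - (j : ℤ) ^ 2)
      = (∑ j ∈ Finset.Icc 1 k, (-1 : ℤ) ^ j * pbar ((n : ℤ) - (j : ℤ) ^ 2))
        + ∑ j ∈ Finset.Icc (k + 1) (n + k), (-1 : ℤ) ^ j * pbar ((n : ℤ) - (j : ℤ) ^ 2) := by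
    have hun : Finset.Icc 1 (n + k) = Finset.Icc 1 k ∪ Finset.Icc (k + 1) (n + k) := by
      ext x
      simp only [Finset.mem_Icc, Finset.mem_union]
      omega
    have hdis : Disjoint (Finset.Icc 1 k) (Finset.Icc (k + 1) (n + k)) := by
      rw [Finset.disjoint_left]
      intro x hx hx2
      rw [Finset.mem_Icc] at hx hx2
      omega
    rw [hun, Finset.sum_union hdis]
  set S : ℤ := ∑ i ∈ Finset.range n, (-1 : ℤ) ^ i * pbar ((n : ℤ) - ((k + 1 + i : ℕ) : ℤ) ^ 2)
    with hS
  have hIcc : ∑ j ∈ Finset.Icc (k + 1) (n + k), (-1 : ℤ) ^ j * pbar ((n : ℤ) - (j : ℤ) ^ 2)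
      = (-1) ^ (k + 1) * S := by
    rw [hS, ← Finset.Ico_add_one_right_eq_Icc, Finset.sum_Ico_eq_sum_range,
      show n + k + 1 - (k + 1) = n from by omega, Finset.mul_sum]
    refine Finset.sum_congr rfl (fun i _ => ?_)
    rw [show k + 1 + i = (k + 1) + i from rfl, pow_add]
    ring
  have hotimes : (-1 : ℤ) ^ k * (-1 : ℤ) ^ (k + 1) = -1 := by
    rw [← pow_add]
    exact Odd.neg_one_pow ⟨k, by ring⟩
  have hE : (-1 : ℤ) ^ k *
      (pbar n + 2 * ∑ j ∈ Finset.Icc 1 k, (-1 : ℤ) ^ j * pbar ((n : ℤ) - (j : ℤ) ^ 2))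
        = 2 * S := by
    rw [hsplit, hIcc] at hTn
    have h1 : pbar (n : ℤ) + 2 * ∑ j ∈ Finset.Icc 1 k, (-1 : ℤ) ^ j * pbar ((n : ℤ) - (j : ℤ) ^ 2)
        = -2 * ((-1) ^ (k + 1) * S) := by linarith [hTn]
    rw [h1, show (-1 : ℤ) ^ k * (-2 * ((-1) ^ (k + 1) * S))
      = -2 * ((-1 : ℤ) ^ k * (-1 : ℤ) ^ (k + 1)) * S from by ring, hotimes]
    ring
  have halt := TGO.alt_bounds (fun j => pbar ((n : ℤ) - (j : ℤ) ^ 2))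
    (fun j => TGO.pbar_nonneg _) hmono n (k + 1)
  obtain ⟨hge, -⟩ := halt
  constructor
  · rw [hE]
    rw [hS]
    linarith [hge]
  · intro hk2
    have hk2' : (k + 1) ^ 2 ≤ n := by
      have h3 : (((k + 1) ^ 2 : ℕ) : ℤ) ≤ (n : ℤ) := by push_cast; exact hk2
      exact_mod_cast h3
    have hult : pbar ((n : ℤ) - ((k + 1 + 1 : ℕ) : ℤ) ^ 2)
        < pbar ((n : ℤ) - ((k + 1 : ℕ) : ℤ) ^ 2) := by
      have e1 : pbar ((n : ℤ) - ((k + 1 : ℕ) : ℤ) ^ 2)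
          = (overpartitionCount (n - (k + 1) ^ 2) : ℤ) := by
        rw [TGO.pbar_sub_sq n (k + 1), if_pos hk2']
      have e2 : pbar ((n : ℤ) - ((k + 1 + 1 : ℕ) : ℤ) ^ 2)
          = if (k + 1 + 1) ^ 2 ≤ n then (overpartitionCount (n - (k + 1 + 1) ^ 2) : ℤ) else 0 :=
        TGO.pbar_sub_sq n (k + 1 + 1)
      rw [e1, e2]
      split_ifs with hcase
      · have hlt : n - (k + 1 + 1) ^ 2 < n - (k + 1) ^ 2 := by
          have : (k + 1) ^ 2 < (k + 1 + 1) ^ 2 := by nlinarith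
          omega
        exact_mod_cast TGO.opc_strictMono hlt
      · exact_mod_cast TGO.opc_pos (n - (k + 1) ^ 2)
    have hpos := TGO.alt_pos (fun j => pbar ((n : ℤ) - (j : ℤ) ^ 2))
      (fun j => TGO.pbar_nonneg _) hmono (a := k + 1) (m := n - 1) hult
    rw [show n - 1 + 1 = n from by omega] at hpos
    rw [hE, hS]
    linarith [hpos]
end

section
/- For |q| < 1 and every integer k ≥ 1, ((-q;q)_∞/(q;q)_∞) · (1 + 2 ∑_{j=1}^{k} (-1)^j q^{j²}) = 1 + (-1)^k ∑_{n=k+1}^{∞} ((-q;q)_k (-1;q)_{n-k} q^{(k+1)n} / (q;q)_n) · [n-1 choose k]_q, as an identity of formal power series (equivalently, of analytic functions for |q|<1). -/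
/-- infinite q-Pochhammer symbol `(a;q)_∞` -/
noncomputable def qPochInf (a q : ℂ) : ℂ := ∏' n : ℕ, (1 - a * q ^ n)

/-- finite q-Pochhammer symbol `(a;q)_m` -/
def qPoch (a q : ℂ) (m : ℕ) : ℂ := ∏ i ∈ Finset.range m, (1 - a * q ^ i)

/-- Gaussian binomial coefficient `[M choose N]_q` -/
noncomputable def qBinom (q : ℂ) (M N : ℕ) : ℂ :=
  qPoch q q M / (qPoch q q N * qPoch q q (M - N))

namespace TGS
variable {q : ℂ}

noncomputable def cc (q : ℂ) (m : ℕ) : ℂ := qPoch (-1) q m / qPoch q q m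
noncomputable def SS (q : ℂ) (j : ℕ) : ℂ := ∑' m : ℕ, cc q m * (q ^ j) ^ m
noncomputable def ff (q : ℂ) (k i : ℕ) : ℂ :=
  qPoch (-q) q k * qPoch (-1) q (i+1) * q ^ ((k+1)*(i+k+1)) / qPoch q q (i+k+1)
    * qBinom q (i+k) k
lemma norm_pow_lt (hq : ‖q‖ < 1) {n : ℕ} (hn : n ≠ 0) : ‖q ^ n‖ < 1 := by
  rw [norm_pow]
  calc ‖q‖ ^ n ≤ ‖q‖ ^ 1 := pow_le_pow_of_le_one (norm_nonneg q) hq.le (Nat.one_le_iff_ne_zero.2 hn)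
  _ = ‖q‖ := pow_one _
  _ < 1 := hq

lemma one_sub_pow_ne (hq : ‖q‖ < 1) {n : ℕ} (hn : n ≠ 0) : (1 : ℂ) - q ^ n ≠ 0 := by
  intro h
  have h1 : q ^ n = 1 := by linear_combination -h
  have := norm_pow_lt hq hn
  rw [h1] at this
  simp at this

lemma one_add_pow_ne (hq : ‖q‖ < 1) (n : ℕ) : (1 : ℂ) + q ^ n ≠ 0 := by
  rcases Nat.eq_zero_or_pos n with h | h
  · subst h; norm_num
  · intro h2
    have h1 : q ^ n = -1 := by linear_combination h2
    have h3 := norm_pow_lt hq h.ne'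
    rw [h1] at h3
    simp at h3

lemma qPoch_succ (a : ℂ) (m : ℕ) : qPoch a q (m + 1) = qPoch a q m * (1 - a * q ^ m) :=
  Finset.prod_range_succ _ _

lemma qPoch_q_ne (hq : ‖q‖ < 1) (m : ℕ) : qPoch q q m ≠ 0 := by
  rw [qPoch, Finset.prod_ne_zero_iff]
  intro i _
  have : q * q ^ i = q ^ (i + 1) := by ring
  rw [this]
  exact one_sub_pow_ne hq i.succ_ne_zero

lemma cc_zero : cc q 0 = 1 := by simp [cc, qPoch]

lemma cc_rec (hq : ‖q‖ < 1) (m : ℕ) :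
    cc q (m + 1) * (1 - q ^ (m + 1)) = cc q m * (1 + q ^ m) := by
  have h1 : qPoch q q (m+1) = qPoch q q m * (1 - q ^ (m+1)) := by
    rw [qPoch_succ]; ring_nf
  have h2 : qPoch (-1) q (m+1) = qPoch (-1) q m * (1 + q ^ m) := by
    rw [qPoch_succ]; ring_nf
  rw [cc, cc, h1, h2]
  have hm := qPoch_q_ne hq m
  have hs : (1:ℂ) - q ^ (m+1) ≠ 0 := one_sub_pow_ne hq m.succ_ne_zero
  field_simp

lemma cc_rec' (hq : ‖q‖ < 1) (m : ℕ) :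
    cc q (m + 1) = cc q m * (1 + q ^ m) / (1 - q ^ (m + 1)) := by
  rw [← cc_rec hq m]
  field_simp [one_sub_pow_ne hq m.succ_ne_zero]

lemma summable_norm_cc (hq : ‖q‖ < 1) {z : ℂ} (hz : ‖z‖ < 1) :
    Summable (fun m : ℕ => ‖cc q m * z ^ m‖) := by
  set r : ℝ := (1 + ‖z‖) / 2 with hr
  have hr1 : r < 1 := by rw [hr]; linarith
  apply summable_of_ratio_norm_eventually_le hr1
  have htend : Filter.Tendsto (fun m : ℕ => ‖z‖ * ((1 + ‖q‖ ^ m) / (1 - ‖q‖ ^ (m+1))))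
      Filter.atTop (nhds (‖z‖ * ((1 + 0) / (1 - 0)))) := by
    apply Filter.Tendsto.const_mul
    apply Filter.Tendsto.div
    · exact (tendsto_pow_atTop_nhds_zero_of_lt_one (norm_nonneg q) hq).const_add 1
    · have : Filter.Tendsto (fun m : ℕ => ‖q‖ ^ (m+1)) Filter.atTop (nhds 0) :=
        (tendsto_pow_atTop_nhds_zero_of_lt_one (norm_nonneg q) hq).comp
          (Filter.tendsto_add_atTop_nat 1)
      simpa using this.const_sub 1
    · norm_num
  have hlt : ‖z‖ * (((1:ℝ) + 0) / (1 - 0)) < r := by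
    have hz' := hz
    rw [hr]
    norm_num
    linarith
  filter_upwards [htend.eventually_lt_const hlt] with m hm
  have hs : (1:ℂ) - q ^ (m+1) ≠ 0 := one_sub_pow_ne hq m.succ_ne_zero
  have e1 : cc q (m+1) * z^(m+1) = (cc q m * z^m) * (z * ((1+q^m)/(1-q^(m+1)))) := by
    rw [cc_rec' hq]
    field_simp
    ring
  have hposq : (0:ℝ) < 1 - ‖q‖ ^ (m+1) := by
    have : ‖q‖ ^ (m+1) < 1 := pow_lt_one₀ (norm_nonneg q) hq m.succ_ne_zero
    linarith
  have hden : 1 - ‖q‖ ^ (m+1) ≤ ‖1 - q^(m+1)‖ := by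
    have := norm_sub_norm_le (1:ℂ) (q^(m+1))
    simpa [norm_pow] using this
  have hnum : ‖(1:ℂ) + q^m‖ ≤ 1 + ‖q‖^m := by
    calc ‖(1:ℂ) + q^m‖ ≤ ‖(1:ℂ)‖ + ‖q^m‖ := norm_add_le _ _
    _ = 1 + ‖q‖^m := by simp [norm_pow]
  have hb : ‖z * ((1+q^m)/(1-q^(m+1)))‖ ≤ ‖z‖ * ((1 + ‖q‖^m)/(1 - ‖q‖^(m+1))) := by
    rw [norm_mul, norm_div]
    apply mul_le_mul_of_nonneg_left _ (norm_nonneg z)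
    exact div_le_div₀ (by positivity) hnum hposq hden
  have key : ‖cc q (m+1) * z^(m+1)‖ ≤ r * ‖cc q m * z^m‖ := by
    rw [e1, norm_mul]
    calc ‖cc q m * z ^ m‖ * ‖z * ((1+q^m)/(1-q^(m+1)))‖
        ≤ ‖cc q m * z ^ m‖ * r :=
          mul_le_mul_of_nonneg_left (le_of_lt (lt_of_le_of_lt hb hm)) (norm_nonneg _)
    _ = r * ‖cc q m * z ^ m‖ := mul_comm _ _
  simpa [Real.norm_of_nonneg, norm_nonneg, abs_of_nonneg] using key

lemma summable_cc (hq : ‖q‖ < 1) {z : ℂ} (hz : ‖z‖ < 1) :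
    Summable (fun m : ℕ => cc q m * z ^ m) :=
  (summable_norm_cc hq hz).of_norm

lemma feq (hq : ‖q‖ < 1) (j : ℕ) :
    (1 - q ^ (j+1)) * SS q (j+1) = (1 + q ^ (j+1)) * SS q (j+2) := by
  have hz : ‖q ^ (j+1)‖ < 1 := norm_pow_lt hq j.succ_ne_zero
  have hz2 : ‖q ^ (j+2)‖ < 1 := norm_pow_lt hq (j+1).succ_ne_zero
  have hs1 : Summable (fun m : ℕ => cc q m * (q ^ (j+1)) ^ m) := summable_cc hq hz
  have hs2 : Summable (fun m : ℕ => cc q m * (q ^ (j+2)) ^ m) := summable_cc hq hz2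
  set A : ℕ → ℂ := fun m => cc q m * (q ^ (j+1)) ^ m with hA
  set B : ℕ → ℂ := fun m => cc q m * (q ^ (j+2)) ^ m with hB
  have hAB : Summable (fun m => A m - B m) := hs1.sub hs2
  have key : ∀ m : ℕ, A (m+1) - B (m+1) = q^(j+1) * A m + q^(j+1) * B m := by
    intro m
    simp only [hA, hB]
    linear_combination ((q:ℂ)^(j+1))^(m+1) * cc_rec hq m
  have main : ∑' m, (A m - B m) = q^(j+1) * ∑' m, A m + q^(j+1) * ∑' m, B m := by
    rw [Summable.tsum_eq_zero_add hAB]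
    have e0 : A 0 - B 0 = 0 := by simp [hA, hB]
    rw [e0, zero_add]
    calc ∑' m, (A (m+1) - B (m+1)) = ∑' m, (q^(j+1) * A m + q^(j+1) * B m) :=
          tsum_congr key
    _ = (∑' m, q^(j+1) * A m) + ∑' m, q^(j+1) * B m :=
          Summable.tsum_add (hs1.mul_left _) (hs2.mul_left _)
    _ = q^(j+1) * ∑' m, A m + q^(j+1) * ∑' m, B m := by
          rw [tsum_mul_left, tsum_mul_left]
  have hsub : ∑' m, (A m - B m) = (∑' m, A m) - ∑' m, B m := Summable.tsum_sub hs1 hs2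
  have hSS1 : SS q (j+1) = ∑' m, A m := rfl
  have hSS2 : SS q (j+2) = ∑' m, B m := rfl
  rw [hSS1, hSS2]
  rw [hsub] at main
  linear_combination main

lemma invariant (hq : ‖q‖ < 1) (K : ℕ) :
    qPoch (-q) q K * SS q (K+1) = qPoch q q K * SS q 1 := by
  induction K with
  | zero => simp [qPoch]
  | succ n ih =>
      have h1 : qPoch (-q) q (n+1) = qPoch (-q) q n * (1 + q ^ (n+1)) := by
        rw [qPoch_succ]; ring_nf
      have h2 : qPoch q q (n+1) = qPoch q q n * (1 - q ^ (n+1)) := by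
        rw [qPoch_succ]; ring_nf
      rw [h1, h2]
      have hf := feq hq n
      calc qPoch (-q) q n * (1 + q ^ (n+1)) * SS q (n+1+1)
          = qPoch (-q) q n * ((1 + q ^ (n+1)) * SS q (n+2)) := by ring
        _ = qPoch (-q) q n * ((1 - q ^ (n+1)) * SS q (n+1)) := by rw [← hf]
        _ = (1 - q ^ (n+1)) * (qPoch (-q) q n * SS q (n+1)) := by ring
        _ = (1 - q ^ (n+1)) * (qPoch q q n * SS q 1) := by rw [ih]
        _ = qPoch q q n * (1 - q ^ (n+1)) * SS q 1 := by ring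
lemma summable_log (hq : ‖q‖ < 1) {a : ℂ} (ha : ‖a‖ ≤ 1) :
    Summable (fun n : ℕ => Complex.log (1 - a * q ^ n)) := by
  have hgeo : Summable (fun n : ℕ => (3/2 : ℝ) * ‖q‖ ^ n) :=
    (summable_geometric_of_lt_one (norm_nonneg q) hq).mul_left _
  apply hgeo.of_norm_bounded_eventually_nat
  have htend : Filter.Tendsto (fun n : ℕ => ‖a * q ^ n‖) Filter.atTop (nhds 0) := by
    have : Filter.Tendsto (fun n : ℕ => ‖q‖ ^ n) Filter.atTop (nhds 0) :=
      tendsto_pow_atTop_nhds_zero_of_lt_one (norm_nonneg q) hq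
    simpa [norm_mul, norm_pow] using this.const_mul ‖a‖
  filter_upwards [htend.eventually_le_const (by norm_num : (0:ℝ) < 1/2)] with n hn
  have h1 : (1 : ℂ) - a * q ^ n = 1 + (-(a * q ^ n)) := by ring
  rw [h1]
  calc ‖Complex.log (1 + -(a * q ^ n))‖ ≤ 3/2 * ‖-(a * q ^ n)‖ :=
        Complex.norm_log_one_add_half_le_self (by simpa using hn)
  _ ≤ 3/2 * ‖q‖ ^ n := by
      rw [norm_neg, norm_mul, norm_pow]
      have : ‖a‖ * ‖q‖ ^ n ≤ 1 * ‖q‖ ^ n := by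
        apply mul_le_mul_of_nonneg_right ha (by positivity)
      nlinarith [pow_nonneg (norm_nonneg q) n]

lemma qPochInf_eq_exp (hq : ‖q‖ < 1) {a : ℂ} (ha : ‖a‖ ≤ 1)
    (h0 : ∀ n : ℕ, (1 : ℂ) - a * q ^ n ≠ 0) :
    qPochInf a q = Complex.exp (∑' n : ℕ, Complex.log (1 - a * q ^ n)) := by
  have h2 := Complex.cexp_tsum_eq_tprod (f := fun n : ℕ => 1 - a * q ^ n)
    h0 (summable_log hq ha)
  simpa [qPochInf] using h2.symm

lemma qPochInf_ne_zero (hq : ‖q‖ < 1) {a : ℂ} (ha : ‖a‖ ≤ 1)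
    (h0 : ∀ n : ℕ, (1 : ℂ) - a * q ^ n ≠ 0) : qPochInf a q ≠ 0 := by
  rw [qPochInf_eq_exp hq ha h0]; exact Complex.exp_ne_zero _

lemma tendsto_qPoch (hq : ‖q‖ < 1) {a : ℂ} (ha : ‖a‖ ≤ 1)
    (h0 : ∀ n : ℕ, (1 : ℂ) - a * q ^ n ≠ 0) :
    Filter.Tendsto (fun m => qPoch a q m) Filter.atTop (nhds (qPochInf a q)) := by
  have hm : Multipliable (fun n : ℕ => 1 - a * q ^ n) :=
    Complex.multipliable_of_summable_log (summable_log hq ha)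
  exact hm.hasProd.tendsto_prod_nat

lemma tendsto_SS (hq : ‖q‖ < 1) :
    Filter.Tendsto (fun j : ℕ => SS q (j+1)) Filter.atTop (nhds 1) := by
  have hsM : Summable (fun m : ℕ => ‖cc q (m+1) * q ^ (m+1)‖) :=
    (summable_nat_add_iff (f := fun m : ℕ => ‖cc q m * q ^ m‖) 1).2
      (summable_norm_cc hq (z := q) hq)
  set M : ℝ := ∑' m : ℕ, ‖cc q (m+1) * q ^ (m+1)‖ with hM
  have hMnn : 0 ≤ M := tsum_nonneg fun m => norm_nonneg _
  have hbound : ∀ j : ℕ, ‖SS q (j+1) - 1‖ ≤ ‖q‖ ^ j * M := by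
    intro j
    have hz : ‖q ^ (j+1)‖ < 1 := norm_pow_lt hq j.succ_ne_zero
    have hs : Summable (fun m : ℕ => cc q m * (q ^ (j+1)) ^ m) :=
      (summable_norm_cc hq hz).of_norm
    have h1 : SS q (j+1) - 1 = ∑' m : ℕ, cc q (m+1) * (q ^ (j+1)) ^ (m+1) := by
      rw [SS, Summable.tsum_eq_zero_add hs]
      simp [cc_zero]
    rw [h1]
    have hsn : Summable (fun m : ℕ => ‖cc q (m+1) * (q ^ (j+1)) ^ (m+1)‖) :=
      (summable_nat_add_iff 1).2 (summable_norm_cc hq hz)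
    calc ‖∑' m : ℕ, cc q (m+1) * (q ^ (j+1)) ^ (m+1)‖
        ≤ ∑' m : ℕ, ‖cc q (m+1) * (q ^ (j+1)) ^ (m+1)‖ := norm_tsum_le_tsum_norm hsn
      _ ≤ ∑' m : ℕ, ‖q‖ ^ j * ‖cc q (m+1) * q ^ (m+1)‖ := by
          apply Summable.tsum_le_tsum _ hsn (hsM.mul_left _)
          intro m
          rw [norm_mul, norm_mul, norm_pow, norm_pow, norm_pow]
          have key : ‖q‖ ^ ((j+1) * (m+1)) ≤ ‖q‖ ^ j * ‖q‖ ^ (m+1) := by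
            rw [← pow_add]
            apply pow_le_pow_of_le_one (norm_nonneg q) hq.le
            nlinarith
          calc ‖cc q (m+1)‖ * (‖q‖ ^ (j+1)) ^ (m+1)
              = ‖cc q (m+1)‖ * ‖q‖ ^ ((j+1)*(m+1)) := by rw [← pow_mul]
            _ ≤ ‖cc q (m+1)‖ * (‖q‖ ^ j * ‖q‖ ^ (m+1)) :=
                mul_le_mul_of_nonneg_left key (norm_nonneg _)
            _ = ‖q‖ ^ j * (‖cc q (m+1)‖ * ‖q‖ ^ (m+1)) := by ring
      _ = ‖q‖ ^ j * M := by rw [tsum_mul_left]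
  have step : Filter.Tendsto (fun j : ℕ => SS q (j+1) - 1) Filter.atTop (nhds 0) := by
    rw [tendsto_zero_iff_norm_tendsto_zero]
    apply squeeze_zero (fun j => norm_nonneg _) hbound
    have := (tendsto_pow_atTop_nhds_zero_of_lt_one (norm_nonneg q) hq).mul_const M
    simpa using this
  have := step.add_const 1
  simpa using this

lemma Seval (hq : ‖q‖ < 1) : qPochInf q q * SS q 1 = qPochInf (-q) q := by
  have h0q : ∀ n : ℕ, (1 : ℂ) - q * q ^ n ≠ 0 := by
    intro n
    have : q * q ^ n = q ^ (n+1) := by ring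
    rw [this]; exact one_sub_pow_ne hq n.succ_ne_zero
  have h0nq : ∀ n : ℕ, (1 : ℂ) - (-q) * q ^ n ≠ 0 := by
    intro n
    have : (1:ℂ) - (-q) * q ^ n = 1 + q ^ (n+1) := by ring
    rw [this]; exact one_add_pow_ne hq (n+1)
  have t1 : Filter.Tendsto (fun K : ℕ => qPoch (-q) q K * SS q (K+1))
      Filter.atTop (nhds (qPochInf (-q) q * 1)) :=
    (tendsto_qPoch hq (by simpa using hq.le) h0nq).mul (tendsto_SS hq)
  have t2 : Filter.Tendsto (fun K : ℕ => qPoch q q K * SS q 1)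
      Filter.atTop (nhds (qPochInf q q * SS q 1)) :=
    (tendsto_qPoch hq hq.le h0q).mul_const _
  have heq : (fun K : ℕ => qPoch (-q) q K * SS q (K+1))
      = fun K : ℕ => qPoch q q K * SS q 1 := funext fun K => invariant hq K
  rw [heq] at t1
  have := tendsto_nhds_unique t1 t2
  rw [mul_one] at this
  exact this.symm
lemma qPoch_q_succ (m : ℕ) : qPoch q q (m + 1) = qPoch q q m * (1 - q ^ (m+1)) := by
  rw [qPoch_succ]; ring_nf

lemma qPoch_negq_succ (m : ℕ) : qPoch (-q) q (m + 1) = qPoch (-q) q m * (1 + q ^ (m+1)) := by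
  rw [qPoch_succ]; ring_nf

lemma f_closed (hq : ‖q‖ < 1) (k i : ℕ) :
    ff q k i = (qPoch (-q) q k / qPoch q q k) * q ^ (k*(k+1))
      * (cc q (i+1) * (q ^ (k+1)) ^ (i+1)) * (1 - q ^ (i+1)) / (1 - q ^ (i+k+1)) := by
  rw [ff, qBinom]
  have e1 : i + k - k = i := by omega
  rw [e1]
  have e2 : qPoch q q (i+k+1) = qPoch q q (i+k) * (1 - q ^ (i+k+1)) := qPoch_q_succ _
  rw [e2, cc]
  have e3 : qPoch q q (i+1) = qPoch q q i * (1 - q ^ (i+1)) := qPoch_q_succ _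
  rw [e3]
  have h1 := qPoch_q_ne hq k
  have h2 := qPoch_q_ne hq i
  have h3 := qPoch_q_ne hq (i+k)
  have h4 : (1:ℂ) - q ^ (i+1) ≠ 0 := one_sub_pow_ne hq (by omega)
  have h5 : (1:ℂ) - q ^ (i+k+1) ≠ 0 := one_sub_pow_ne hq (by omega)
  field_simp
  ring_nf

lemma step_term (hq : ‖q‖ < 1) (K i : ℕ) :
    ff q (K+1) i + ff q K (i+1)
      = (qPoch (-q) q K / qPoch q q K) * q ^ ((K+1)^2) / (1 - q ^ (K+1)) *
        ((1 - q ^ (K+1)) * (cc q (i+1) * (q ^ (K+1)) ^ (i+1))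
          + (1 + q ^ (K+1)) * (cc q (i+1) * (q ^ (K+2)) ^ (i+1))) := by
  rw [f_closed hq (K+1) i, f_closed hq K (i+1)]
  rw [qPoch_negq_succ, qPoch_q_succ]
  rw [show i + 1 + 1 = i + 2 by omega, cc_rec' hq (i+1)]
  have h1 := qPoch_q_ne hq K
  have h4 : (1:ℂ) - q ^ (K+1) ≠ 0 := one_sub_pow_ne hq (by omega)
  have h5 : (1:ℂ) - q ^ (i+(K+1)+1) ≠ 0 := one_sub_pow_ne hq (by omega)
  have h6 : (1:ℂ) - q ^ (i+1+K+1) ≠ 0 := one_sub_pow_ne hq (by omega)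
  have h7 : (1:ℂ) - q ^ (i+2) ≠ 0 := one_sub_pow_ne hq (by omega)
  have h8 : (1:ℂ) - q ^ (i+1) ≠ 0 := one_sub_pow_ne hq (by omega)
  field_simp
  ring

lemma fK0 (hq : ‖q‖ < 1) (K : ℕ) :
    ff q K 0 = (qPoch (-q) q K / qPoch q q K) * q ^ ((K+1)^2) / (1 - q ^ (K+1)) * 2 := by
  rw [f_closed hq K 0]
  have hcc1 : cc q 1 = 2 / (1 - q) := by
    rw [cc]
    have : qPoch (-1) q 1 = 2 := by simp [qPoch]; norm_num
    rw [this]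
    have : qPoch q q 1 = 1 - q := by simp [qPoch]
    rw [this]
  rw [hcc1]
  have h1 := qPoch_q_ne hq K
  have h4 : (1:ℂ) - q ^ (K+1) ≠ 0 := one_sub_pow_ne hq (by omega)
  have h8 : (1:ℂ) - q ^ (0+1) ≠ 0 := one_sub_pow_ne hq (by omega)
  have h9 : (1:ℂ) - q ≠ 0 := by simpa using h8
  have h5 : (1:ℂ) - q ^ (0+K+1) ≠ 0 := one_sub_pow_ne hq (by omega)
  field_simp
  ring

lemma summable_shift_cc (hq : ‖q‖ < 1) (j : ℕ) :
    Summable (fun i : ℕ => cc q (i+1) * (q ^ (j+1)) ^ (i+1)) := by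
  have hz : ‖q ^ (j+1)‖ < 1 := norm_pow_lt hq (by omega)
  exact (summable_nat_add_iff (f := fun m : ℕ => cc q m * (q ^ (j+1)) ^ m) 1).2
    ((summable_norm_cc hq hz).of_norm)

lemma SStail (hq : ‖q‖ < 1) (j : ℕ) :
    ∑' i : ℕ, cc q (i+1) * (q ^ (j+1)) ^ (i+1) = SS q (j+1) - 1 := by
  have hz : ‖q ^ (j+1)‖ < 1 := norm_pow_lt hq (by omega)
  have hs : Summable (fun m : ℕ => cc q m * (q ^ (j+1)) ^ m) :=
    (summable_norm_cc hq hz).of_norm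
  rw [SS, Summable.tsum_eq_zero_add hs]
  simp [cc_zero]

lemma summable_ff (hq : ‖q‖ < 1) (k : ℕ) : Summable (fun i : ℕ => ff q k i) := by
  set C : ℝ := ‖qPoch (-q) q k / qPoch q q k * q ^ (k*(k+1))‖ * (2 / (1 - ‖q‖)) with hC
  have hden : ∀ n : ℕ, n ≠ 0 → 1 - ‖q‖ ≤ ‖(1:ℂ) - q ^ n‖ := by
    intro n hn
    have h1 : ‖q‖ ^ n ≤ ‖q‖ := pow_le_of_le_one (norm_nonneg q) hq.le hn
    have := norm_sub_norm_le (1:ℂ) (q ^ n)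
    simp only [norm_one, norm_pow] at this
    linarith
  have hq1 : (0:ℝ) < 1 - ‖q‖ := by linarith
  apply Summable.of_norm_bounded
    (g := fun i : ℕ => C * ‖cc q (i+1) * (q ^ (k+1)) ^ (i+1)‖)
    (((summable_shift_cc hq k).norm).mul_left C)
  intro i
  rw [f_closed hq k i]
  have h5 : (1:ℂ) - q ^ (i+k+1) ≠ 0 := one_sub_pow_ne hq (by omega)
  rw [show (qPoch (-q) q k / qPoch q q k) * q ^ (k*(k+1))
      * (cc q (i+1) * (q ^ (k+1)) ^ (i+1)) * (1 - q ^ (i+1)) / (1 - q ^ (i+k+1))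
    = ((qPoch (-q) q k / qPoch q q k) * q ^ (k*(k+1)))
      * (cc q (i+1) * (q ^ (k+1)) ^ (i+1)) * ((1 - q ^ (i+1)) / (1 - q ^ (i+k+1))) by ring]
  rw [norm_mul, norm_mul]
  rw [show C * ‖cc q (i+1) * (q ^ (k+1)) ^ (i+1)‖
    = ‖qPoch (-q) q k / qPoch q q k * q ^ (k*(k+1))‖ * ‖cc q (i+1) * (q ^ (k+1)) ^ (i+1)‖
      * (2 / (1 - ‖q‖)) by rw [hC]; ring]
  apply mul_le_mul_of_nonneg_left _ (by positivity)
  rw [norm_div]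
  apply div_le_div₀ (by positivity) _ hq1 (hden (i+k+1) (by omega))
  calc ‖(1:ℂ) - q ^ (i+1)‖ ≤ ‖(1:ℂ)‖ + ‖q ^ (i+1)‖ := norm_sub_le _ _
    _ ≤ 1 + 1 := by
        rw [norm_one]
        have := norm_pow_lt hq (n := i+1) (by omega)
        linarith
    _ = 2 := by norm_num

lemma step (hq : ‖q‖ < 1) (K : ℕ) :
    (∑' i : ℕ, ff q (K+1) i) + (∑' i : ℕ, ff q K i) = 2 * q ^ ((K+1)^2) * SS q 1 := by
  have hsf1 : Summable (fun i : ℕ => ff q (K+1) i) := summable_ff hq (K+1)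
  have hsf0 : Summable (fun i : ℕ => ff q K i) := summable_ff hq K
  have hshift : ∑' i : ℕ, ff q K i = ff q K 0 + ∑' i : ℕ, ff q K (i+1) :=
    Summable.tsum_eq_zero_add hsf0
  have hsf0' : Summable (fun i : ℕ => ff q K (i+1)) :=
    (summable_nat_add_iff (f := fun i : ℕ => ff q K i) 1).2 hsf0
  set D : ℂ := (qPoch (-q) q K / qPoch q q K) * q ^ ((K+1)^2) / (1 - q ^ (K+1)) with hD
  have hX : Summable (fun i : ℕ => cc q (i+1) * (q ^ (K+1)) ^ (i+1)) := summable_shift_cc hq K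
  have hY : Summable (fun i : ℕ => cc q (i+1) * (q ^ (K+2)) ^ (i+1)) := summable_shift_cc hq (K+1)
  have hcomb : (∑' i : ℕ, ff q (K+1) i) + (∑' i : ℕ, ff q K (i+1))
      = ∑' i : ℕ, (ff q (K+1) i + ff q K (i+1)) := (Summable.tsum_add hsf1 hsf0').symm
  rw [hshift, show (∑' i : ℕ, ff q (K+1) i) + (ff q K 0 + ∑' i : ℕ, ff q K (i+1))
    = ((∑' i : ℕ, ff q (K+1) i) + (∑' i : ℕ, ff q K (i+1))) + ff q K 0 by ring, hcomb]
  have hterm : ∑' i : ℕ, (ff q (K+1) i + ff q K (i+1))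
      = D * ((1 - q ^ (K+1)) * (SS q (K+1) - 1) + (1 + q ^ (K+1)) * (SS q (K+2) - 1)) := by
    calc ∑' i : ℕ, (ff q (K+1) i + ff q K (i+1))
        = ∑' i : ℕ, D * ((1 - q ^ (K+1)) * (cc q (i+1) * (q ^ (K+1)) ^ (i+1))
            + (1 + q ^ (K+1)) * (cc q (i+1) * (q ^ (K+2)) ^ (i+1))) :=
          tsum_congr fun i => step_term hq K i
      _ = D * ∑' i : ℕ, ((1 - q ^ (K+1)) * (cc q (i+1) * (q ^ (K+1)) ^ (i+1))
            + (1 + q ^ (K+1)) * (cc q (i+1) * (q ^ (K+2)) ^ (i+1))) := tsum_mul_left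
      _ = D * ((1 - q ^ (K+1)) * (SS q (K+1) - 1) + (1 + q ^ (K+1)) * (SS q (K+2) - 1)) := by
          rw [Summable.tsum_add (hX.mul_left _) (hY.mul_left _), tsum_mul_left, tsum_mul_left,
            SStail hq K, SStail hq (K+1)]
  rw [hterm, fK0 hq K, ← hD]
  have hfe := feq hq K
  have hinv := invariant hq K
  have h4 : (1:ℂ) - q ^ (K+1) ≠ 0 := one_sub_pow_ne hq (by omega)
  have h1 := qPoch_q_ne hq K
  have hDval : D * (1 - q ^ (K+1)) * qPoch q q K
      = qPoch (-q) q K * q ^ ((K+1)^2) := by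
    rw [hD]; field_simp
  calc D * ((1 - q ^ (K+1)) * (SS q (K+1) - 1) + (1 + q ^ (K+1)) * (SS q (K+2) - 1)) + D * 2
      = D * ((1 - q ^ (K+1)) * SS q (K+1) + (1 + q ^ (K+1)) * SS q (K+2)) := by ring
    _ = D * (2 * ((1 - q ^ (K+1)) * SS q (K+1))) := by rw [← hfe]; ring
    _ = 2 * q ^ ((K+1)^2) * SS q 1 := by
        rw [hD]
        field_simp
        linear_combination q * q ^ (K*2) * q ^ (K^2) * hinv
lemma GSS1 (hq : ‖q‖ < 1) : qPochInf (-q) q / qPochInf q q = SS q 1 := by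
  have h0q : ∀ n : ℕ, (1 : ℂ) - q * q ^ n ≠ 0 := by
    intro n
    have e : q * q ^ n = q ^ (n+1) := by ring
    rw [e]; exact one_sub_pow_ne hq n.succ_ne_zero
  have hne := qPochInf_ne_zero hq (a := q) hq.le h0q
  rw [← Seval hq]
  field_simp

lemma main (hq : ‖q‖ < 1) (k : ℕ) :
    qPochInf (-q) q / qPochInf q q *
      (1 + 2 * ∑ j ∈ Finset.Icc 1 k, (-1 : ℂ) ^ j * q ^ (j ^ 2))
    = 1 + (-1 : ℂ) ^ k * ∑' i : ℕ, ff q k i := by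
  induction k with
  | zero =>
      rw [show Finset.Icc 1 0 = ∅ by rfl]
      simp only [Finset.sum_empty, mul_zero, add_zero, pow_zero, one_mul, mul_one]
      have hterm : ∀ i : ℕ, ff q 0 i = cc q (i+1) * (q ^ (0+1)) ^ (i+1) := by
        intro i
        rw [f_closed hq 0 i]
        have h4 : (1:ℂ) - q ^ (i+1) ≠ 0 := one_sub_pow_ne hq (by omega)
        have h5 : (1:ℂ) - q ^ (i+0+1) ≠ 0 := one_sub_pow_ne hq (by omega)
        simp only [qPoch, Finset.range_zero, Finset.prod_empty]
        rw [show i + 0 + 1 = i + 1 by omega]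
        field_simp
        simp
      rw [tsum_congr hterm, SStail hq 0, GSS1 hq]
      ring
  | succ k ih =>
      rw [Finset.sum_Icc_succ_top (by omega : 1 ≤ k + 1)]
      have hstep := step hq k
      have hG := GSS1 hq
      linear_combination ih + (-1:ℂ)^k * hstep + 2*(-1:ℂ)^(k+1)*q^((k+1)^2) * hG

end TGS


theorem truncated_gauss_square (q : ℂ) (hq : ‖q‖ < 1) (k : ℕ) (hk : 1 ≤ k) :
    qPochInf (-q) q / qPochInf q q *
      (1 + 2 * ∑ j ∈ Finset.Icc 1 k, (-1 : ℂ) ^ j * q ^ (j ^ 2)) =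
    1 + (-1 : ℂ) ^ k * ∑' i : ℕ,
      qPoch (-q) q k * qPoch (-1) q ((i + k + 1) - k) * q ^ ((k + 1) * (i + k + 1)) /
        qPoch q q (i + k + 1) * qBinom q ((i + k + 1) - 1) k := by
  have hconv : ∀ i : ℕ,
      qPoch (-q) q k * qPoch (-1) q ((i + k + 1) - k) * q ^ ((k + 1) * (i + k + 1)) /
        qPoch q q (i + k + 1) * qBinom q ((i + k + 1) - 1) k = TGS.ff q k i := by
    intro i
    rw [show i + k + 1 - k = i + 1 by omega, show i + k + 1 - 1 = i + k by omega]
    rfl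
  rw [tsum_congr hconv]
  exact TGS.main hq k
end

section
/- Gauss' square-number identity: 1 + 2 ∑_{j=1}^{∞} (-1)^j q^{j²} = (q;q)_∞ / (-q;q)_∞ for |q| < 1 (equivalently as formal power series). -/
open Finset Filter Topology

noncomputable section
namespace GaussSq

/-- partial q-Pochhammer product `(p;p)_j` -/
def B (p : ℂ) (j : ℕ) : ℂ := ∏ i ∈ Finset.range j, (1 - p ^ (i + 1))

/-- Gaussian binomial `[m, j]_p` as a complex number -/
def G (p : ℂ) (m j : ℕ) : ℂ := (∏ i ∈ Finset.range j, (1 - p ^ (m - i))) / B p j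

variable {p : ℂ}

lemma one_sub_pow_ne (hp : ‖p‖ < 1) (i : ℕ) : (1 : ℂ) - p ^ (i + 1) ≠ 0 := by
  have : ‖p ^ (i + 1)‖ < 1 := by
    rw [norm_pow]
    exact pow_lt_one₀ (norm_nonneg _) hp (Nat.succ_ne_zero i)
  intro h
  rw [sub_eq_zero] at h
  rw [← h] at this
  simp at this

lemma B_ne (hp : ‖p‖ < 1) (j : ℕ) : B p j ≠ 0 :=
  Finset.prod_ne_zero_iff.2 fun i _ => one_sub_pow_ne hp i

@[simp] lemma G_zero (m : ℕ) : G p m 0 = 1 := by simp [G, B]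

lemma G_top (m : ℕ) : G p m (m + 1) = 0 := by
  rw [G, Finset.prod_eq_zero (Finset.self_mem_range_succ m)]
  · simp
  · simp

lemma pascal (hp : ‖p‖ < 1) {m j : ℕ} (hj : j ≤ m) :
    G p (m + 1) (j + 1) = G p m (j + 1) + p ^ (m - j) * G p m j := by
  have hnum : ∏ i ∈ Finset.range (j + 1), (1 - p ^ (m + 1 - i))
      = (∏ i ∈ Finset.range j, (1 - p ^ (m - i))) * (1 - p ^ (m + 1)) := by
    rw [Finset.prod_range_succ']
    congr 1
    refine Finset.prod_congr rfl fun i _ => ?_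
    congr 2
    omega
  have hnum2 : ∏ i ∈ Finset.range (j + 1), (1 - p ^ (m - i))
      = (∏ i ∈ Finset.range j, (1 - p ^ (m - i))) * (1 - p ^ (m - j)) :=
    Finset.prod_range_succ _ _
  have hB : B p (j + 1) = B p j * (1 - p ^ (j + 1)) := Finset.prod_range_succ _ _
  have key : (1 : ℂ) - p ^ (m + 1) = (1 - p ^ (m - j)) + p ^ (m - j) * (1 - p ^ (j + 1)) := by
    have : p ^ (m - j) * p ^ (j + 1) = p ^ (m + 1) := by
      rw [← pow_add]; congr 1; omega
    rw [mul_one_sub, this]; ring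
  rw [G, G, G, hnum, hnum2, hB, key]
  have h1 := B_ne hp j
  have h2 := one_sub_pow_ne hp j
  field_simp

/-- the q-binomial theorem -/
lemma qbinom (hp : ‖p‖ < 1) (x : ℂ) (m : ℕ) :
    ∏ k ∈ Finset.range m, (1 + x * p ^ k)
      = ∑ j ∈ Finset.range (m + 1), p ^ (∑ i ∈ Finset.range j, i) * x ^ j * G p m j := by
  induction m with
  | zero => simp
  | succ m ih =>
    rw [Finset.prod_range_succ, ih]
    have hsplit : ∀ j ∈ Finset.range (m + 1),
        p ^ (∑ i ∈ Finset.range (j+1), i) * x ^ (j+1) * G p (m+1) (j+1)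
          = p ^ (∑ i ∈ Finset.range (j+1), i) * x ^ (j+1) * G p m (j+1)
            + x * p ^ m * (p ^ (∑ i ∈ Finset.range j, i) * x ^ j * G p m j) := by
      intro j hj
      rw [Finset.mem_range] at hj
      rw [pascal hp (by omega : j ≤ m)]
      have hexp : p ^ (∑ i ∈ Finset.range (j+1), i) * p ^ (m - j)
          = p ^ m * p ^ (∑ i ∈ Finset.range j, i) := by
        rw [← pow_add, ← pow_add, Finset.sum_range_succ]
        congr 1
        omega
      rw [mul_add]
      congr 1
      calc p ^ (∑ i ∈ Finset.range (j+1), i) * x ^ (j+1) * (p ^ (m-j) * G p m j)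
          = (p ^ (∑ i ∈ Finset.range (j+1), i) * p ^ (m-j)) * x ^ (j+1) * G p m j := by ring
        _ = (p ^ m * p ^ (∑ i ∈ Finset.range j, i)) * x ^ (j+1) * G p m j := by rw [hexp]
        _ = x * p ^ m * (p ^ (∑ i ∈ Finset.range j, i) * x ^ j * G p m j) := by ring
    rw [Finset.sum_range_succ' (fun j => p ^ (∑ i ∈ Finset.range j, i) * x ^ j * G p (m+1) j) (m+1)]
    rw [Finset.sum_congr rfl hsplit, Finset.sum_add_distrib]
    have e1 : ∑ j ∈ Finset.range (m + 1),
        p ^ (∑ i ∈ Finset.range (j+1), i) * x ^ (j+1) * G p m (j+1)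
        = (∑ j ∈ Finset.range (m + 2), p ^ (∑ i ∈ Finset.range j, i) * x ^ j * G p m j)
          - p ^ (∑ i ∈ Finset.range 0, i) * x ^ 0 * G p m 0 := by
      rw [Finset.sum_range_succ' (fun j => p ^ (∑ i ∈ Finset.range j, i) * x ^ j * G p m j) (m+1)]
      ring
    have e2 : ∑ j ∈ Finset.range (m + 2), p ^ (∑ i ∈ Finset.range j, i) * x ^ j * G p m j
        = ∑ j ∈ Finset.range (m + 1), p ^ (∑ i ∈ Finset.range j, i) * x ^ j * G p m j := by
      rw [Finset.sum_range_succ, G_top]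
      simp
    have e3 : ∑ j ∈ Finset.range (m + 1),
        x * p ^ m * (p ^ (∑ i ∈ Finset.range j, i) * x ^ j * G p m j)
        = x * p ^ m * ∑ j ∈ Finset.range (m + 1),
            p ^ (∑ i ∈ Finset.range j, i) * x ^ j * G p m j := by
      rw [Finset.mul_sum]
    rw [e1, e2, e3]
    simp
    ring


lemma zpow_sum' {q : ℂ} (hq : q ≠ 0) (e : ℕ → ℤ) (n : ℕ) :
    q ^ (∑ i ∈ Finset.range n, e i) = ∏ i ∈ Finset.range n, q ^ (e i) := by
  induction n with
  | zero => simp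
  | succ n ih => rw [Finset.sum_range_succ, Finset.prod_range_succ, zpow_add₀ hq, ih]

lemma sum_odds (n : ℕ) : ∑ k ∈ Finset.range n, (2 * k + 1) = n ^ 2 := by
  induction n with
  | zero => simp
  | succ n ih => rw [Finset.sum_range_succ, ih]; ring

lemma spec {q : ℂ} (hq0 : q ≠ 0) (hq : ‖q‖ < 1) (n : ℕ) :
    (∏ k ∈ Finset.range n, (1 - q ^ (2 * k + 1))) ^ 2
      = ∑ j ∈ Finset.range (2 * n + 1),
          (-1 : ℂ) ^ (j + n) * q ^ (((j : ℤ) - n).natAbs ^ 2) * G (q ^ 2) (2 * n) j := by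
  have hp : ‖q ^ 2‖ < 1 := by
    rw [norm_pow]; exact pow_lt_one₀ (norm_nonneg _) hq two_ne_zero
  set x : ℂ := -(q ^ ((1 : ℤ) - 2 * n)) with hx
  have hqb := qbinom hp x (2 * n)
  set f : ℕ → ℂ := fun k => 1 - q ^ (2 * (k : ℤ) + 1 - 2 * n) with hf
  -- LHS transformation
  have hfac : ∀ k : ℕ, 1 + x * (q ^ 2) ^ k = f k := by
    intro k
    rw [hx, hf]
    have h1 : (q ^ 2) ^ k = q ^ ((2 * k : ℕ) : ℤ) := by
      rw [zpow_natCast, ← pow_mul]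
    rw [h1, neg_mul, ← zpow_add₀ hq0]
    show 1 + -q ^ ((1 : ℤ) - 2 * n + ((2 * k : ℕ) : ℤ)) = 1 - q ^ (2 * (k : ℤ) + 1 - 2 * n)
    have : ((1 : ℤ) - 2 * n + ((2 * k : ℕ) : ℤ)) = 2 * (k : ℤ) + 1 - 2 * n := by push_cast; ring
    rw [this]; ring
  have hL : ∏ k ∈ Finset.range (2 * n), (1 + x * (q ^ 2) ^ k)
      = ((-1 : ℂ) ^ n * q ^ (-(n ^ 2 : ℤ))) *
        (∏ k ∈ Finset.range n, (1 - q ^ (2 * k + 1))) ^ 2 := by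
    rw [Finset.prod_congr rfl (fun k _ => hfac k),
      show 2 * n = n + n by ring, Finset.prod_range_add]
    have hsecond : ∏ k ∈ Finset.range n, f (n + k)
        = ∏ k ∈ Finset.range n, (1 - q ^ (2 * k + 1)) := by
      refine Finset.prod_congr rfl fun k _ => ?_
      rw [hf]
      have : (2 * ((n + k : ℕ) : ℤ) + 1 - 2 * n) = ((2 * k + 1 : ℕ) : ℤ) := by
        push_cast; ring
      simp only [this, zpow_natCast]
    have hfirst : ∏ k ∈ Finset.range n, f k
        = (-1 : ℂ) ^ n * q ^ (-(n ^ 2 : ℤ)) * ∏ k ∈ Finset.range n, (1 - q ^ (2 * k + 1)) := by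
      rw [← Finset.prod_range_reflect f n]
      have step : ∀ k ∈ Finset.range n,
          f (n - 1 - k) = ((-1 : ℂ) * q ^ (-(2 * (k : ℤ) + 1))) * (1 - q ^ (2 * k + 1)) := by
        intro k hk
        rw [Finset.mem_range] at hk
        rw [hf]
        have he : (2 * ((n - 1 - k : ℕ) : ℤ) + 1 - 2 * n) = (-(2 * (k : ℤ) + 1)) := by
          have : ((n - 1 - k : ℕ) : ℤ) = (n : ℤ) - 1 - k := by omega
          rw [this]; ring
        simp only [he]
        have hmul : q ^ (-(2 * (k : ℤ) + 1)) * q ^ ((2 * k + 1 : ℕ) : ℤ) = 1 := by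
          rw [← zpow_add₀ hq0]
          have : (-(2 * (k : ℤ) + 1) + ((2 * k + 1 : ℕ) : ℤ)) = 0 := by push_cast; ring
          rw [this, zpow_zero]
        rw [← zpow_natCast q (2 * k + 1)]
        calc (1 : ℂ) - q ^ (-(2 * (k : ℤ) + 1))
            = -(q ^ (-(2 * (k : ℤ) + 1))) + q ^ (-(2 * (k : ℤ) + 1)) * q ^ ((2 * k + 1 : ℕ) : ℤ) := by
              rw [hmul]; ring
          _ = ((-1 : ℂ) * q ^ (-(2 * (k : ℤ) + 1))) * (1 - q ^ ((2 * k + 1 : ℕ) : ℤ)) := by ring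
      have hsum : ∑ k ∈ Finset.range n, (-(2 * (k : ℤ) + 1))
          = -((∑ k ∈ Finset.range n, (2 * k + 1) : ℕ) : ℤ) := by
        push_cast
        rw [← Finset.sum_neg_distrib]
      rw [Finset.prod_congr rfl step, Finset.prod_mul_distrib, Finset.prod_mul_distrib,
        Finset.prod_const, Finset.card_range, ← zpow_sum' hq0 (fun k => -(2 * (k : ℤ) + 1)) n,
        hsum, sum_odds]
      norm_cast
    rw [hsecond, hfirst]
    ring
  -- RHS transformation
  have hR : ∀ j ∈ Finset.range (2 * n + 1),
      (q ^ 2) ^ (∑ i ∈ Finset.range j, i) * x ^ j * G (q ^ 2) (2 * n) j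
        = ((-1 : ℂ) ^ n * q ^ (-(n ^ 2 : ℤ))) *
          ((-1 : ℂ) ^ (j + n) * q ^ (((j : ℤ) - n).natAbs ^ 2) * G (q ^ 2) (2 * n) j) := by
    intro j hj
    have hsum2 : (∑ i ∈ Finset.range j, i) * 2 = j * (j - 1) := Finset.sum_range_id_mul_two j
    have hxj : x ^ j = (-1 : ℂ) ^ j * q ^ (((1 : ℤ) - 2 * n) * j) := by
      rw [hx, neg_pow, ← zpow_natCast (q ^ ((1 : ℤ) - 2 * n)) j, ← zpow_mul]
    have hpe : (q ^ 2) ^ (∑ i ∈ Finset.range j, i) = q ^ (((j : ℤ) * (j - 1))) := by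
      rw [← pow_mul, mul_comm 2 (∑ i ∈ Finset.range j, i), hsum2,
        ← zpow_natCast q (j * (j - 1))]
      congr 1
      cases j with
      | zero => simp
      | succ j => push_cast; ring
    rw [hpe, hxj]
    have hnat : q ^ ((((j : ℤ) - n).natAbs ^ 2 : ℕ))
        = q ^ (((((j : ℤ) - n).natAbs ^ 2 : ℕ)) : ℤ) := (zpow_natCast _ _).symm
    have hcomb : q ^ (((j : ℤ) * (j - 1))) * q ^ (((1 : ℤ) - 2 * n) * j)
        = q ^ (-(n ^ 2 : ℤ)) * q ^ ((((j : ℤ) - n).natAbs ^ 2 : ℕ)) := by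
      rw [hnat, ← zpow_add₀ hq0, ← zpow_add₀ hq0]
      congr 1
      have : ((((j : ℤ) - n).natAbs ^ 2 : ℕ) : ℤ) = ((j : ℤ) - n) ^ 2 := by
        push_cast [Int.natAbs_sq]
        rw [sq_abs]
      rw [this]
      ring
    have hsgn : (-1 : ℂ) ^ j = (-1 : ℂ) ^ n * (-1 : ℂ) ^ (j + n) := by
      rw [← pow_add, show n + (j + n) = j + 2 * n by ring, pow_add]
      simp [pow_mul]
    calc q ^ ((j : ℤ) * ((j : ℤ) - 1)) * ((-1 : ℂ) ^ j * q ^ (((1 : ℤ) - 2 * n) * j)) * G (q ^ 2) (2 * n) j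
        = (-1 : ℂ) ^ j * (q ^ ((j : ℤ) * ((j : ℤ) - 1)) * q ^ (((1 : ℤ) - 2 * n) * j)) * G (q ^ 2) (2 * n) j := by ring
      _ = (-1 : ℂ) ^ j * (q ^ (-(n ^ 2 : ℤ)) * q ^ ((((j : ℤ) - n).natAbs ^ 2 : ℕ))) * G (q ^ 2) (2 * n) j := by rw [hcomb]
      _ = _ := by rw [hsgn]; ring
  rw [hL, Finset.sum_congr rfl hR, ← Finset.mul_sum] at hqb
  have hA : ((-1 : ℂ) ^ n * q ^ (-(n ^ 2 : ℤ))) ≠ 0 := by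
    apply mul_ne_zero
    · exact pow_ne_zero _ (by norm_num)
    · exact zpow_ne_zero _ hq0
  exact mul_left_cancel₀ hA hqb


variable {p : ℂ}

/-- main product machine: `∏ (1 + u n)` converges to a nonzero value. -/
lemma hasProd_one_add (u : ℕ → ℂ) (hs : Summable fun n => ‖u n‖) (hlt : ∀ n, ‖u n‖ < 1) :
    HasProd (fun n => 1 + u n) (Complex.exp (∑' n, Complex.log (1 + u n))) := by
  have hne : ∀ n, (1 : ℂ) + u n ≠ 0 := by
    intro n h
    have h1 : u n = -1 := by linear_combination h
    have h2 := hlt n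
    rw [h1] at h2
    simp at h2
  have htend : Tendsto (fun n => ‖u n‖) atTop (𝓝 0) := hs.tendsto_atTop_zero
  have hev : ∀ᶠ n in atTop, ‖u n‖ < 1 / 2 :=
    htend.eventually (eventually_lt_nhds (by norm_num : (0:ℝ) < 1/2))
  have hlog : Summable fun n => Complex.log (1 + u n) := by
    apply Summable.of_norm_bounded_eventually_nat (g := fun n => 3 / 2 * ‖u n‖) (hs.mul_left _)
    filter_upwards [hev] with n hn
    exact Complex.norm_log_one_add_half_le_self hn.le
  have := hlog.hasSum.cexp
  rwa [show (Complex.exp ∘ fun n => Complex.log (1 + u n)) = fun n => 1 + u n from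
    funext fun n => Complex.exp_log (hne n)] at this

lemma summable_pow_succ {r : ℝ} (hr0 : 0 ≤ r) (hr : r < 1) :
    Summable fun n : ℕ => r ^ (n + 1) := by
  exact (summable_geometric_of_lt_one hr0 hr).comp_injective (add_left_injective 1)

lemma hasProd_B (hp : ‖p‖ < 1) :
    HasProd (fun n : ℕ => 1 - p ^ (n + 1)) (Complex.exp (∑' n, Complex.log (1 - p ^ (n + 1)))) := by
  have := hasProd_one_add (fun n => -p ^ (n + 1)) ?_ ?_
  · simpa [sub_eq_add_neg] using this
  · simpa using summable_pow_succ (norm_nonneg p) hp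
  · intro n
    simpa [norm_pow] using pow_lt_one₀ (norm_nonneg p) hp (Nat.succ_ne_zero n)

/-- the limit value of B -/
def Pinf (p : ℂ) : ℂ := Complex.exp (∑' n, Complex.log (1 - p ^ (n + 1)))

lemma Pinf_ne (p : ℂ) : Pinf p ≠ 0 := Complex.exp_ne_zero _

lemma B_tendsto (hp : ‖p‖ < 1) : Tendsto (B p) atTop (𝓝 (Pinf p)) :=
  (hasProd_B hp).tendsto_prod_nat

/-- a positive sequence with positive limit is bounded below -/
lemma exists_pos_forall_le {a : ℕ → ℝ} {L : ℝ} (hL : 0 < L) (ha : ∀ n, 0 < a n)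
    (h : Tendsto a atTop (𝓝 L)) : ∃ ε > 0, ∀ n, ε ≤ a n := by
  have hev : ∀ᶠ n in atTop, L / 2 ≤ a n :=
    h.eventually (eventually_ge_nhds (by linarith))
  obtain ⟨N, hN⟩ := hev.exists_forall_of_atTop
  refine ⟨min (L / 2) ((Finset.range (N + 1)).inf' (by simp) a), ?_, ?_⟩
  · apply lt_min (by linarith)
    apply Finset.lt_inf'_iff _ |>.2
    intro i _
    exact ha i
  · intro n
    rcases le_or_gt N n with hn | hn
    · exact le_trans (min_le_left _ _) (hN n hn)
    · exact le_trans (min_le_right _ _)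
        (Finset.inf'_le _ (Finset.mem_range.2 (by omega)))

lemma normB_pos (hp : ‖p‖ < 1) (j : ℕ) : 0 < ‖B p j‖ := by
  rw [norm_pos_iff]
  apply Finset.prod_ne_zero_iff.2
  intro i _
  intro h
  rw [sub_eq_zero] at h
  have : ‖p ^ (i + 1)‖ < 1 := by
    simpa [norm_pow] using pow_lt_one₀ (norm_nonneg p) hp (Nat.succ_ne_zero i)
  rw [← h] at this
  simp at this

lemma exists_B_lower (hp : ‖p‖ < 1) : ∃ ε > 0, ∀ j, ε ≤ ‖B p j‖ := by
  apply exists_pos_forall_le (norm_pos_iff.2 (Pinf_ne p)) (normB_pos hp)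
  exact (B_tendsto hp).norm

/-- uniform bound on the numerator of the Gaussian binomial -/
lemma num_norm_le (hp : ‖p‖ < 1) {m j : ℕ} (hj : j ≤ m) :
    ‖∏ i ∈ Finset.range j, (1 - p ^ (m - i))‖ ≤ Real.exp (‖p‖ / (1 - ‖p‖)) := by
  set r := ‖p‖
  have hr0 : 0 ≤ r := norm_nonneg p
  rw [← Finset.prod_range_reflect (fun i => 1 - p ^ (m - i)) j]
  calc ‖∏ i ∈ Finset.range j, (1 - p ^ (m - (j - 1 - i)))‖
      ≤ ∏ i ∈ Finset.range j, ‖(1 : ℂ) - p ^ (m - (j - 1 - i))‖ := norm_prod_le _ _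
    _ ≤ ∏ i ∈ Finset.range j, Real.exp (r ^ (i + 1)) := by
        apply Finset.prod_le_prod (fun i _ => norm_nonneg _)
        intro i hi
        rw [Finset.mem_range] at hi
        have h1 : ‖(1 : ℂ) - p ^ (m - (j - 1 - i))‖ ≤ 1 + r ^ (m - (j - 1 - i)) := by
          calc ‖(1 : ℂ) - p ^ (m - (j - 1 - i))‖ ≤ ‖(1 : ℂ)‖ + ‖p ^ (m - (j - 1 - i))‖ :=
                norm_sub_le _ _
            _ = 1 + r ^ (m - (j - 1 - i)) := by rw [norm_one, norm_pow]
        have h2 : r ^ (m - (j - 1 - i)) ≤ r ^ (i + 1) := by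
          apply pow_le_pow_of_le_one hr0 (le_of_lt hp)
          omega
        calc ‖(1 : ℂ) - p ^ (m - (j - 1 - i))‖ ≤ 1 + r ^ (i + 1) := by linarith
          _ ≤ Real.exp (r ^ (i + 1)) := by
              rw [add_comm]
              exact Real.add_one_le_exp _
    _ = Real.exp (∑ i ∈ Finset.range j, r ^ (i + 1)) := by rw [Real.exp_sum]
    _ ≤ Real.exp (r / (1 - r)) := by
        apply Real.exp_le_exp.2
        have hsum : Summable fun n : ℕ => r ^ (n + 1) := summable_pow_succ hr0 hp
        calc ∑ i ∈ Finset.range j, r ^ (i + 1) ≤ ∑' i : ℕ, r ^ (i + 1) :=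
              Summable.sum_le_tsum _ (fun i _ => pow_nonneg hr0 _) hsum
          _ = r / (1 - r) := by
              rw [show (fun i : ℕ => r ^ (i + 1)) = fun i : ℕ => r * r ^ i from
                funext fun i => by rw [pow_succ, mul_comm], tsum_mul_left,
                tsum_geometric_of_lt_one hr0 hp]
              rw [div_eq_mul_inv]

lemma exists_G_bound (hp : ‖p‖ < 1) : ∃ C : ℝ, 0 ≤ C ∧ ∀ m j, j ≤ m → ‖G p m j‖ ≤ C := by
  obtain ⟨ε, hε, hB⟩ := exists_B_lower hp
  refine ⟨Real.exp (‖p‖ / (1 - ‖p‖)) / ε, by positivity, fun m j hj => ?_⟩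
  rw [G, norm_div]
  apply div_le_div₀ (by positivity) (num_norm_le hp hj) hε (hB j)

lemma B_ne' (hp : ‖p‖ < 1) (j : ℕ) : B p j ≠ 0 := norm_pos_iff.1 (normB_pos hp j)

lemma G_formula (hp : ‖p‖ < 1) {m j : ℕ} (hj : j ≤ m) :
    G p m j = B p m / (B p (m - j) * B p j) := by
  have hnum : B p m = B p (m - j) * ∏ i ∈ Finset.range j, (1 - p ^ (m - i)) := by
    have h1 := Finset.prod_range_add (fun i => 1 - p ^ (i + 1)) (m - j) j
    rw [show (m - j) + j = m by omega] at h1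
    rw [B, h1]
    congr 1
    rw [← Finset.prod_range_reflect (fun i => 1 - p ^ (m - j + i + 1)) j]
    refine Finset.prod_congr rfl fun i hi => ?_
    rw [Finset.mem_range] at hi
    congr 2
    omega
  rw [G, hnum, mul_div_mul_left _ _ (B_ne' hp (m - j))]


/-- summand family for Tannery's theorem -/
def F (q : ℂ) (n : ℕ) (i : ℤ) : ℂ :=
  if i.natAbs ≤ n then
    (-1 : ℂ) ^ i.natAbs * q ^ (i.natAbs ^ 2) * G (q ^ 2) (2 * n) ((i + n).toNat)
  else 0

lemma neg_one_pow_eq {a b : ℕ} (h : a % 2 = b % 2) : ((-1 : ℂ)) ^ a = (-1) ^ b := by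
  conv_lhs => rw [← Nat.div_add_mod a 2]
  conv_rhs => rw [← Nat.div_add_mod b 2]
  rw [h]
  simp [pow_add, pow_mul]

lemma tsum_F (q : ℂ) (hq0 : q ≠ 0) (hq : ‖q‖ < 1) (n : ℕ) :
    ∑' i : ℤ, F q n i = (∏ k ∈ Finset.range n, (1 - q ^ (2 * k + 1))) ^ 2 := by
  rw [spec hq0 hq n]
  rw [tsum_eq_sum (s := Finset.Icc (-(n : ℤ)) n)
    (fun i hi => by
      rw [F, if_neg]
      rw [Finset.mem_Icc] at hi
      omega)]
  refine Finset.sum_bij' (i := fun i _ => (i + n).toNat) (j := fun j _ => (j : ℤ) - n)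
    ?_ ?_ ?_ ?_ ?_
  · intro i hi
    rw [Finset.mem_Icc] at hi
    rw [Finset.mem_range]
    omega
  · intro j hj
    rw [Finset.mem_range] at hj
    rw [Finset.mem_Icc]
    omega
  · intro i hi
    rw [Finset.mem_Icc] at hi
    omega
  · intro j hj
    rw [Finset.mem_range] at hj
    omega
  · intro i hi
    rw [Finset.mem_Icc] at hi
    rw [F, if_pos (by omega)]
    have h1 : ((((i + n).toNat : ℕ) : ℤ) - n) = i := by omega
    rw [h1]
    congr 1
    congr 1
    apply neg_one_pow_eq
    omega

lemma tendsto_F (q : ℂ) (hq : ‖q‖ < 1) (i : ℤ) :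
    Tendsto (fun n => F q n i) atTop
      (𝓝 ((-1 : ℂ) ^ i.natAbs * q ^ (i.natAbs ^ 2) * (Pinf (q ^ 2))⁻¹)) := by
  have hp : ‖q ^ 2‖ < 1 := by
    rw [norm_pow]; exact pow_lt_one₀ (norm_nonneg _) hq two_ne_zero
  have hB := B_tendsto hp
  have t1 : Tendsto (fun n : ℕ => 2 * n) atTop atTop :=
    tendsto_atTop_atTop.mpr fun b => ⟨b, fun a ha => by omega⟩
  have t2 : Tendsto (fun n : ℕ => ((n : ℤ) - i).toNat) atTop atTop :=
    tendsto_atTop_atTop.mpr fun b => ⟨b + i.natAbs, fun a ha => by omega⟩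
  have t3 : Tendsto (fun n : ℕ => (i + (n : ℤ)).toNat) atTop atTop :=
    tendsto_atTop_atTop.mpr fun b => ⟨b + i.natAbs, fun a ha => by omega⟩
  have hmain : Tendsto (fun n : ℕ =>
      B (q ^ 2) (2 * n) / (B (q ^ 2) (((n : ℤ) - i).toNat) * B (q ^ 2) ((i + (n : ℤ)).toNat)))
      atTop (𝓝 (Pinf (q ^ 2) / (Pinf (q ^ 2) * Pinf (q ^ 2)))) :=
    (hB.comp t1).div ((hB.comp t2).mul (hB.comp t3))
      (mul_ne_zero (Pinf_ne _) (Pinf_ne _))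
  have hval : Pinf (q ^ 2) / (Pinf (q ^ 2) * Pinf (q ^ 2)) = (Pinf (q ^ 2))⁻¹ := by
    field_simp
  rw [hval] at hmain
  have := (hmain.const_mul ((-1 : ℂ) ^ i.natAbs * q ^ (i.natAbs ^ 2)))
  apply Tendsto.congr' _ this
  filter_upwards [eventually_ge_atTop i.natAbs] with n hn
  have hle : (i + (n : ℤ)).toNat ≤ 2 * n := by omega
  rw [F, if_pos hn, G_formula hp hle]
  have : 2 * n - (i + (n : ℤ)).toNat = ((n : ℤ) - i).toNat := by omega
  rw [this]

lemma F_bound (q : ℂ) (hq : ‖q‖ < 1) :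
    ∃ C : ℝ, 0 ≤ C ∧ (Summable fun i : ℤ => C * ‖q‖ ^ i.natAbs) ∧
      ∀ n (i : ℤ), ‖F q n i‖ ≤ C * ‖q‖ ^ i.natAbs := by
  have hp : ‖q ^ 2‖ < 1 := by
    rw [norm_pow]; exact pow_lt_one₀ (norm_nonneg _) hq two_ne_zero
  obtain ⟨C, hC0, hC⟩ := exists_G_bound hp
  refine ⟨C, hC0, ?_, ?_⟩
  · apply Summable.of_nat_of_neg
    · simpa using ((summable_geometric_of_lt_one (norm_nonneg q) hq).mul_left C)
    · have : (fun n : ℕ => C * ‖q‖ ^ (-(n : ℤ)).natAbs) = fun n : ℕ => C * ‖q‖ ^ n := by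
        funext n; simp
      rw [this]
      exact (summable_geometric_of_lt_one (norm_nonneg q) hq).mul_left C
  · intro n i
    rw [F]
    split_ifs with h
    · rw [norm_mul, norm_mul, norm_pow, norm_pow, norm_neg, norm_one, one_pow, one_mul]
      have h1 : ‖q‖ ^ i.natAbs ^ 2 ≤ ‖q‖ ^ i.natAbs :=
        pow_le_pow_of_le_one (norm_nonneg q) hq.le (Nat.le_self_pow two_ne_zero _)
      have h2 : ‖G (q ^ 2) (2 * n) ((i + n).toNat)‖ ≤ C := hC _ _ (by omega)
      calc ‖q‖ ^ i.natAbs ^ 2 * ‖G (q ^ 2) (2 * n) ((i + n).toNat)‖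
          ≤ ‖q‖ ^ i.natAbs * C := by
            apply mul_le_mul h1 h2 (norm_nonneg _)
            exact pow_nonneg (norm_nonneg q) _
        _ = C * ‖q‖ ^ i.natAbs := by ring
    · simp
      positivity

/-- the central limit identity -/
lemma key_identity (q : ℂ) (hq0 : q ≠ 0) (hq : ‖q‖ < 1) :
    (∑' i : ℤ, (-1 : ℂ) ^ i.natAbs * q ^ (i.natAbs ^ 2))
      = Complex.exp (∑' n, Complex.log (1 - q ^ (2 * n + 1))) ^ 2 * Pinf (q ^ 2) := by
  set Po : ℂ := Complex.exp (∑' n, Complex.log (1 - q ^ (2 * n + 1))) with hPo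
  have hp : ‖q ^ 2‖ < 1 := by
    rw [norm_pow]; exact pow_lt_one₀ (norm_nonneg _) hq two_ne_zero
  -- odd product
  have hodd : HasProd (fun k : ℕ => 1 - q ^ (2 * k + 1)) Po := by
    have := hasProd_one_add (fun k => -q ^ (2 * k + 1)) ?_ ?_
    · simpa [sub_eq_add_neg, hPo] using this
    · have : Summable fun k : ℕ => ‖q ^ 2‖ ^ k * ‖q‖ :=
        ((summable_geometric_of_lt_one (norm_nonneg _) hp).mul_right _)
      apply Summable.of_nonneg_of_le (fun k => norm_nonneg _) _ this
      intro k
      rw [norm_neg, norm_pow, norm_pow]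
      exact le_of_eq (by rw [pow_succ, pow_mul])
    · intro k
      rw [norm_neg, norm_pow]
      exact pow_lt_one₀ (norm_nonneg q) hq (by omega)
  -- limit of partial products squared
  have hLHS : Tendsto (fun n => (∏ k ∈ Finset.range n, (1 - q ^ (2 * k + 1))) ^ 2)
      atTop (𝓝 (Po ^ 2)) := by
    have h1 := hodd.tendsto_prod_nat
    simpa [pow_two] using h1.mul h1
  -- Tannery
  obtain ⟨C, hC0, hCsum, hCb⟩ := F_bound q hq
  have hT : Tendsto (fun n => ∑' i : ℤ, F q n i) atTop
      (𝓝 (∑' i : ℤ, (-1 : ℂ) ^ i.natAbs * q ^ (i.natAbs ^ 2) * (Pinf (q ^ 2))⁻¹)) := by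
    apply tendsto_tsum_of_dominated_convergence hCsum (tendsto_F q hq)
    exact Eventually.of_forall fun n => hCb n
  rw [show (fun n => ∑' i : ℤ, F q n i)
      = fun n => (∏ k ∈ Finset.range n, (1 - q ^ (2 * k + 1))) ^ 2 from
    funext fun n => tsum_F q hq0 hq n] at hT
  have huniq : Po ^ 2 = ∑' i : ℤ, (-1 : ℂ) ^ i.natAbs * q ^ (i.natAbs ^ 2) * (Pinf (q ^ 2))⁻¹ :=
    tendsto_nhds_unique hLHS hT
  rw [tsum_mul_right] at huniq
  rw [huniq, inv_mul_cancel_right₀ (Pinf_ne _)]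


end GaussSq
end

open GaussSq Filter

theorem gauss_square_identity (q : ℂ) (hq : ‖q‖ < 1) :
    1 + 2 * ∑' j : ℕ, (-1 : ℂ) ^ (j + 1) * q ^ ((j + 1) ^ 2) =
    qPochInf q q / qPochInf (-q) q := by
  by_cases hq0 : q = 0
  · subst hq0
    have h1 : ∀ j : ℕ, (-1 : ℂ) ^ (j + 1) * (0 : ℂ) ^ ((j + 1) ^ 2) = 0 := by
      intro j
      rw [zero_pow (by positivity), mul_zero]
    rw [tsum_congr h1, tsum_zero, mul_zero, add_zero]
    have h2 : qPochInf 0 0 = 1 := by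
      rw [qPochInf]
      have : ∀ n : ℕ, (1 : ℂ) - 0 * (0 : ℂ) ^ n = 1 := fun n => by ring
      rw [tprod_congr this, tprod_one]
    have h3 : qPochInf (-0) 0 = 1 := by rw [neg_zero]; exact h2
    rw [h2, h3]
    norm_num
  -- main case
  have hp : ‖q ^ 2‖ < 1 := by
    rw [norm_pow]; exact pow_lt_one₀ (norm_nonneg _) hq two_ne_zero
  have hlt : ∀ n : ℕ, ‖q ^ (n + 1)‖ < 1 := fun n => by
    rw [norm_pow]; exact pow_lt_one₀ (norm_nonneg q) hq (Nat.succ_ne_zero n)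
  set Pm : ℂ := Complex.exp (∑' n, Complex.log (1 + q ^ (n + 1))) with hPm
  set Po : ℂ := Complex.exp (∑' n, Complex.log (1 - q ^ (2 * n + 1))) with hPo
  have hm : HasProd (fun n : ℕ => 1 + q ^ (n + 1)) Pm := by
    apply hasProd_one_add
    · simpa [norm_pow] using summable_pow_succ (norm_nonneg q) hq
    · exact hlt
  have hPoch1 : qPochInf q q = Pinf q := by
    rw [qPochInf]
    rw [show (fun n : ℕ => 1 - q * q ^ n) = fun n : ℕ => 1 - q ^ (n + 1) from
      funext fun n => by rw [pow_succ']]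
    exact (hasProd_B hq).tprod_eq
  have hPoch2 : qPochInf (-q) q = Pm := by
    rw [qPochInf]
    rw [show (fun n : ℕ => 1 - -q * q ^ n) = fun n : ℕ => 1 + q ^ (n + 1) from
      funext fun n => by rw [pow_succ']; ring]
    exact hm.tprod_eq
  -- even/odd split of (q;q)∞
  have hodd : HasProd (fun k : ℕ => 1 - q ^ (2 * k + 1)) Po := by
    have := hasProd_one_add (fun k => -q ^ (2 * k + 1)) ?_ ?_
    · simpa [sub_eq_add_neg, hPo] using this
    · have h2 : Summable fun k : ℕ => ‖q ^ 2‖ ^ k * ‖q‖ :=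
        ((summable_geometric_of_lt_one (norm_nonneg _) hp).mul_right _)
      apply Summable.of_nonneg_of_le (fun k => norm_nonneg _) _ h2
      intro k
      rw [norm_neg, norm_pow, norm_pow]
      exact le_of_eq (by rw [pow_succ, pow_mul])
    · intro k
      rw [norm_neg, norm_pow]
      exact pow_lt_one₀ (norm_nonneg q) hq (by omega)
  have heven : HasProd (fun k : ℕ => 1 - q ^ (2 * k + 1 + 1)) (Pinf (q ^ 2)) := by
    have := hasProd_B hp
    rw [show (fun n : ℕ => 1 - (q ^ 2) ^ (n + 1)) = fun n : ℕ => 1 - q ^ (2 * n + 1 + 1) from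
      funext fun n => by rw [← pow_mul]; congr 2] at this
    exact this
  have hsplit : HasProd (fun n : ℕ => 1 - q ^ (n + 1)) (Po * Pinf (q ^ 2)) :=
    HasProd.even_mul_odd hodd heven
  have heq1 : Pinf q = Po * Pinf (q ^ 2) := (hasProd_B hq).unique hsplit
  -- (q;q)(−q;q) = (q²;q²)
  have hmul : HasProd (fun n : ℕ => (1 - q ^ (n + 1)) * (1 + q ^ (n + 1)))
      (Pinf q * Pm) := (hasProd_B hq).mul hm
  have hmul2 : HasProd (fun n : ℕ => 1 - (q ^ 2) ^ (n + 1)) (Pinf q * Pm) := by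
    rw [show (fun n : ℕ => 1 - (q ^ 2) ^ (n + 1))
        = fun n : ℕ => (1 - q ^ (n + 1)) * (1 + q ^ (n + 1)) from
      funext fun n => by rw [← pow_mul]; ring_nf]
    exact hmul
  have heq2 : Pinf q * Pm = Pinf (q ^ 2) := hmul2.unique (hasProd_B hp)
  -- LHS equals the symmetric sum over ℤ
  have hf1 : Summable fun n : ℕ => (-1 : ℂ) ^ (n : ℤ).natAbs * q ^ ((n : ℤ).natAbs ^ 2) := by
    apply Summable.of_norm_bounded (summable_geometric_of_lt_one (norm_nonneg q) hq)
    intro n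
    rw [norm_mul, norm_pow, norm_pow, norm_neg, norm_one, one_pow, one_mul]
    simp only [Int.natAbs_natCast]
    exact pow_le_pow_of_le_one (norm_nonneg q) hq.le (Nat.le_self_pow two_ne_zero _)
  have hf2 : Summable fun n : ℕ =>
      (-1 : ℂ) ^ (-((n : ℤ) + 1)).natAbs * q ^ ((-((n : ℤ) + 1)).natAbs ^ 2) := by
    apply Summable.of_norm_bounded
      ((summable_geometric_of_lt_one (norm_nonneg q) hq).mul_left ‖q‖)
    intro n
    rw [norm_mul, norm_pow, norm_pow, norm_neg, norm_one, one_pow, one_mul]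
    have : (-((n : ℤ) + 1)).natAbs = n + 1 := by omega
    rw [this]
    calc ‖q‖ ^ (n + 1) ^ 2 ≤ ‖q‖ ^ (n + 1) :=
          pow_le_pow_of_le_one (norm_nonneg q) hq.le (Nat.le_self_pow two_ne_zero _)
      _ = ‖q‖ * ‖q‖ ^ n := by rw [pow_succ]; ring
  have hZ : (∑' i : ℤ, (-1 : ℂ) ^ i.natAbs * q ^ (i.natAbs ^ 2))
      = 1 + 2 * ∑' j : ℕ, (-1 : ℂ) ^ (j + 1) * q ^ ((j + 1) ^ 2) := by
    rw [tsum_of_nat_of_neg_add_one (f := fun i : ℤ => (-1 : ℂ) ^ i.natAbs * q ^ (i.natAbs ^ 2)) hf1 hf2]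
    have e1 : ∑' n : ℕ, (-1 : ℂ) ^ (n : ℤ).natAbs * q ^ ((n : ℤ).natAbs ^ 2)
        = 1 + ∑' n : ℕ, (-1 : ℂ) ^ (n + 1) * q ^ ((n + 1) ^ 2) := by
      rw [Summable.tsum_eq_zero_add hf1]
      simp only [Int.natAbs_natCast]
      norm_num
    have e2 : ∑' n : ℕ, (-1 : ℂ) ^ (-((n : ℤ) + 1)).natAbs * q ^ ((-((n : ℤ) + 1)).natAbs ^ 2)
        = ∑' n : ℕ, (-1 : ℂ) ^ (n + 1) * q ^ ((n + 1) ^ 2) := by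
      apply tsum_congr
      intro n
      have : (-((n : ℤ) + 1)).natAbs = n + 1 := by omega
      rw [this]
    rw [e1, e2]
    ring
  rw [← hZ, key_identity q hq0 hq, hPoch1, hPoch2, ← hPo,
    eq_div_iff (show Pm ≠ 0 by rw [hPm]; exact Complex.exp_ne_zero _)]
  linear_combination Po * heq2 - (Po * Pm + 1) * heq1
end

section
/- Gauss' identity: ∑_{j=0}^{∞} (-1)^j q^{j(2j+1)} (1 - q^{2j+1}) = (q²;q²)_∞ / (-q;q²)_∞ for |q| < 1 (equivalently as formal power series). -/
open Finset Filter Topology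

namespace GaussAux

lemma factor_ne_zero {a q : ℂ} (ha : ‖a‖ < 1) (hq : ‖q‖ ≤ 1) (n : ℕ) :
    1 - a * q ^ n ≠ 0 := by
  intro h
  have h1 : a * q ^ n = 1 := by linear_combination -h
  have : ‖a * q ^ n‖ < 1 := by
    calc ‖a * q ^ n‖ = ‖a‖ * ‖q‖ ^ n := by simp [norm_mul, norm_pow]
    _ ≤ ‖a‖ * 1 := by
        refine mul_le_mul_of_nonneg_left ?_ (norm_nonneg a)
        exact pow_le_one₀ (norm_nonneg q) hq
    _ < 1 := by simpa using ha
  rw [h1] at this; simp at this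

lemma summable_log {a q : ℂ} (ha : ‖a‖ < 1) (hq : ‖q‖ < 1) :
    Summable (fun n : ℕ => Complex.log (1 - a * q ^ n)) := by
  apply Summable.of_norm_bounded_eventually_nat (g := fun n => 3 / 2 * (‖a‖ * ‖q‖ ^ n))
  · exact ((summable_geometric_of_lt_one (norm_nonneg q) hq).mul_left _).mul_left _
  · have h0 : Tendsto (fun n : ℕ => ‖a‖ * ‖q‖ ^ n) atTop (𝓝 0) := by
      simpa using (tendsto_pow_atTop_nhds_zero_of_lt_one (norm_nonneg q)
        hq).const_mul ‖a‖
    filter_upwards [h0.eventually_le_const (by norm_num : (0:ℝ) < 1/2)] with n hn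
    have hb : ‖-(a * q ^ n)‖ ≤ 1 / 2 := by
      simpa [norm_mul, norm_pow] using hn
    have := Complex.norm_log_one_add_half_le_self hb
    simp only [norm_neg, norm_mul, norm_pow] at this
    calc ‖Complex.log (1 - a * q ^ n)‖
        = ‖Complex.log (1 + -(a * q ^ n))‖ := by ring_nf
      _ ≤ 3 / 2 * (‖a‖ * ‖q‖ ^ n) := by
          refine le_trans (Complex.norm_log_one_add_half_le_self hb) ?_
          rw [norm_neg, norm_mul, norm_pow]

lemma hasProd_poch {a q : ℂ} (ha : ‖a‖ < 1) (hq : ‖q‖ < 1) :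
    HasProd (fun n : ℕ => 1 - a * q ^ n) (qPochInf a q) := by
  have := (Complex.multipliable_of_summable_log (summable_log ha hq)).hasProd
  exact this

lemma multipliable_poch {a q : ℂ} (ha : ‖a‖ < 1) (hq : ‖q‖ < 1) :
    Multipliable (fun n : ℕ => 1 - a * q ^ n) :=
  (hasProd_poch ha hq).multipliable

lemma qPochInf_ne_zero {a q : ℂ} (ha : ‖a‖ < 1) (hq : ‖q‖ < 1) :
    qPochInf a q ≠ 0 := by
  have := Complex.cexp_tsum_eq_tprod (f := fun n => 1 - a * q ^ n)
    (fun n => factor_ne_zero ha hq.le n)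
    (summable_log ha hq)
  rw [qPochInf, ← this]
  exact Complex.exp_ne_zero _

lemma tendsto_partial_poch {a q : ℂ} (ha : ‖a‖ < 1) (hq : ‖q‖ < 1) :
    Tendsto (fun n => ∏ k ∈ range n, (1 - a * q ^ k)) atTop (𝓝 (qPochInf a q)) :=
  (hasProd_poch ha hq).tendsto_prod_nat

noncomputable def qb (Q : ℂ) : ℕ → ℕ → ℂ
  | _, 0 => 1
  | 0, _+1 => 0
  | m+1, j+1 => Q ^ (j+1) * qb Q m (j+1) + qb Q m j

@[simp] lemma qb_zero (Q : ℂ) (m : ℕ) : qb Q m 0 = 1 := by cases m <;> rfl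

@[simp] lemma qb_zero_succ (Q : ℂ) (j : ℕ) : qb Q 0 (j+1) = 0 := rfl

lemma qb_succ (Q : ℂ) (m j : ℕ) :
    qb Q (m+1) (j+1) = Q ^ (j+1) * qb Q m (j+1) + qb Q m j := rfl

lemma qb_of_lt (Q : ℂ) : ∀ m j, m < j → qb Q m j = 0 := by
  intro m
  induction m with
  | zero => intro j hj; match j, hj with | j+1, _ => rfl
  | succ m ih =>
    intro j hj
    match j, hj with
    | j+1, hj =>
      rw [qb_succ, ih (j+1) (by omega), ih j (by omega)]
      ring

lemma qb_self (Q : ℂ) : ∀ m, qb Q m m = 1 := by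
  intro m
  induction m with
  | zero => rfl
  | succ m ih => rw [qb_succ, ih, qb_of_lt Q m (m+1) (by omega)]; ring

/-- Gauss binomial theorem -/
lemma gauss_binom (Q : ℂ) : ∀ (m : ℕ) (z : ℂ),
    ∏ k ∈ range m, (1 + z * Q ^ k) =
      ∑ j ∈ range (m+1), Q ^ (∑ i ∈ range j, i) * qb Q m j * z ^ j := by
  intro m
  induction m with
  | zero => intro z; simp
  | succ m ih =>
    intro z
    have lhs1 : ∏ k ∈ range (m+1), (1 + z * Q ^ k)
        = (1 + z) * ∏ k ∈ range m, (1 + (z * Q) * Q ^ k) := by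
      rw [Finset.prod_range_succ']
      have h1 : (∏ k ∈ range m, (1 + z * Q ^ (k+1)))
          = ∏ k ∈ range m, (1 + (z * Q) * Q ^ k) :=
        Finset.prod_congr rfl (fun k _ => by rw [pow_succ]; ring)
      rw [h1, pow_zero, mul_one, mul_comm]
    have hE : ∀ j : ℕ, (∑ i ∈ range (j+1), i) = (∑ i ∈ range j, i) + j := by
      intro j; rw [Finset.sum_range_succ]
    set e : ℕ → ℕ := fun j => ∑ i ∈ range j, i with he
    set S1 := ∑ j ∈ range (m+1), Q ^ (e j + (2*j+1)) * qb Q m (j+1) * z ^ (j+1) with hS1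
    set S2 := ∑ j ∈ range (m+1), Q ^ (e j + j) * qb Q m j * z ^ (j+1) with hS2
    set A := ∑ j ∈ range (m+1), Q ^ (e j + j) * qb Q m j * z ^ j with hA'
    have hA : ∑ j ∈ range (m+1), Q ^ (e j) * qb Q m j * (z * Q) ^ j = A := by
      apply Finset.sum_congr rfl
      intro j _
      rw [mul_pow, pow_add]
      ring
    have hRHS : ∑ j ∈ range (m+1+1), Q ^ (e j) * qb Q (m+1) j * z ^ j = S1 + S2 + 1 := by
      rw [Finset.sum_range_succ' (fun j => Q ^ (e j) * qb Q (m+1) j * z ^ j) (m+1)]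
      have h0 : Q ^ (e 0) * qb Q (m+1) 0 * z ^ 0 = 1 := by simp [he]
      rw [h0, hS1, hS2, ← Finset.sum_add_distrib]
      congr 1
      apply Finset.sum_congr rfl
      intro j _
      have hej : e (j+1) = e j + j := hE j
      rw [hej, qb_succ]
      simp only [pow_add]
      ring
    have hA2 : A = 1 + S1 := by
      rw [hA', Finset.sum_range_succ'
        (fun j => Q ^ (e j + j) * qb Q m j * z ^ j) m]
      rw [hS1, Finset.sum_range_succ
        (fun j => Q ^ (e j + (2*j+1)) * qb Q m (j+1) * z ^ (j+1)) m]
      rw [qb_of_lt Q m (m+1) (by omega)]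
      have h0 : Q ^ (e 0 + 0) * qb Q m 0 * z ^ 0 = 1 := by simp [he]
      rw [h0]
      have hcong : ∀ j, j ∈ range m →
          Q ^ (e (j+1) + (j+1)) * qb Q m (j+1) * z ^ (j+1)
            = Q ^ (e j + (2*j+1)) * qb Q m (j+1) * z ^ (j+1) := by
        intro j _
        have hej : e (j+1) = e j + j := hE j
        rw [hej]
        ring_nf
      rw [Finset.sum_congr rfl hcong]
      ring
    have hzA : z * A = S2 := by
      rw [hA', hS2, Finset.mul_sum]
      apply Finset.sum_congr rfl
      intro j _
      ring
    rw [lhs1, ih (z * Q), hA, hRHS]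
    calc (1 + z) * A = A + z * A := by ring
      _ = 1 + S1 + S2 := by rw [hzA, hA2]
      _ = S1 + S2 + 1 := by ring




noncomputable def P (Q : ℂ) (n : ℕ) : ℂ := ∏ k ∈ range n, (1 - Q ^ (k+1))

lemma P_zero (Q : ℂ) : P Q 0 = 1 := rfl

lemma P_succ (Q : ℂ) (n : ℕ) : P Q (n+1) = P Q n * (1 - Q ^ (n+1)) :=
  Finset.prod_range_succ _ n

lemma qb_mul (Q : ℂ) : ∀ m j r, m = j + r → qb Q m j * (P Q j * P Q r) = P Q m := by
  intro m
  induction m with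
  | zero =>
    intro j r h
    obtain ⟨rfl, rfl⟩ : j = 0 ∧ r = 0 := by omega
    simp [P_zero]
  | succ m ih =>
    intro j r h
    match j with
    | 0 =>
      obtain rfl : r = m+1 := by omega
      simp [P_zero]
    | j+1 =>
      rcases r with _ | r
      · -- r = 0, j + 1 = m + 1
        have hj : j = m := by omega
        subst hj
        rw [qb_self, P_zero]
        ring
      · -- r = r'+1
        have hm1 : m = (j+1) + r := by omega
        have hm2 : m = j + (r+1) := by omega
        have IH1 := ih (j+1) r hm1
        have IH2 := ih j (r+1) hm2
        rw [qb_succ, P_succ Q j, P_succ Q r]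
        have hQ : Q ^ (j+1) * Q ^ (r+1) = Q ^ (m+1) := by
          rw [← pow_add]
          congr 1
          omega
        calc (Q ^ (j+1) * qb Q m (j+1) + qb Q m j) * (P Q j * (1 - Q ^ (j+1)) * (P Q r * (1 - Q ^ (r+1))))
            = Q ^ (j+1) * (1 - Q ^ (r+1)) * (qb Q m (j+1) * (P Q (j+1) * P Q r))
              + (1 - Q ^ (j+1)) * (qb Q m j * (P Q j * P Q (r+1))) := by
              rw [P_succ Q j, P_succ Q r]
              ring
          _ = Q ^ (j+1) * (1 - Q ^ (r+1)) * P Q m + (1 - Q ^ (j+1)) * P Q m := by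
              rw [IH1, IH2]
          _ = (1 - Q ^ (j+1) * Q ^ (r+1)) * P Q m := by ring
          _ = P Q (m+1) := by
              rw [hQ, P_succ]
              ring_nf

lemma P_eq (Q : ℂ) (n : ℕ) : P Q n = ∏ k ∈ range n, (1 - Q * Q ^ k) :=
  Finset.prod_congr rfl (fun k _ => by rw [pow_succ'])

lemma tendsto_P {Q : ℂ} (hQ : ‖Q‖ < 1) :
    Tendsto (P Q) atTop (𝓝 (qPochInf Q Q)) :=
  (tendsto_partial_poch hQ hQ).congr fun n => (P_eq Q n).symm

lemma P_ne_zero {Q : ℂ} (hQ : ‖Q‖ < 1) (n : ℕ) : P Q n ≠ 0 := by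
  rw [P_eq]
  exact Finset.prod_ne_zero_iff.mpr fun k _ => factor_ne_zero hQ hQ.le k

lemma qb_closed {Q : ℂ} (hQ : ‖Q‖ < 1) {m j r : ℕ} (h : m = j + r) :
    qb Q m j = P Q m * (P Q j)⁻¹ * (P Q r)⁻¹ := by
  have hh := qb_mul Q m j r h
  have hj := P_ne_zero hQ j
  have hr := P_ne_zero hQ r
  field_simp
  linear_combination hh

lemma qb_bound {Q : ℂ} (hQ : ‖Q‖ < 1) : ∃ B : ℝ, 0 ≤ B ∧ ∀ m j, ‖qb Q m j‖ ≤ B := by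
  obtain ⟨C, hC⟩ := (tendsto_P hQ).norm.bddAbove_range
  simp only [upperBounds, Set.mem_range, Set.mem_setOf_eq] at hC
  have hL : qPochInf Q Q ≠ 0 := qPochInf_ne_zero hQ hQ
  have hLpos : 0 < ‖qPochInf Q Q‖ := norm_pos_iff.mpr hL
  have hev : ∀ᶠ n in atTop, ‖qPochInf Q Q‖/2 < ‖P Q n‖ :=
    (tendsto_P hQ).norm.eventually (eventually_gt_nhds (by linarith))
  obtain ⟨N₀, hN₀⟩ := eventually_atTop.mp hev
  set c : ℝ := min (‖qPochInf Q Q‖/2)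
    ((range (N₀+1)).inf' (by simp) (fun n => ‖P Q n‖)) with hc
  have hc0 : 0 < c := by
    refine lt_min (by linarith) ?_
    exact (Finset.lt_inf'_iff _).mpr fun i _ => norm_pos_iff.mpr (P_ne_zero hQ i)
  have hcle : ∀ n, c ≤ ‖P Q n‖ := by
    intro n
    rcases le_or_gt n N₀ with h | h
    · exact le_trans (min_le_right _ _)
        (Finset.inf'_le _ (by simp only [Finset.mem_range]; omega))
    · exact le_trans (min_le_left _ _) (hN₀ n h.le).le
  refine ⟨C * c⁻¹ * c⁻¹, ?_, ?_⟩
  · have hC0 : 0 ≤ C := le_trans (norm_nonneg _) (hC ⟨0, rfl⟩)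
    positivity
  intro m j
  rcases le_or_gt j m with h | h
  · obtain ⟨r, rfl⟩ : ∃ r, m = j + r := ⟨m - j, by omega⟩
    rw [qb_closed hQ rfl, norm_mul, norm_mul, norm_inv, norm_inv]
    have hPm : ‖P Q (j+r)‖ ≤ C := hC ⟨j+r, rfl⟩
    have h1 : (‖P Q j‖)⁻¹ ≤ c⁻¹ := by
      apply inv_anti₀ hc0 (hcle j)
    have h2 : (‖P Q r‖)⁻¹ ≤ c⁻¹ := inv_anti₀ hc0 (hcle r)
    have hC0 : 0 ≤ C := le_trans (norm_nonneg _) (hC ⟨0, rfl⟩)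
    have step1 : ‖P Q (j+r)‖ * ‖P Q j‖⁻¹ ≤ C * c⁻¹ :=
      mul_le_mul hPm h1 (by positivity) hC0
    exact mul_le_mul step1 h2 (by positivity) (by positivity)
  · rw [qb_of_lt Q m j h]
    simp only [norm_zero]
    have hC0 : 0 ≤ C := le_trans (norm_nonneg _) (hC ⟨0, rfl⟩)
    positivity

lemma qb_lim {Q : ℂ} (hQ : ‖Q‖ < 1) {u v : ℕ → ℕ}
    (huv : ∀ᶠ N in atTop, u N + v N = 2*N)
    (hu : Tendsto u atTop atTop) (hv : Tendsto v atTop atTop) :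
    Tendsto (fun N => qb Q (2*N) (u N)) atTop (𝓝 (qPochInf Q Q)⁻¹) := by
  have hL : qPochInf Q Q ≠ 0 := qPochInf_ne_zero hQ hQ
  have h2 : Tendsto (fun N : ℕ => 2*N) atTop atTop := by
    apply tendsto_atTop_atTop.mpr
    intro b
    exact ⟨b, fun a ha => by omega⟩
  have t1 : Tendsto (fun N => P Q (2*N)) atTop (𝓝 (qPochInf Q Q)) := (tendsto_P hQ).comp h2
  have t2 : Tendsto (fun N => (P Q (u N))⁻¹) atTop (𝓝 (qPochInf Q Q)⁻¹) :=
    ((tendsto_P hQ).comp hu).inv₀ hL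
  have t3 : Tendsto (fun N => (P Q (v N))⁻¹) atTop (𝓝 (qPochInf Q Q)⁻¹) :=
    ((tendsto_P hQ).comp hv).inv₀ hL
  have tall := (t1.mul t2).mul t3
  have heq : qPochInf Q Q * (qPochInf Q Q)⁻¹ * (qPochInf Q Q)⁻¹ = (qPochInf Q Q)⁻¹ := by
    field_simp
  rw [heq] at tall
  refine tall.congr' ?_
  filter_upwards [huv] with N hN
  exact (qb_closed hQ (by omega)).symm

lemma prod_zpow {q : ℂ} (hq0 : q ≠ 0) (f : ℕ → ℤ) (n : ℕ) :
    ∏ j ∈ range n, q ^ (f j) = q ^ (∑ j ∈ range n, f j) := by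
  induction n with
  | zero => simp
  | succ n ih => rw [Finset.prod_range_succ, Finset.sum_range_succ, ih, zpow_add₀ hq0]

lemma sum_4j1 (N : ℕ) : ∑ j ∈ range N, -(4*(j:ℤ)+1) = -(2*(N:ℤ)^2 - N) := by
  induction N with
  | zero => simp
  | succ N ih => rw [Finset.sum_range_succ, ih]; push_cast; ring

lemma sum_id4 (j : ℕ) : ((4 * ∑ i ∈ range j, i : ℕ) : ℤ) = 2*(j:ℤ)^2 - 2*(j:ℤ) := by
  induction j with
  | zero => simp
  | succ j ih =>
    rw [Finset.sum_range_succ]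
    push_cast at ih ⊢
    nlinarith [ih]

lemma odd_merge (q : ℂ) : ∀ N : ℕ,
    (∏ j ∈ range N, (1 - q^(4*j+1))) * (∏ j ∈ range N, (1 - q^(4*j+3)))
      = ∏ k ∈ range (2*N), (1 - q^(2*k+1)) := by
  intro N
  induction N with
  | zero => simp
  | succ N ih =>
    have h2 : 2*(N+1) = (2*N)+1+1 := by ring
    rw [Finset.prod_range_succ, Finset.prod_range_succ, h2, Finset.prod_range_succ,
      Finset.prod_range_succ, ← ih]
    have e1 : 2*(2*N)+1 = 4*N+1 := by ring
    have e2 : 2*(2*N+1)+1 = 4*N+3 := by ring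
    rw [e1, e2]
    ring

lemma finite_gauss {q : ℂ} (hq0 : q ≠ 0) (N : ℕ) :
    ∑ j ∈ range (2*N+1), (-1:ℂ)^(N+j) * qb (q^4) (2*N) j
        * q ^ (2*((j:ℤ) - N)^2 + ((j:ℤ) - N))
      = ∏ k ∈ range (2*N), (1 - q ^ (2*k+1)) := by
  have hGB := gauss_binom (q^4) (2*N) (-(q ^ ((3:ℤ) - 4*N)))
  have hfac : ∀ k : ℕ, 1 + (-(q ^ ((3:ℤ) - 4*N))) * (q^4)^k
      = 1 - q ^ (4*(k:ℤ)+3-4*(N:ℤ)) := by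
    intro k
    have h1 : ((q^4)^k : ℂ) = q ^ (((4*k : ℕ)) : ℤ) := by
      rw [← pow_mul, zpow_natCast]
    rw [h1]
    have h3 := zpow_add₀ hq0 ((3:ℤ) - 4*(N:ℤ)) (((4*k : ℕ)) : ℤ)
    have h2 : (3:ℤ) - 4*(N:ℤ) + ((4*k : ℕ) : ℤ) = 4*(k:ℤ)+3-4*(N:ℤ) := by
      push_cast; ring
    rw [h2] at h3
    linear_combination h3
  have hsplit : ∏ k ∈ range (2*N), (1 - q ^ (4*(k:ℤ)+3-4*(N:ℤ)))
      = (∏ k ∈ range N, (1 - q ^ (4*(k:ℤ)+3-4*(N:ℤ)))) *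
          ∏ k ∈ range N, (1 - q ^ (4*(k:ℤ)+3)) := by
    have h2N : 2*N = N + N := by ring
    rw [h2N, Finset.prod_range_add]
    congr 1
    apply Finset.prod_congr rfl
    intro k _
    congr 1
    push_cast
    ring
  have hrefl : ∏ k ∈ range N, (1 - q ^ (4*(k:ℤ)+3-4*(N:ℤ)))
      = ∏ j ∈ range N, (1 - q ^ (-(4*(j:ℤ)+1))) := by
    rw [← Finset.prod_range_reflect (fun j : ℕ => 1 - q ^ (-(4*(j:ℤ)+1))) N]
    apply Finset.prod_congr rfl
    intro k hk
    simp only [Finset.mem_range] at hk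
    show 1 - q ^ (4*(k:ℤ)+3-4*(N:ℤ)) = 1 - q ^ (-(4*(((N-1-k : ℕ)):ℤ)+1))
    congr 2
    omega
  have hneg : ∀ j : ℕ, (1 - q ^ (-(4*(j:ℤ)+1)))
      = (-1:ℂ) * q ^ (-(4*(j:ℤ)+1)) * (1 - q ^ (4*(j:ℤ)+1)) := by
    intro j
    have h1 : q ^ (-(4*(j:ℤ)+1)) * q ^ ((4*(j:ℤ)+1)) = 1 := by
      rw [← zpow_add₀ hq0, show -(4*(j:ℤ)+1) + (4*(j:ℤ)+1) = 0 by ring, zpow_zero]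
    linear_combination -h1
  have hprodneg : ∏ j ∈ range N, (1 - q ^ (-(4*(j:ℤ)+1)))
      = (-1:ℂ)^N * q ^ (-(2*(N:ℤ)^2 - N)) * ∏ j ∈ range N, (1 - q ^ (4*(j:ℤ)+1)) := by
    rw [Finset.prod_congr rfl (fun j _ => hneg j), Finset.prod_mul_distrib,
      Finset.prod_mul_distrib, Finset.prod_const, Finset.card_range, prod_zpow hq0]
    rw [sum_4j1 N]
  have hz1 : ∀ j : ℕ, q ^ (4*(j:ℤ)+1) = q^(4*j+1) := by
    intro j
    rw [show 4*(j:ℤ)+1 = ((4*j+1 : ℕ) : ℤ) by push_cast; ring, zpow_natCast]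
  have hz3 : ∀ j : ℕ, q ^ (4*(j:ℤ)+3) = q^(4*j+3) := by
    intro j
    rw [show 4*(j:ℤ)+3 = ((4*j+3 : ℕ) : ℤ) by push_cast; ring, zpow_natCast]
  have hterm : ∀ j : ℕ, (-1:ℂ)^N * q ^ ((2*(N:ℤ)^2 - N)) *
      ((q^4) ^ (∑ i ∈ range j, i) * qb (q^4) (2*N) j * (-(q ^ ((3:ℤ) - 4*N)))^j)
      = (-1:ℂ)^(N+j) * qb (q^4) (2*N) j * q ^ (2*((j:ℤ) - N)^2 + ((j:ℤ) - N)) := by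
    intro j
    have hp1 : ((q^4) ^ (∑ i ∈ range j, i) : ℂ) = q ^ (((4 * ∑ i ∈ range j, i : ℕ)) : ℤ) := by
      rw [← pow_mul, zpow_natCast]
    have hp2 : (-(q ^ ((3:ℤ) - 4*N)))^j = (-1:ℂ)^j * q ^ (((3:ℤ) - 4*(N:ℤ)) * j) := by
      rw [neg_pow, ← zpow_natCast (q ^ ((3:ℤ) - 4*(N:ℤ))) j, ← zpow_mul]
    rw [hp1, hp2]
    calc (-1:ℂ)^N * q ^ ((2*(N:ℤ)^2 - N)) *
        (q ^ (((4 * ∑ i ∈ range j, i : ℕ)) : ℤ) * qb (q^4) (2*N) j *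
          ((-1:ℂ)^j * q ^ (((3:ℤ) - 4*(N:ℤ)) * j)))
        = ((-1:ℂ)^N * (-1:ℂ)^j) * qb (q^4) (2*N) j *
            (q ^ ((2*(N:ℤ)^2 - N)) * q ^ (((4 * ∑ i ∈ range j, i : ℕ)) : ℤ) *
              q ^ (((3:ℤ) - 4*(N:ℤ)) * j)) := by ring
      _ = (-1:ℂ)^(N+j) * qb (q^4) (2*N) j * q ^ (2*((j:ℤ) - N)^2 + ((j:ℤ) - N)) := by
          rw [← pow_add, ← zpow_add₀ hq0, ← zpow_add₀ hq0, sum_id4]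
          congr 2
          ring
  have hEven : (-1:ℂ)^N * (-1:ℂ)^N = 1 := by
    rw [← pow_add]
    exact Even.neg_one_pow ⟨N, rfl⟩
  have hqq : q ^ ((2*(N:ℤ)^2 - N)) * q ^ (-(2*(N:ℤ)^2 - N)) = 1 := by
    rw [← zpow_add₀ hq0]; simp
  calc ∑ j ∈ range (2*N+1), (-1:ℂ)^(N+j) * qb (q^4) (2*N) j
        * q ^ (2*((j:ℤ) - N)^2 + ((j:ℤ) - N))
      = ∑ j ∈ range (2*N+1), (-1:ℂ)^N * q ^ ((2*(N:ℤ)^2 - N)) *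
          ((q^4) ^ (∑ i ∈ range j, i) * qb (q^4) (2*N) j * (-(q ^ ((3:ℤ) - 4*N)))^j) := by
        exact Finset.sum_congr rfl (fun j _ => (hterm j).symm)
    _ = (-1:ℂ)^N * q ^ ((2*(N:ℤ)^2 - N)) *
          ∑ j ∈ range (2*N+1), (q^4) ^ (∑ i ∈ range j, i) * qb (q^4) (2*N) j *
            (-(q ^ ((3:ℤ) - 4*N)))^j := by
        rw [Finset.mul_sum]
    _ = (-1:ℂ)^N * q ^ ((2*(N:ℤ)^2 - N)) *
          ∏ k ∈ range (2*N), (1 + (-(q ^ ((3:ℤ) - 4*N))) * (q^4)^k) := by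
        rw [hGB]
    _ = (-1:ℂ)^N * q ^ ((2*(N:ℤ)^2 - N)) *
          ((-1:ℂ)^N * q ^ (-(2*(N:ℤ)^2 - N)) *
            ((∏ j ∈ range N, (1 - q^(4*j+1))) * (∏ j ∈ range N, (1 - q^(4*j+3))))) := by
        rw [Finset.prod_congr rfl (fun k _ => hfac k), hsplit, hrefl, hprodneg]
        rw [Finset.prod_congr rfl (fun j _ => by rw [hz1 j] :
          ∀ j ∈ range N, (1 - q ^ (4*(j:ℤ)+1)) = 1 - q^(4*j+1))]
        rw [Finset.prod_congr rfl (fun j _ => by rw [hz3 j] :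
          ∀ j ∈ range N, (1 - q ^ (4*(j:ℤ)+3)) = 1 - q^(4*j+3))]
        ring
    _ = ∏ k ∈ range (2*N), (1 - q ^ (2*k+1)) := by
        rw [← odd_merge]
        calc (-1:ℂ)^N * q ^ ((2*(N:ℤ)^2 - N)) *
            ((-1:ℂ)^N * q ^ (-(2*(N:ℤ)^2 - N)) *
              ((∏ j ∈ range N, (1 - q^(4*j+1))) * (∏ j ∈ range N, (1 - q^(4*j+3)))))
            = ((-1:ℂ)^N * (-1:ℂ)^N) * (q ^ ((2*(N:ℤ)^2 - N)) * q ^ (-(2*(N:ℤ)^2 - N))) *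
              ((∏ j ∈ range N, (1 - q^(4*j+1))) * (∏ j ∈ range N, (1 - q^(4*j+3)))) := by
              ring
          _ = _ := by rw [hEven, hqq]; ring

lemma tsum_a {q : ℂ} (hq : ‖q‖ < 1) (hq0 : q ≠ 0) :
    ∑' i : ℕ, ((-1:ℂ)^i * q^(2*i^2+i) - (-1:ℂ)^i * q^(2*i^2+3*i+1))
      = qPochInf (q^4) (q^4) * qPochInf q (q^2) := by
  have ht0 : (0:ℝ) ≤ ‖q‖ := norm_nonneg q
  have hQ : ‖q^4‖ < 1 := by
    rw [norm_pow]; exact pow_lt_one₀ ht0 hq (by omega)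
  have hq2 : ‖q^2‖ < 1 := by
    rw [norm_pow]; exact pow_lt_one₀ ht0 hq (by omega)
  set L := qPochInf (q^4) (q^4) with hLdef
  have hL : L ≠ 0 := qPochInf_ne_zero hQ hQ
  obtain ⟨B, hB0, hB⟩ := qb_bound hQ
  set g : ℕ → ℕ → ℂ := fun N i =>
    (if i ≤ N then (-1:ℂ)^i * qb (q^4) (2*N) (N+i) * q^(2*i^2+i) else 0)
      - (if i+1 ≤ N then (-1:ℂ)^i * qb (q^4) (2*N) (N-1-i) * q^(2*i^2+3*i+1) else 0)
    with hgdef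
  -- claim 1 : tsum of g N equals the partial products
  have claim1 : ∀ N : ℕ, ∑' i, g N i = ∏ k ∈ range (2*N), (1 - q^(2*k+1)) := by
    intro N
    have hsupp : ∀ i ∉ range (N+1), g N i = 0 := by
      intro i hi
      simp only [Finset.mem_range, not_lt] at hi
      simp only [hgdef]
      rw [if_neg (by omega), if_neg (by omega), sub_zero]
    rw [tsum_eq_sum hsupp]
    have hXY : ∑ i ∈ range (N+1), g N i
        = (∑ i ∈ range (N+1), (-1:ℂ)^i * qb (q^4) (2*N) (N+i) * q^(2*i^2+i))
          - ∑ i ∈ range N, (-1:ℂ)^i * qb (q^4) (2*N) (N-1-i) * q^(2*i^2+3*i+1) := by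
      rw [Finset.sum_sub_distrib]
      congr 1
      · apply Finset.sum_congr rfl
        intro i hi
        simp only [Finset.mem_range] at hi
        rw [if_pos (by omega)]
      · rw [Finset.sum_range_succ, if_neg (by omega), add_zero]
        apply Finset.sum_congr rfl
        intro i hi
        simp only [Finset.mem_range] at hi
        rw [if_pos (by omega)]
    rw [hXY]
    have hFG := finite_gauss hq0 N
    set h : ℕ → ℂ := fun j => (-1:ℂ)^(N+j) * qb (q^4) (2*N) j
        * q ^ (2*((j:ℤ) - N)^2 + ((j:ℤ) - N)) with hhdef
    have hsum_split : ∑ j ∈ range (2*N+1), h j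
        = (∑ j ∈ range N, h j) + ∑ i ∈ range (N+1), h (N+i) := by
      rw [show 2*N+1 = N + (N+1) by ring, Finset.sum_range_add]
    have he1 : ∀ i : ℕ, h (N+i) = (-1:ℂ)^i * qb (q^4) (2*N) (N+i) * q^(2*i^2+i) := by
      intro i
      simp only [hhdef]
      have hs : (-1:ℂ)^(N+(N+i)) = (-1:ℂ)^i := by
        rw [show N+(N+i) = 2*N + i by ring, pow_add, pow_mul]
        norm_num
      have hexp : 2*(((N+i : ℕ):ℤ) - N)^2 + (((N+i : ℕ):ℤ) - N)
          = ((2*i^2+i : ℕ) : ℤ) := by push_cast; ring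
      rw [hs, hexp, zpow_natCast]
    have he2 : ∀ i : ℕ, i < N → h (N-1-i)
        = -((-1:ℂ)^i * qb (q^4) (2*N) (N-1-i) * q^(2*i^2+3*i+1)) := by
      intro i hi
      simp only [hhdef]
      obtain ⟨k, hk⟩ : ∃ k, N = i+1+k := ⟨N-1-i, by omega⟩
      have hs : (-1:ℂ)^(N+(N-1-i)) = -(-1:ℂ)^i := by
        rw [show N+(N-1-i) = i+1+2*k by omega, pow_add, pow_add, pow_mul]
        norm_num
      have hc : (((N-1-i : ℕ)):ℤ) = (N:ℤ)-1-i := by omega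
      have hexp : 2*((((N-1-i : ℕ)):ℤ) - N)^2 + ((((N-1-i : ℕ)):ℤ) - N)
          = ((2*i^2+3*i+1 : ℕ) : ℤ) := by
        rw [hc]; push_cast; ring
      rw [hs, hexp, zpow_natCast]
      ring
    have hrefl : ∑ j ∈ range N, h j
        = ∑ i ∈ range N, h (N-1-i) := (Finset.sum_range_reflect h N).symm
    rw [hsum_split, hrefl] at hFG
    rw [Finset.sum_congr rfl (fun i hi => he2 i (Finset.mem_range.mp hi)),
      Finset.sum_congr rfl (fun i (_ : i ∈ range (N+1)) => he1 i)] at hFG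
    rw [Finset.sum_neg_distrib] at hFG
    rw [← hFG]
    ring
  -- claim 2 : dominated convergence
  set gl : ℕ → ℂ := fun i =>
    L⁻¹ * ((-1:ℂ)^i * q^(2*i^2+i)) - L⁻¹ * ((-1:ℂ)^i * q^(2*i^2+3*i+1)) with hgl
  have claim2 : Tendsto (fun N => ∑' i, g N i) atTop (𝓝 (∑' i, gl i)) := by
    apply tendsto_tsum_of_dominated_convergence
      (bound := fun i : ℕ => 2*B*‖q‖^i)
    · exact ((summable_geometric_of_lt_one ht0 hq).mul_left _)
    · intro i
      have hu1 : Tendsto (fun N : ℕ => N+i) atTop atTop := by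
        apply tendsto_atTop_atTop.mpr
        intro b; exact ⟨b, fun a ha => by omega⟩
      have hv1 : Tendsto (fun N : ℕ => N-i) atTop atTop := by
        apply tendsto_atTop_atTop.mpr
        intro b; exact ⟨b+i, fun a ha => by omega⟩
      have hu2 : Tendsto (fun N : ℕ => N-1-i) atTop atTop := by
        apply tendsto_atTop_atTop.mpr
        intro b; exact ⟨b+1+i, fun a ha => by omega⟩
      have hv2 : Tendsto (fun N : ℕ => N+1+i) atTop atTop := by
        apply tendsto_atTop_atTop.mpr
        intro b; exact ⟨b, fun a ha => by omega⟩
      have t1 : Tendsto (fun N => qb (q^4) (2*N) (N+i)) atTop (𝓝 L⁻¹) :=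
        qb_lim hQ (u := fun N => N+i) (v := fun N => N-i)
          (eventually_atTop.mpr ⟨i, fun N hN => by show N+i+(N-i) = 2*N; omega⟩) hu1 hv1
      have t2 : Tendsto (fun N => qb (q^4) (2*N) (N-1-i)) atTop (𝓝 L⁻¹) :=
        qb_lim hQ (u := fun N => N-1-i) (v := fun N => N+1+i)
          (eventually_atTop.mpr ⟨i+1, fun N hN => by show N-1-i+(N+1+i) = 2*N; omega⟩) hu2 hv2
      have base := ((t1.const_mul ((-1:ℂ)^i)).mul_const (q^(2*i^2+i))).sub
        ((t2.const_mul ((-1:ℂ)^i)).mul_const (q^(2*i^2+3*i+1)))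
      have hpt : gl i = (-1:ℂ)^i * L⁻¹ * q^(2*i^2+i)
          - (-1:ℂ)^i * L⁻¹ * q^(2*i^2+3*i+1) := by
        simp only [hgl]; ring
      rw [hpt]
      refine base.congr' ?_
      filter_upwards [eventually_atTop.mpr ⟨i+1, fun N (hN : N ≥ i+1) => hN⟩] with N hN
      simp only [hgdef]
      rw [if_pos (by omega : i ≤ N), if_pos (by omega : i+1 ≤ N)]
    · apply Eventually.of_forall
      intro N i
      have hle : ∀ e : ℕ, i ≤ e → ‖q‖^e ≤ ‖q‖^i :=
        fun e he => pow_le_pow_of_le_one ht0 hq.le he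
      have h1 : ‖(if i ≤ N then (-1:ℂ)^i * qb (q^4) (2*N) (N+i) * q^(2*i^2+i) else 0)‖
          ≤ B*‖q‖^i := by
        split_ifs with h
        · rw [norm_mul, norm_mul, norm_pow, norm_neg, norm_one, one_pow, one_mul, norm_pow]
          exact mul_le_mul (hB _ _) (hle _ (by nlinarith)) (by positivity) hB0
        · rw [norm_zero]; positivity
      have h2 : ‖(if i+1 ≤ N then (-1:ℂ)^i * qb (q^4) (2*N) (N-1-i) * q^(2*i^2+3*i+1) else 0)‖
          ≤ B*‖q‖^i := by
        split_ifs with h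
        · rw [norm_mul, norm_mul, norm_pow, norm_neg, norm_one, one_pow, one_mul, norm_pow]
          exact mul_le_mul (hB _ _) (hle _ (by nlinarith)) (by positivity) hB0
        · rw [norm_zero]; positivity
      have htri : ‖g N i‖ ≤
          ‖(if i ≤ N then (-1:ℂ)^i * qb (q^4) (2*N) (N+i) * q^(2*i^2+i) else 0)‖
          + ‖(if i+1 ≤ N then (-1:ℂ)^i * qb (q^4) (2*N) (N-1-i) * q^(2*i^2+3*i+1) else 0)‖ :=
        norm_sub_le _ _
      linarith
  -- claim 3 : partial products tend to qPochInf q (q^2)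
  have claim3 : Tendsto (fun N => ∑' i, g N i) atTop (𝓝 (qPochInf q (q^2))) := by
    have h2N : Tendsto (fun N : ℕ => 2*N) atTop atTop := by
      apply tendsto_atTop_atTop.mpr
      intro b; exact ⟨b, fun a ha => by omega⟩
    have hcomp := (tendsto_partial_poch hq hq2).comp h2N
    refine hcomp.congr fun N => ?_
    rw [claim1 N]
    apply Finset.prod_congr rfl
    intro k _
    congr 1
    rw [show 2*k+1 = 1 + 2*k by ring, pow_add, pow_mul, pow_one]
  have hkey : ∑' i, gl i = qPochInf q (q^2) := tendsto_nhds_unique claim2 claim3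
  have hfac : ∀ i : ℕ, gl i
      = L⁻¹ * ((-1:ℂ)^i * q^(2*i^2+i) - (-1:ℂ)^i * q^(2*i^2+3*i+1)) := by
    intro i; simp only [hgl]; ring
  rw [funext hfac, tsum_mul_left, inv_mul_eq_iff_eq_mul₀ hL] at hkey
  exact hkey

lemma poch_prod {q : ℂ} (hq : ‖q‖ < 1) :
    qPochInf (q^4) (q^4) * qPochInf q (q^2) * qPochInf (-q) (q^2)
      = qPochInf (q^2) (q^2) := by
  have ht0 : (0:ℝ) ≤ ‖q‖ := norm_nonneg q
  have hQ4 : ‖q^4‖ < 1 := by rw [norm_pow]; exact pow_lt_one₀ ht0 hq (by omega)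
  have hQ2 : ‖q^2‖ < 1 := by rw [norm_pow]; exact pow_lt_one₀ ht0 hq (by omega)
  have hnq : ‖-q‖ < 1 := by rwa [norm_neg]
  have step1 : qPochInf q (q^2) * qPochInf (-q) (q^2) = qPochInf (q^2) (q^4) := by
    rw [qPochInf, qPochInf, qPochInf,
      ← Multipliable.tprod_mul (multipliable_poch hq hQ2) (multipliable_poch hnq hQ2)]
    apply tprod_congr
    intro n
    have h1 : ((q^2)^n : ℂ) = q^(2*n) := (pow_mul q 2 n).symm
    have h2 : ((q^4)^n : ℂ) = q^(4*n) := (pow_mul q 4 n).symm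
    rw [h1, h2, show 4*n = (2*n)+(2*n) by ring, pow_add]
    ring
  set f : ℕ → ℂ := fun n => 1 - q^2 * (q^2)^n with hf
  have he : (fun k => f (2*k)) = fun k => 1 - q^2 * (q^4)^k := by
    funext k
    simp only [hf]
    congr 1
    rw [← pow_mul, ← pow_mul, ← pow_add, ← pow_add]
    congr 1
    ring
  have ho : (fun k => f (2*k+1)) = fun k => 1 - q^4 * (q^4)^k := by
    funext k
    simp only [hf]
    congr 1
    rw [← pow_mul, ← pow_mul, ← pow_add, ← pow_add]
    congr 1
    ring
  have hm_e : Multipliable (fun k => f (2*k)) := he ▸ multipliable_poch hQ2 hQ4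
  have hm_o : Multipliable (fun k => f (2*k+1)) := ho ▸ multipliable_poch hQ4 hQ4
  have heo := tprod_even_mul_odd hm_e hm_o
  have h1 : (∏' k, f (2*k)) = qPochInf (q^2) (q^4) := by rw [he]; rfl
  have h2 : (∏' k, f (2*k+1)) = qPochInf (q^4) (q^4) := by rw [ho]; rfl
  calc qPochInf (q^4) (q^4) * qPochInf q (q^2) * qPochInf (-q) (q^2)
      = qPochInf (q^4) (q^4) * qPochInf (q^2) (q^4) := by rw [mul_assoc, step1]
    _ = (∏' k, f (2*k)) * (∏' k, f (2*k+1)) := by rw [h1, h2]; ring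
    _ = ∏' k, f k := heo
    _ = qPochInf (q^2) (q^2) := rfl

end GaussAux

theorem gauss_triangular_identity (q : ℂ) (hq : ‖q‖ < 1) :
    (∑' j : ℕ, (-1 : ℂ) ^ j * q ^ (j * (2 * j + 1)) * (1 - q ^ (2 * j + 1))) =
    qPochInf (q ^ 2) (q ^ 2) / qPochInf (-q) (q ^ 2) := by
  by_cases hq0 : q = 0
  · subst hq0
    have h1 : qPochInf ((0:ℂ)^2) ((0:ℂ)^2) = 1 := by
      rw [qPochInf]
      have : ∀ n : ℕ, (1 - ((0:ℂ)^2) * ((0:ℂ)^2)^n) = 1 := by intro n; norm_num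
      rw [funext this]
      exact tprod_one
    have h2 : qPochInf (-(0:ℂ)) ((0:ℂ)^2) = 1 := by
      rw [qPochInf]
      have : ∀ n : ℕ, (1 - (-(0:ℂ)) * ((0:ℂ)^2)^n) = 1 := by intro n; norm_num
      rw [funext this]
      exact tprod_one
    rw [h1, h2]
    rw [tsum_eq_single 0 ?_]
    · norm_num
    · intro j hj
      have : (0:ℂ) ^ (j * (2*j+1)) = 0 := by
        apply zero_pow
        rcases Nat.exists_eq_succ_of_ne_zero hj with ⟨k, rfl⟩
        positivity
      rw [this]
      ring
  · have ht0 : (0:ℝ) ≤ ‖q‖ := norm_nonneg q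
    have hQ2 : ‖q^2‖ < 1 := by rw [norm_pow]; exact pow_lt_one₀ ht0 hq (by omega)
    have hnq : ‖-q‖ < 1 := by rwa [norm_neg]
    have hterm : ∀ j : ℕ, (-1:ℂ)^j * q^(j*(2*j+1)) * (1 - q^(2*j+1))
        = (-1:ℂ)^j * q^(2*j^2+j) - (-1:ℂ)^j * q^(2*j^2+3*j+1) := by
      intro j
      rw [show j*(2*j+1) = 2*j^2+j by ring,
        show 2*j^2+3*j+1 = (2*j^2+j)+(2*j+1) by ring, pow_add]
      ring
    rw [tsum_congr hterm, GaussAux.tsum_a hq hq0,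
      eq_div_iff (GaussAux.qPochInf_ne_zero hnq hQ2)]
    linear_combination GaussAux.poch_prod hq
end
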